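/- arXiv:2105.11771 — 7 statements merged into one kernel-verified Lean document; each statement's English description precedes it below -/
import Mathlib

section
/- The double integral over [0,π/2]² of (log(cos(x/2)) − log(cos(z/2)))/(cos x − cos z) dx dz equals π·G − (7/4)·ζ(3), where G is Catalan's constant. -/
open Real

section CatalanAuxiliary
open Real MeasureTheory Filter intervalIntegral Topology Set

noncomputable section
namespace MyCat

lemma cos_odd_half (k : ℕ) : Real.cos ((2*k+1)*(π/2)) = 0 := by
  have : (2*(k:ℝ)+1)*(π/2) = k*π + π/2 := by ring
  rw [this, Real.cos_add, Real.cos_pi_div_two, Real.sin_pi_div_two, Real.sin_nat_mul_pi]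
  ring

lemma sin_odd_half (k : ℕ) : Real.sin ((2*k+1)*(π/2)) = (-1)^k := by
  have : (2*(k:ℝ)+1)*(π/2) = k*π + π/2 := by ring
  rw [this, Real.sin_add, Real.cos_pi_div_two, Real.sin_pi_div_two, Real.sin_nat_mul_pi]
  have h2 := Real.cos_int_mul_pi_sub (0:ℝ) (k:ℤ)
  simp only [sub_zero, Real.cos_zero, mul_one] at h2
  rw [zpow_natCast] at h2
  push_cast at h2
  rw [h2]
  ring

lemma psi_deriv (a : ℝ) (ha : a ≠ 0) (t : ℝ) :
    HasDerivAt (fun t => -(t^2) * Real.cos (a*t) / a + 2*t*Real.sin (a*t)/a^2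
      + 2*Real.cos (a*t)/a^3) (t^2 * Real.sin (a*t)) t := by
  have h1 : HasDerivAt (fun t : ℝ => a*t) a t := by
    simpa using (hasDerivAt_id t).const_mul a
  have hc : HasDerivAt (fun t => Real.cos (a*t)) (-Real.sin (a*t) * a) t :=
    (Real.hasDerivAt_cos (a*t)).comp t h1
  have hs : HasDerivAt (fun t => Real.sin (a*t)) (Real.cos (a*t) * a) t :=
    (Real.hasDerivAt_sin (a*t)).comp t h1
  have ht2 : HasDerivAt (fun t : ℝ => -(t^2)) (-(2*t)) t := by
    have := (hasDerivAt_pow 2 t).neg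
    simp at this
    exact this
  have h2t : HasDerivAt (fun t : ℝ => 2*t) 2 t := by
    simpa using (hasDerivAt_id t).const_mul 2
  have H := (((ht2.mul hc).div_const a).add ((h2t.mul hs).div_const (a^2))).add
    ((hc.const_mul 2).div_const (a^3))
  refine H.congr_deriv ?_
  field_simp
  ring

lemma integral_sq_sin (k : ℕ) :
    ∫ t in (0:ℝ)..(π/2), t^2 * Real.sin ((2*k+1)*t)
      = π*(-1)^k/(2*k+1)^2 - 2/(2*k+1)^3 := by
  have ha : ((2*k+1:ℝ)) ≠ 0 := by positivity
  have h := intervalIntegral.integral_eq_sub_of_hasDerivAt (a := (0:ℝ)) (b := π/2)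
    (f := fun t => -(t^2) * Real.cos ((2*k+1)*t) / (2*k+1) + 2*t*Real.sin ((2*k+1)*t)/(2*k+1)^2
      + 2*Real.cos ((2*k+1)*t)/(2*k+1)^3)
    (f' := fun t => t^2 * Real.sin ((2*k+1)*t))
    (fun t _ => psi_deriv (2*k+1) ha t) ?_
  · rw [h]
    simp only [cos_odd_half, sin_odd_half]
    simp [Real.cos_zero, Real.sin_zero]
    field_simp
  · apply Continuous.intervalIntegrable
    continuity

lemma key_sum (n : ℕ) (t : ℝ) :
    1 - Real.cos (2*n*t) = ∑ k ∈ Finset.range n, 2*Real.sin t*Real.sin ((2*k+1)*t) := by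
  induction n with
  | zero => simp
  | succ n ih =>
    rw [Finset.sum_range_succ, ← ih]
    have h := Real.cos_sub_cos (2*n*t) (2*(n+1)*t)
    have e1 : (2*(n:ℝ)*t + 2*(n+1)*t)/2 = (2*n+1)*t := by ring
    have e2 : (2*(n:ℝ)*t - 2*(n+1)*t)/2 = -t := by ring
    rw [e1, e2, Real.sin_neg] at h
    push_cast
    nlinarith [h]

lemma pointwise_eq (n : ℕ) {t : ℝ} (ht : t ∈ Set.Icc (0:ℝ) (π/2)) :
    t^2/Real.sin t = (∑ k ∈ Finset.range n, 2*(t^2*Real.sin ((2*k+1)*t)))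
      + t^2*Real.cos (2*n*t)/Real.sin t := by
  rcases eq_or_lt_of_le ht.1 with h0 | h0
  · rw [← h0]; simp
  · have hπ : t < π := lt_of_le_of_lt ht.2 (by linarith [Real.pi_pos])
    have hs : 0 < Real.sin t := Real.sin_pos_of_pos_of_lt_pi h0 hπ
    have key := key_sum n t
    have key' : Real.sin t * (∑ k ∈ Finset.range n, 2*(t^2*Real.sin ((2*k+1)*t)))
        = t^2 * (1 - Real.cos (2*n*t)) := by
      rw [key, Finset.mul_sum, Finset.mul_sum]
      apply Finset.sum_congr rfl
      intro k _
      ring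
    have h3 : (∑ k ∈ Finset.range n, 2*(t^2*Real.sin ((2*k+1)*t)))
        = (t^2 - t^2*Real.cos (2*n*t))/Real.sin t := by
      rw [eq_div_iff hs.ne']
      linear_combination key'
    rw [h3, ← add_div]
    congr 1
    ring

lemma bound_aux {t : ℝ} (h0 : 0 < t) (h2 : t ≤ π/2) (w : ℝ) :
    |t^2*Real.cos (w*t)/Real.sin t| ≤ 4 := by
  have hπ : t < π := lt_of_le_of_lt h2 (by linarith [Real.pi_pos])
  have hs : 0 < Real.sin t := Real.sin_pos_of_pos_of_lt_pi h0 hπ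
  have hj : 2/π * t ≤ Real.sin t := Real.mul_le_sin h0.le h2
  have hpi := Real.pi_pos
  calc |t^2*Real.cos (w*t)/Real.sin t| = t^2*|Real.cos (w*t)|/Real.sin t := by
        rw [abs_div, abs_mul, abs_of_pos hs, abs_of_nonneg (sq_nonneg t)]
    _ ≤ t^2*1/Real.sin t := by gcongr; exact Real.abs_cos_le_one _
    _ = t^2/Real.sin t := by ring
    _ ≤ t^2/(2/π*t) := div_le_div_of_nonneg_left (by positivity) (by positivity) hj
    _ = π*t/2 := by field_simp
    _ ≤ 4 := by nlinarith [Real.pi_le_four]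

lemma integrable_aux (w : ℝ) :
    IntervalIntegrable (fun t => t^2*Real.cos (w*t)/Real.sin t) volume 0 (π/2) := by
  have hpi := Real.pi_pos
  rw [intervalIntegrable_iff_integrableOn_Ioc_of_le (by positivity)]
  apply Measure.integrableOn_of_bounded (M := 4) (by simp)
  · apply Measurable.aestronglyMeasurable
    apply Measurable.div
    · exact (measurable_id.pow_const 2).mul (Real.measurable_cos.comp (measurable_id.const_mul w))
    · exact Real.measurable_sin
  · filter_upwards [ae_restrict_mem measurableSet_Ioc] with t ht
    rw [Real.norm_eq_abs]
    exact bound_aux ht.1 ht.2 w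

lemma integrable_g :
    IntervalIntegrable (fun t => t^2/Real.sin t) volume 0 (π/2) := by
  have := integrable_aux 0
  simpa using this

lemma rem_tendsto :
    Tendsto (fun n : ℕ => ∫ t in (0:ℝ)..(π/2), t^2*Real.cos (2*n*t)/Real.sin t)
      atTop (𝓝 0) := by
  have hpi := Real.pi_pos
  set G : ℝ → ℂ := Set.indicator (Set.Ioc 0 (π/2)) (fun t => ((t^2/Real.sin t : ℝ) : ℂ)) with hG
  have hGint : Integrable G := by
    rw [hG, integrable_indicator_iff measurableSet_Ioc]
    have h0 := (integrable_aux 0)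
    simp only [zero_mul, Real.cos_zero, mul_one] at h0
    have := (intervalIntegrable_iff_integrableOn_Ioc_of_le (by positivity : (0:ℝ) ≤ π/2)).1 h0
    exact this.ofReal
  have hRL := Real.tendsto_integral_exp_smul_cocompact G
  have hw : Tendsto (fun n : ℕ => (n:ℝ)/π) atTop (cocompact ℝ) := by
    rw [cocompact_eq_atBot_atTop]
    exact (tendsto_natCast_atTop_atTop.atTop_div_const hpi).mono_right le_sup_right
  have h2 := hRL.comp hw
  have h3 : Tendsto (fun n : ℕ => (∫ v : ℝ, Real.fourierChar (-(v * ((n:ℝ)/π))) • G v).re)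
      atTop (𝓝 0) := by
    have := (Complex.continuous_re.tendsto 0).comp h2
    exact this
  convert h3 using 2 with n
  have hint : Integrable (fun v : ℝ => Real.fourierChar (-(v * ((n:ℝ)/π))) • G v) :=
    by simpa [real_inner_comm, mul_comm] using (Real.fourierIntegral_convergent_iff (μ := volume) ((n:ℝ)/π)).2 hGint
  rw [← RCLike.re_eq_complex_re, ← integral_re hint, RCLike.re_eq_complex_re]
  have hptw : ∀ v : ℝ, (Real.fourierChar (-(v * ((n:ℝ)/π))) • G v).re
      = Set.indicator (Set.Ioc 0 (π/2)) (fun t => t^2*Real.cos (2*n*t)/Real.sin t) v := by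
    intro v
    by_cases hv : v ∈ Set.Ioc 0 (π/2)
    · rw [hG]
      simp only [Set.indicator_of_mem hv]
      rw [Circle.smul_def, Real.fourierChar_apply]
      have e1 : ((2:ℝ)*π*(-(v * ((n:ℝ)/π)))) = -(2*n*v) := by field_simp
      rw [e1, smul_eq_mul, Complex.mul_re, Complex.exp_ofReal_mul_I_re, Complex.ofReal_re,
        Complex.ofReal_im, Real.cos_neg]
      ring_nf
    · rw [hG]
      simp [Set.indicator_of_notMem hv]
  rw [show (fun v : ℝ => (Real.fourierChar (-(v * ((n:ℝ)/π))) • G v).re)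
      = Set.indicator (Set.Ioc 0 (π/2)) (fun t => t^2*Real.cos (2*n*t)/Real.sin t)
      from funext hptw]
  rw [MeasureTheory.integral_indicator measurableSet_Ioc]
  rw [intervalIntegral.integral_of_le (by positivity : (0:ℝ) ≤ π/2)]

lemma summable_inv_pow (p : ℕ) (hp : 1 < p) : Summable (fun k : ℕ => (1:ℝ)/(2*k+1)^p) := by
  have hbase : Summable (fun n : ℕ => (1:ℝ)/(n:ℝ)^p) :=
    Real.summable_one_div_nat_pow.2 hp
  have hshift : Summable (fun n : ℕ => (1:ℝ)/((n:ℝ)+1)^p) := by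
    have := (summable_nat_add_iff (f := fun n : ℕ => (1:ℝ)/(n:ℝ)^p) 1).2 hbase
    simpa using this
  apply Summable.of_nonneg_of_le (fun k => by positivity) (fun k => ?_) hshift
  apply div_le_div_of_nonneg_left one_pos.le (by positivity)
  apply pow_le_pow_left₀ (by positivity)
  push_cast
  linarith

lemma summable_alt_sq : Summable (fun k : ℕ => (-1:ℝ)^k/(2*k+1)^2) := by
  apply Summable.of_abs
  apply (summable_inv_pow 2 one_lt_two).congr
  intro k
  rw [abs_div, abs_pow, abs_neg, abs_one, one_pow]
  congr 1
  rw [abs_of_nonneg]; positivity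

lemma fsummable' : Summable (fun k : ℕ => 2*π*((-1:ℝ)^k/(2*k+1)^2) - 4*((1:ℝ)/(2*k+1)^3)) :=
  (summable_alt_sq.mul_left (2*π)).sub ((summable_inv_pow 3 (by norm_num)).mul_left 4)

lemma fsummable : Summable (fun k : ℕ => 2*(π*(-1:ℝ)^k/(2*k+1)^2 - 2/(2*k+1)^3)) := by
  apply fsummable'.congr
  intro k
  ring

lemma integral_t2_sin :
    (∫ t in (0:ℝ)..(π/2), t^2/Real.sin t)
      = 2*π*(∑' k:ℕ, (-1:ℝ)^k/(2*k+1)^2) - 4*(∑' k:ℕ, (1:ℝ)/(2*k+1)^3) := by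
  have hpi := Real.pi_pos
  set f : ℕ → ℝ := fun k => 2*(π*(-1:ℝ)^k/(2*k+1)^2 - 2/(2*k+1)^3) with hf
  have hsum : Summable f := fsummable
  -- partial sums identity
  have hpart : ∀ n : ℕ, (∫ t in (0:ℝ)..(π/2), t^2/Real.sin t)
      = (∑ k ∈ Finset.range n, f k)
        + ∫ t in (0:ℝ)..(π/2), t^2*Real.cos (2*n*t)/Real.sin t := by
    intro n
    have hcongr : (∫ t in (0:ℝ)..(π/2), t^2/Real.sin t)
        = ∫ t in (0:ℝ)..(π/2), ((∑ k ∈ Finset.range n, 2*(t^2*Real.sin ((2*k+1)*t)))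
            + t^2*Real.cos (2*n*t)/Real.sin t) := by
      apply intervalIntegral.integral_congr
      intro t ht
      rw [Set.uIcc_of_le (by positivity)] at ht
      exact pointwise_eq n ht
    rw [hcongr]
    have hint1 : IntervalIntegrable
        (fun t => (∑ k ∈ Finset.range n, 2*(t^2*Real.sin ((2*k+1)*t)))) volume 0 (π/2) := by
      apply Continuous.intervalIntegrable
      apply continuous_finset_sum
      intro k _
      exact continuous_const.mul ((continuous_pow 2).mul (Real.continuous_sin.comp
        (continuous_const.mul continuous_id)))
    rw [intervalIntegral.integral_add hint1 (integrable_aux (2*n))]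
    congr 1
    rw [intervalIntegral.integral_finset_sum]
    · apply Finset.sum_congr rfl
      intro k _
      rw [intervalIntegral.integral_const_mul, integral_sq_sin k, hf]
    · intro k _
      apply Continuous.intervalIntegrable
      continuity
  have hlim : Tendsto (fun n => ∑ k ∈ Finset.range n, f k) atTop
      (𝓝 (∫ t in (0:ℝ)..(π/2), t^2/Real.sin t)) := by
    have : (fun n => ∑ k ∈ Finset.range n, f k)
        = fun n : ℕ => (∫ t in (0:ℝ)..(π/2), t^2/Real.sin t)
            - ∫ t in (0:ℝ)..(π/2), t^2*Real.cos (2*(n:ℝ)*t)/Real.sin t := by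
      funext n
      rw [hpart n]; ring
    rw [this]
    simpa using tendsto_const_nhds.sub rem_tendsto
  have := hsum.hasSum.tendsto_sum_nat
  have heq : (∫ t in (0:ℝ)..(π/2), t^2/Real.sin t) = ∑' k, f k :=
    tendsto_nhds_unique hlim this
  rw [heq, hf]
  have heq2 : ∑' k : ℕ, (2*(π*(-1:ℝ)^k/(2*k+1)^2 - 2/(2*k+1)^3))
      = ∑' k : ℕ, (2*π*((-1:ℝ)^k/(2*k+1)^2) - 4*((1:ℝ)/(2*k+1)^3)) := by
    apply tsum_congr
    intro k
    ring
  rw [heq2, Summable.tsum_sub (summable_alt_sq.mul_left (2*π))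
    ((summable_inv_pow 3 (by norm_num)).mul_left 4), tsum_mul_left, tsum_mul_left]

lemma Zsummable : Summable (fun n : ℕ => (1:ℝ)/(n+1)^3) := by
  have hbase : Summable (fun n : ℕ => (1:ℝ)/(n:ℝ)^3) :=
    Real.summable_one_div_nat_pow.2 (by norm_num)
  have := (summable_nat_add_iff (f := fun n : ℕ => (1:ℝ)/(n:ℝ)^3) 1).2 hbase
  apply this.congr
  intro n
  push_cast
  ring

lemma odd_cubes : (∑' k:ℕ, (1:ℝ)/(2*k+1)^3) = (7/8) * ∑' n:ℕ, (1:ℝ)/(n+1)^3 := by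
  set f : ℕ → ℝ := fun n => (1:ℝ)/(n+1)^3 with hf
  have he : Summable (fun k : ℕ => f (2*k)) := by
    apply (summable_inv_pow 3 (by norm_num)).congr
    intro k
    rw [hf]
    push_cast
    ring
  have ho : Summable (fun k : ℕ => f (2*k+1)) := by
    apply (Zsummable.mul_left (1/8)).congr
    intro k
    rw [hf]
    push_cast
    field_simp
    ring
  have h := tsum_even_add_odd he ho
  have h1 : ∑' k : ℕ, f (2*k) = ∑' k : ℕ, (1:ℝ)/(2*k+1)^3 := by
    apply tsum_congr
    intro k
    rw [hf]
    push_cast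
    ring
  have h2 : ∑' k : ℕ, f (2*k+1) = (1/8) * ∑' n : ℕ, f n := by
    rw [← tsum_mul_left]
    apply tsum_congr
    intro k
    rw [hf]
    push_cast
    field_simp
    ring
  rw [h1, h2] at h
  have : ∑' n : ℕ, f n = ∑' n : ℕ, (1:ℝ)/(n+1)^3 := rfl
  linarith [h]

lemma part2 : (∫ t in (0:ℝ)..(π/2), t^2/Real.sin t)
    = 2*(π * (∑' n : ℕ, (-1:ℝ)^n / (2*n+1)^2) - (7/4) * (∑' n : ℕ, (1:ℝ)/(n+1)^3)) := by
  rw [integral_t2_sin, odd_cubes]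
  ring


end MyCat

namespace P1
open MyCat

/-- truncated reciprocal kernel, globally continuous -/
def hm (u x : ℝ) : ℝ := (max (1 - u * Real.sin (x/2)^2) (1/2))⁻¹

lemma hm_cont : Continuous (fun p : ℝ × ℝ => hm p.1 p.2) := by
  apply Continuous.inv₀
  · fun_prop
  · intro p
    have : (1:ℝ)/2 ≤ max (1 - p.1 * Real.sin (p.2/2)^2) (1/2) := le_max_right _ _
    intro h
    rw [h] at this
    norm_num at this

lemma P_mem {x : ℝ} (hx : x ∈ Icc (0:ℝ) (π/2)) :
    0 ≤ Real.sin (x/2)^2 ∧ Real.sin (x/2)^2 ≤ 1/2 := by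
  constructor
  · positivity
  · have h1 : Real.sin (x/2) ≤ Real.sin (π/4) := by
      apply Real.sin_le_sin_of_le_of_le_pi_div_two
        (by linarith [hx.1, Real.pi_pos]) (by linarith [Real.pi_pos]) (by linarith [hx.2])
    have h0 : 0 ≤ Real.sin (x/2) :=
      Real.sin_nonneg_of_nonneg_of_le_pi (by linarith [hx.1])
        (by linarith [hx.2, Real.pi_pos])
    have := Real.sin_pi_div_four
    nlinarith [Real.sq_sqrt (by norm_num : (0:ℝ) ≤ 2), Real.sqrt_nonneg 2]

lemma hm_eq {u x : ℝ} (hu : u ∈ Icc (0:ℝ) 1) (hx : x ∈ Icc (0:ℝ) (π/2)) :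
    hm u x = (1 - u * Real.sin (x/2)^2)⁻¹ := by
  unfold hm
  congr 1
  apply max_eq_left
  obtain ⟨h0, h2⟩ := P_mem hx
  nlinarith [hu.1, hu.2]

lemma denom_pos {u x : ℝ} (hu : u ∈ Icc (0:ℝ) 1) (hx : x ∈ Icc (0:ℝ) (π/2)) :
    (1:ℝ)/2 ≤ 1 - u * Real.sin (x/2)^2 := by
  obtain ⟨h0, h2⟩ := P_mem hx
  nlinarith [hu.1, hu.2]


lemma cos_eq_one_sub {x : ℝ} : Real.cos x = 1 - 2 * Real.sin (x/2)^2 := by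
  rw [show x = 2*(x/2) by ring, Real.cos_two_mul, Real.cos_sq']
  ring_nf

lemma deriv_alg {p q u : ℝ} (e1 : (1:ℝ)-u*p ≠ 0) (e2 : (1:ℝ)-u*q ≠ 0) (hpq : p - q ≠ 0) :
    ((1-u*q)⁻¹ * -q - (1-u*p)⁻¹ * -p) / (4*(p-q)) = (4:ℝ)⁻¹ * ((1-u*p)⁻¹ * (1-u*q)⁻¹) := by
  field_simp
  ring

lemma final_alg {p q A B : ℝ} (hpq : p - q ≠ 0) :
    (A - B) / (2*(q-p)) = (2*B - 2*A)/(4*(p-q)) := by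
  have h2 : q - p ≠ 0 := fun h => hpq (by linarith [sub_eq_zero.1 h])
  field_simp
  ring

lemma step1 {x z : ℝ} (hx : x ∈ Icc (0:ℝ) (π/2)) (hz : z ∈ Icc (0:ℝ) (π/2)) (hne : z ≠ x) :
    (Real.log (Real.cos (x/2)) - Real.log (Real.cos (z/2))) / (Real.cos x - Real.cos z)
      = ∫ u in (0:ℝ)..1, (4:ℝ)⁻¹ * (hm u x * hm u z) := by
  have hpi := Real.pi_pos
  set p := Real.sin (x/2)^2 with hp
  set q := Real.sin (z/2)^2 with hq
  have hp2 : 0 ≤ p ∧ p ≤ 1/2 := P_mem hx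
  have hq2 : 0 ≤ q ∧ q ≤ 1/2 := P_mem hz
  have hpq : p ≠ q := by
    intro h
    apply hne
    have h1 : |Real.sin (x/2)| = |Real.sin (z/2)| := by
      rw [← Real.sqrt_sq_eq_abs, ← Real.sqrt_sq_eq_abs, ← hp, ← hq, h]
    have hx0 : 0 ≤ Real.sin (x/2) :=
      Real.sin_nonneg_of_nonneg_of_le_pi (by linarith [hx.1]) (by linarith [hx.2])
    have hz0 : 0 ≤ Real.sin (z/2) :=
      Real.sin_nonneg_of_nonneg_of_le_pi (by linarith [hz.1]) (by linarith [hz.2])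
    rw [abs_of_nonneg hx0, abs_of_nonneg hz0] at h1
    have := Real.injOn_sin ⟨by linarith [hz.1], by linarith [hz.2]⟩
      ⟨by linarith [hx.1], by linarith [hx.2]⟩ h1.symm
    linarith
  have hpq' : p - q ≠ 0 := sub_ne_zero.2 hpq
  have hftc : ∫ u in (0:ℝ)..1, (4:ℝ)⁻¹ * (hm u x * hm u z)
      = (Real.log (1-1*q) - Real.log (1-1*p)) / (4*(p-q))
        - (Real.log (1-0*q) - Real.log (1-0*p)) / (4*(p-q)) := by
    apply intervalIntegral.integral_eq_sub_of_hasDerivAt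
      (f := fun u => (Real.log (1-u*q) - Real.log (1-u*p)) / (4*(p-q)))
    · intro u hu
      rw [Set.uIcc_of_le zero_le_one] at hu
      have hdp : (1:ℝ)/2 ≤ 1 - u*p := denom_pos hu hx
      have hdq : (1:ℝ)/2 ≤ 1 - u*q := denom_pos hu hz
      have h1 : HasDerivAt (fun u : ℝ => 1-u*q) (-q) u := by
        simpa using ((hasDerivAt_id u).mul_const q).const_sub 1
      have h2 : HasDerivAt (fun u : ℝ => 1-u*p) (-p) u := by
        simpa using ((hasDerivAt_id u).mul_const p).const_sub 1
      have hl1 : HasDerivAt (fun u : ℝ => Real.log (1-u*q)) ((1-u*q)⁻¹ * (-q)) u := by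
        have := (Real.hasDerivAt_log (by linarith : (1:ℝ)-u*q ≠ 0)).comp u h1
        simpa [div_eq_mul_inv, mul_comm, Function.comp_def] using this
      have hl2 : HasDerivAt (fun u : ℝ => Real.log (1-u*p)) ((1-u*p)⁻¹ * (-p)) u := by
        have := (Real.hasDerivAt_log (by linarith : (1:ℝ)-u*p ≠ 0)).comp u h2
        simpa [div_eq_mul_inv, mul_comm, Function.comp_def] using this
      have H := (hl1.sub hl2).div_const (4*(p-q))
      have e1 : (1:ℝ)-u*p ≠ 0 := by linarith
      have e2 : (1:ℝ)-u*q ≠ 0 := by linarith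
      rw [hm_eq hu hx, hm_eq hu hz, ← hp, ← hq]
      rw [← deriv_alg e1 e2 hpq']
      exact H
    · apply Continuous.intervalIntegrable
      apply Continuous.mul continuous_const
      exact (hm_cont.comp (continuous_id.prodMk continuous_const)).mul
        (hm_cont.comp (continuous_id.prodMk continuous_const))
  rw [hftc]
  have hcx : Real.log (1-p) = 2 * Real.log (Real.cos (x/2)) := by
    rw [hp, ← Real.cos_sq' (x/2), Real.log_pow]
    push_cast
    ring
  have hcz : Real.log (1-q) = 2 * Real.log (Real.cos (z/2)) := by
    rw [hq, ← Real.cos_sq' (z/2), Real.log_pow]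
    push_cast
    ring
  have hcosx : Real.cos x = 1 - 2*p := cos_eq_one_sub
  have hcosz : Real.cos z = 1 - 2*q := cos_eq_one_sub
  rw [hcosx, hcosz]
  have hd : (1:ℝ) - 2*p - (1 - 2*q) = 2*(q-p) := by ring
  rw [hd]
  simp only [one_mul, zero_mul, sub_zero, Real.log_one]
  rw [hcx, hcz]
  simp only [sub_self, zero_div, sub_zero]
  exact final_alg hpq'

lemma fubini_box {F : ℝ → ℝ → ℝ} (hF : Continuous (Function.uncurry F)) {a b c d : ℝ}
    (hab : a ≤ b) (hcd : c ≤ d) :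
    ∫ s in a..b, ∫ t in c..d, F s t = ∫ t in c..d, ∫ s in a..b, F s t := by
  rw [intervalIntegral.integral_of_le hab, intervalIntegral.integral_of_le hcd]
  simp_rw [intervalIntegral.integral_of_le hab, intervalIntegral.integral_of_le hcd]
  apply MeasureTheory.integral_integral_swap
  rw [Measure.prod_restrict]
  apply (hF.continuousOn.integrableOn_compact (isCompact_Icc.prod isCompact_Icc)).mono_set
  exact Set.prod_mono Set.Ioc_subset_Icc_self Set.Ioc_subset_Icc_self

def g (u : ℝ) : ℝ := ∫ x in (0:ℝ)..(π/2), hm u x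

lemma g_cont : Continuous g :=
  continuous_parametric_intervalIntegral_of_continuous' (f := fun u x => hm u x) hm_cont 0 (π/2)

lemma reduce1 :
    (∫ x in (0:ℝ)..(π/2), ∫ z in (0:ℝ)..(π/2),
      (Real.log (Real.cos (x/2)) - Real.log (Real.cos (z/2))) / (Real.cos x - Real.cos z))
    = ∫ u in (0:ℝ)..1, (4:ℝ)⁻¹ * (g u * g u) := by
  have hpi := Real.pi_pos
  have hle : (0:ℝ) ≤ π/2 := by positivity
  have hout : (∫ x in (0:ℝ)..(π/2), ∫ z in (0:ℝ)..(π/2),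
      (Real.log (Real.cos (x/2)) - Real.log (Real.cos (z/2))) / (Real.cos x - Real.cos z))
      = ∫ x in (0:ℝ)..(π/2), ∫ u in (0:ℝ)..1, (4⁻¹ * hm u x) * g u := by
    apply intervalIntegral.integral_congr
    intro x hx
    dsimp only
    rw [Set.uIcc_of_le hle] at hx
    have hinner : (∫ z in (0:ℝ)..(π/2),
        (Real.log (Real.cos (x/2)) - Real.log (Real.cos (z/2))) / (Real.cos x - Real.cos z))
        = ∫ z in (0:ℝ)..(π/2), ∫ u in (0:ℝ)..1, (4:ℝ)⁻¹ * (hm u x * hm u z) := by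
      apply intervalIntegral.integral_congr_ae
      have hae : ∀ᵐ (z:ℝ), z ≠ x := by
        rw [MeasureTheory.ae_iff]
        have : {z : ℝ | ¬ z ≠ x} = {x} := by ext w; simp
        rw [this]
        exact measure_singleton x
      filter_upwards [hae] with z hzx hzI
      rw [Set.uIoc_of_le hle] at hzI
      exact step1 hx (Set.Ioc_subset_Icc_self hzI) hzx
    rw [hinner]
    rw [fubini_box (F := fun z u => (4:ℝ)⁻¹ * (hm u x * hm u z)) ?_ hle zero_le_one]
    · apply intervalIntegral.integral_congr
      intro u hu
      dsimp only
      simp_rw [show ∀ z u : ℝ, (4:ℝ)⁻¹ * (hm u x * hm u z) = ((4:ℝ)⁻¹ * hm u x) * hm u z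
        from fun z u => by ring]
      rw [intervalIntegral.integral_const_mul]
      rfl
    · apply Continuous.mul continuous_const
      apply Continuous.mul
      · exact hm_cont.comp (continuous_snd.prodMk continuous_const)
      · exact hm_cont.comp (continuous_snd.prodMk continuous_fst)
  rw [hout]
  rw [fubini_box (F := fun x u => (4⁻¹ * hm u x) * g u) ?_ hle zero_le_one]
  · apply intervalIntegral.integral_congr
    intro u hu
    dsimp only
    rw [intervalIntegral.integral_mul_const, intervalIntegral.integral_const_mul]
    show (4:ℝ)⁻¹ * g u * g u = 4⁻¹ * (g u * g u)
    ring
  · apply Continuous.mul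
    · exact continuous_const.mul (hm_cont.comp (continuous_snd.prodMk continuous_fst))
    · exact g_cont.comp continuous_snd

lemma tan_half_mem {t : ℝ} (h0 : 0 < t) (h2 : t ≤ π/2) :
    0 < Real.tan (t/2) ∧ Real.tan (t/2) ≤ 1 := by
  have hpi := Real.pi_pos
  constructor
  · apply Real.tan_pos_of_pos_of_lt_pi_div_two (by linarith) (by linarith)
  · rw [← Real.tan_pi_div_four]
    rcases eq_or_lt_of_le (show t/2 ≤ π/4 by linarith) with h | h
    · rw [h]
    · exact le_of_lt (Real.tan_lt_tan_of_nonneg_of_lt_pi_div_two (by linarith) (by linarith) h)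

lemma deriv_alg2 {c σ s : ℝ} (hc : c ≠ 0) (hs : s ≠ 0) (hcs : c^2 + σ^2 = 1) :
    2*s⁻¹ * ((1/(1+(s*(σ/c))^2)) * (s * (1/c^2 * (1/2)))) = (1 - (1-s^2)*σ^2)⁻¹ := by
  have h1 : (0:ℝ) < 1+(s*(σ/c))^2 := by positivity
  have h2 : 1 - (1-s^2)*σ^2 = c^2 + s^2*σ^2 := by linear_combination -hcs
  have hc2 : (0:ℝ) < c^2 := by positivity
  have h3 : (0:ℝ) < c^2 + s^2*σ^2 := by positivity
  rw [h2]
  field_simp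

lemma g_phi {t : ℝ} (h0 : 0 < t) (h2 : t ≤ π/2) :
    g (1 - Real.tan (t/2)^2) = t / Real.tan (t/2) := by
  have hpi := Real.pi_pos
  obtain ⟨hs0, hs1⟩ := tan_half_mem h0 h2
  set s := Real.tan (t/2) with hsdef
  have hu : (1 - s^2) ∈ Icc (0:ℝ) 1 := by
    constructor <;> nlinarith
  have hftc : g (1-s^2) = 2*s⁻¹ * Real.arctan (s * Real.tan ((π/2)/2))
      - 2*s⁻¹ * Real.arctan (s * Real.tan ((0:ℝ)/2)) := by
    apply intervalIntegral.integral_eq_sub_of_hasDerivAt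
      (f := fun x => 2*s⁻¹ * Real.arctan (s * Real.tan (x/2)))
    · intro x hx
      rw [Set.uIcc_of_le (by positivity : (0:ℝ) ≤ π/2)] at hx
      have hcpos : 0 < Real.cos (x/2) := by
        apply Real.cos_pos_of_mem_Ioo
        constructor <;> [linarith [hx.1]; linarith [hx.2]]
      have hhalf : HasDerivAt (fun x : ℝ => x/2) (1/2) x := by
        simpa using (hasDerivAt_id x).div_const 2
      have htan : HasDerivAt (fun x : ℝ => Real.tan (x/2)) (1/Real.cos (x/2)^2 * (1/2)) x :=
        ((Real.hasDerivAt_tan hcpos.ne').comp x hhalf :)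
      have harc : HasDerivAt (fun x : ℝ => Real.arctan (s * Real.tan (x/2)))
          ((1/(1+(s*Real.tan (x/2))^2)) * (s * (1/Real.cos (x/2)^2 * (1/2)))) x :=
        ((Real.hasDerivAt_arctan (s * Real.tan (x/2))).comp x (htan.const_mul s) :)
      have H := harc.const_mul (2*s⁻¹)
      rw [hm_eq hu hx]
      have halg := deriv_alg2 (c := Real.cos (x/2)) (σ := Real.sin (x/2)) hcpos.ne' hs0.ne' (by
        rw [add_comm]; exact Real.sin_sq_add_cos_sq (x/2))
      refine H.congr_deriv ?_
      rw [Real.tan_eq_sin_div_cos]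
      exact halg
    · apply Continuous.intervalIntegrable
      exact hm_cont.comp (continuous_const.prodMk continuous_id)
  rw [hftc]
  have e1 : (π/2)/2 = π/4 := by ring
  have e2 : (0:ℝ)/2 = 0 := by norm_num
  rw [e1, e2, Real.tan_zero, mul_zero, Real.arctan_zero, mul_zero, sub_zero,
    Real.tan_pi_div_four, mul_one, hsdef, Real.arctan_tan (by linarith) (by linarith)]
  rw [← hsdef]
  field_simp

lemma alg3 {σ c t : ℝ} (hσ : σ ≠ 0) (hc : c ≠ 0) :
    σ/c^3 * ((4:ℝ)⁻¹ * ((t/(σ/c)) * (t/(σ/c)))) = t^2/(2*(σ*c))/2 := by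
  field_simp
  ring

lemma sub_main : (∫ u in (0:ℝ)..1, (4:ℝ)⁻¹*(g u * g u))
    = ∫ t in (0:ℝ)..(π/2), t^2/Real.sin t/2 := by
  have hpi := Real.pi_pos
  have hle : (0:ℝ) ≤ π/2 := by positivity
  have hcos : ∀ t ∈ Set.uIcc (0:ℝ) (π/2), 0 < Real.cos (t/2) := by
    intro t ht
    rw [Set.uIcc_of_le hle] at ht
    apply Real.cos_pos_of_mem_Ioo
    constructor
    · linarith [ht.1]
    · linarith [ht.2]
  have hderiv : ∀ t ∈ Set.uIcc (0:ℝ) (π/2),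
      HasDerivAt (fun t => 1 - Real.tan (t/2)^2)
        (-(Real.sin (t/2) / Real.cos (t/2)^3)) t := by
    intro t ht
    have hc := hcos t ht
    have hhalf : HasDerivAt (fun x : ℝ => x/2) (1/2) t := by
      simpa using (hasDerivAt_id t).div_const 2
    have htan : HasDerivAt (fun x : ℝ => Real.tan (x/2)) (1/Real.cos (t/2)^2 * (1/2)) t :=
      ((Real.hasDerivAt_tan hc.ne').comp t hhalf :)
    have H := (htan.pow 2).const_sub 1
    refine H.congr_deriv ?_
    rw [Real.tan_eq_sin_div_cos]
    field_simp
    rw [show (2:ℕ)-1 = 1 from rfl, pow_one, mul_assoc, mul_comm (Real.cos _),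
      div_mul_cancel₀ _ hc.ne']
    push_cast
    ring
  have hcont : ContinuousOn (fun t => -(Real.sin (t/2) / Real.cos (t/2)^3))
      (Set.uIcc (0:ℝ) (π/2)) := by
    apply ContinuousOn.neg
    apply ContinuousOn.div
    · exact (Real.continuous_sin.comp (continuous_id.div_const 2)).continuousOn
    · exact ((Real.continuous_cos.comp (continuous_id.div_const 2)).pow 3).continuousOn
    · intro t ht
      exact pow_ne_zero 3 (hcos t ht).ne'
  have hG : Continuous (fun u => (4:ℝ)⁻¹*(g u * g u)) :=
    continuous_const.mul (g_cont.mul g_cont)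
  have h := intervalIntegral.integral_comp_smul_deriv hderiv hcont hG
  have e0 : (1:ℝ) - Real.tan ((0:ℝ)/2)^2 = 1 := by
    norm_num
  have e1 : (1:ℝ) - Real.tan ((π/2)/2)^2 = 0 := by
    rw [show (π/2)/2 = π/4 by ring, Real.tan_pi_div_four]
    norm_num
  rw [e0, e1] at h
  have hgoal : (∫ u in (0:ℝ)..1, (4:ℝ)⁻¹*(g u * g u))
      = -∫ x in (0:ℝ)..(π/2), -(Real.sin (x/2)/Real.cos (x/2)^3)
          • ((fun u => (4:ℝ)⁻¹*(g u * g u)) ∘ (fun t => 1 - Real.tan (t/2)^2)) x := by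
    rw [h, ← intervalIntegral.integral_symm]
  rw [hgoal, ← intervalIntegral.integral_neg]
  apply intervalIntegral.integral_congr
  intro t ht
  have hc := hcos t ht
  rw [Set.uIcc_of_le hle] at ht
  simp only [Function.comp, smul_eq_mul]
  rcases eq_or_lt_of_le ht.1 with h0 | h0
  · rw [← h0]
    norm_num
  · have hσ : 0 < Real.sin (t/2) :=
      Real.sin_pos_of_pos_of_lt_pi (by linarith) (by linarith [ht.2, hpi])
    rw [g_phi h0 ht.2, Real.tan_eq_sin_div_cos]
    have hst' : Real.sin t = 2*(Real.sin (t/2)*Real.cos (t/2)) := by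
      nth_rewrite 1 [show t = 2*(t/2) by ring]
      rw [Real.sin_two_mul]
      ring
    rw [hst']
    have halg := alg3 (t := t) hσ.ne' hc.ne'
    rw [← halg]
    ring


end P1
end
end CatalanAuxiliary

theorem stmt0 :
    (∫ x in (0:ℝ)..(π/2), ∫ z in (0:ℝ)..(π/2),
      (Real.log (Real.cos (x/2)) - Real.log (Real.cos (z/2))) / (Real.cos x - Real.cos z))
    = π * (∑' n : ℕ, (-1:ℝ)^n / (2*n+1)^2) - (7/4) * (∑' n : ℕ, (1:ℝ)/(n+1)^3) := by
  rw [P1.reduce1, P1.sub_main, intervalIntegral.integral_div, MyCat.part2]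
  ring
end

section
/- For every integer n ≥ 0, the double integral over [0,π/2]² of (cos((2n+1)x) − cos((2n+1)z))/(cos x − cos z) dx dz equals π²/4 + 4·∑_{k=1}^{n} ((−1)^{k+1}/k)·∑_{m=0}^{k−1} 1/(2m+1). -/
set_option maxHeartbeats 1000000
open Real Finset intervalIntegral

noncomputable def eps (j : ℕ) : ℝ := if j = 0 then 1 else 2

noncomputable def dd (n : ℕ) (θ : ℝ) : ℝ := ∑ j ∈ Finset.range (n+1), eps j * Real.cos (2*j*θ)

lemma dirichlet (n : ℕ) (θ : ℝ) : Real.sin ((2*n+1)*θ) = Real.sin θ * dd n θ := by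
  induction n with
  | zero => simp [dd, eps, mul_comm]
  | succ n ih =>
      have h1 : dd (n+1) θ = dd n θ + 2 * Real.cos (2*(n+1)*θ) := by
        simp [dd, Finset.sum_range_succ, eps]
      have h2 : Real.sin ((2*(n+1:ℕ)+1)*θ) - Real.sin ((2*n+1)*θ)
          = 2 * Real.sin θ * Real.cos (2*(n+1)*θ) := by
        rw [Real.sin_sub_sin]
        push_cast
        ring_nf
      push_cast at h2 ⊢
      rw [h1]
      linear_combination h2 + ih

lemma icos_eval (a c : ℝ) (ha : a ≠ 0) (l r : ℝ) :
    ∫ x in l..r, Real.cos (a*x + c) = (Real.sin (a*r+c) - Real.sin (a*l+c)) / a := by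
  have h : ∀ x ∈ Set.uIcc l r, HasDerivAt (fun x => Real.sin (a*x+c) / a) (Real.cos (a*x+c)) x := by
    intro x _
    have h1 : HasDerivAt (fun x : ℝ => a*x+c) a x := by
      simpa using ((hasDerivAt_id x).const_mul a).add_const c
    have h2 := (Real.hasDerivAt_sin (a*x+c)).comp x h1
    have h3 := h2.div_const a
    simpa [mul_comm, mul_div_assoc, mul_div_cancel_left₀ _ ha] using h3
  have hint : IntervalIntegrable (fun x => Real.cos (a*x+c)) MeasureTheory.volume l r := by
    apply Continuous.intervalIntegrable; continuity
  rw [intervalIntegral.integral_eq_sub_of_hasDerivAt h hint]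
  ring

lemma isin_eval (a c : ℝ) (ha : a ≠ 0) (l r : ℝ) :
    ∫ x in l..r, Real.sin (a*x + c) = (Real.cos (a*l+c) - Real.cos (a*r+c)) / a := by
  have h : ∀ x ∈ Set.uIcc l r, HasDerivAt (fun x => -(Real.cos (a*x+c)) / a) (Real.sin (a*x+c)) x := by
    intro x _
    have h1 : HasDerivAt (fun x : ℝ => a*x+c) a x := by
      simpa using ((hasDerivAt_id x).const_mul a).add_const c
    have h2 := ((Real.hasDerivAt_cos (a*x+c)).comp x h1).neg.div_const a
    simpa [mul_comm, mul_div_assoc, mul_div_cancel_left₀ _ ha] using h2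
  have hint : IntervalIntegrable (fun x => Real.sin (a*x+c)) MeasureTheory.volume l r := by
    apply Continuous.intervalIntegrable; continuity
  rw [intervalIntegral.integral_eq_sub_of_hasDerivAt h hint]
  ring

noncomputable def icosv (a c : ℝ) : ℝ :=
  if a = 0 then (π/2) * Real.cos c else (Real.sin (a*(π/2)+c) - Real.sin c)/a

lemma icos_lem (a c : ℝ) : ∫ x in (0:ℝ)..(π/2), Real.cos (a*x + c) = icosv a c := by
  unfold icosv
  by_cases ha : a = 0
  · simp [ha, mul_comm]
  · simp only [if_neg ha]
    rw [icos_eval a c ha]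
    simp

lemma cos_mul_cos (A B : ℝ) : Real.cos A * Real.cos B = (Real.cos (A-B) + Real.cos (A+B))/2 := by
  rw [Real.cos_add, Real.cos_sub]; ring

lemma T_lem (j k z : ℝ) :
    (∫ x in (0:ℝ)..(π/2), Real.cos (j*(x+z)) * Real.cos (k*(x-z)))
      = (icosv (j-k) ((j+k)*z) + icosv (j+k) ((j-k)*z))/2 := by
  have h : ∀ x : ℝ, Real.cos (j*(x+z)) * Real.cos (k*(x-z))
      = (Real.cos ((j-k)*x + (j+k)*z) + Real.cos ((j+k)*x + (j-k)*z))/2 := by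
    intro x
    rw [cos_mul_cos]
    have e1 : j*(x+z) - k*(x-z) = (j-k)*x + (j+k)*z := by ring
    have e2 : j*(x+z) + k*(x-z) = (j+k)*x + (j-k)*z := by ring
    rw [e1, e2]
  simp_rw [h]
  have i1 : IntervalIntegrable (fun x => Real.cos ((j-k)*x + (j+k)*z)) MeasureTheory.volume 0 (π/2) := by
    apply Continuous.intervalIntegrable; continuity
  have i2 : IntervalIntegrable (fun x => Real.cos ((j+k)*x + (j-k)*z)) MeasureTheory.volume 0 (π/2) := by
    apply Continuous.intervalIntegrable; continuity
  rw [intervalIntegral.integral_div, intervalIntegral.integral_add i1 i2, icos_lem, icos_lem]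

noncomputable def Wv (p q : ℝ) : ℝ :=
  if p = 0 then (if q = 0 then π^2/4 else (π/2) * Real.sin (q*(π/2)) / q)
  else if q = 0 then (π/2) * Real.sin (p*(π/2)) / p
  else (Real.cos (p*(π/2)) - Real.cos ((p+q)*(π/2)) + Real.cos (q*(π/2)) - 1)/(p*q)

lemma W_lem (p q : ℝ) : ∫ z in (0:ℝ)..(π/2), icosv p (q*z) = Wv p q := by
  unfold icosv Wv
  by_cases hp : p = 0
  · simp only [if_pos hp]
    by_cases hq : q = 0
    · subst hq hp
      simp
      ring
    · simp only [if_neg hq]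
      rw [intervalIntegral.integral_const_mul]
      have := icos_eval q 0 hq 0 (π/2)
      simp only [add_zero] at this
      rw [this]
      simp [Real.sin_zero, mul_div_assoc]
  · simp only [if_neg hp]
    by_cases hq : q = 0
    · subst hq
      simp only [if_pos rfl]
      simp [mul_div_assoc]
    · simp only [if_neg hq]
      have h : ∀ z : ℝ, (Real.sin (p*(π/2)+q*z) - Real.sin (q*z))/p
          = (Real.sin (q*z + p*(π/2)) - Real.sin (q*z + 0))/p := by
        intro z; rw [add_comm (p*(π/2)), add_zero]
      simp_rw [h]
      have i1 : IntervalIntegrable (fun z => Real.sin (q*z + p*(π/2))) MeasureTheory.volume 0 (π/2) := by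
        apply Continuous.intervalIntegrable; continuity
      have i2 : IntervalIntegrable (fun z => Real.sin (q*z + 0)) MeasureTheory.volume 0 (π/2) := by
        apply Continuous.intervalIntegrable; continuity
      rw [intervalIntegral.integral_div, intervalIntegral.integral_sub i1 i2,
        isin_eval q (p*(π/2)) hq, isin_eval q 0 hq]
      simp only [mul_zero, zero_add, add_zero, Real.cos_zero]
      field_simp
      ring


noncomputable def Jv (j k : ℕ) : ℝ :=
  (Wv ((j:ℝ)-k) ((j:ℝ)+k) + Wv ((j:ℝ)+k) ((j:ℝ)-k))/2

lemma factorize (n : ℕ) (x z : ℝ) :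
    Real.cos ((2*n+1)*x) - Real.cos ((2*n+1)*z)
      = (Real.cos x - Real.cos z) * (dd n ((x+z)/2) * dd n ((x-z)/2)) := by
  have h1 : Real.cos ((2*n+1)*x) - Real.cos ((2*n+1)*z)
      = -2 * Real.sin ((2*n+1)*((x+z)/2)) * Real.sin ((2*n+1)*((x-z)/2)) := by
    rw [Real.cos_sub_cos]; ring_nf
  have h2 : Real.cos x - Real.cos z = -2 * Real.sin ((x+z)/2) * Real.sin ((x-z)/2) :=
    Real.cos_sub_cos x z
  rw [h1, dirichlet, dirichlet, h2]; ring

noncomputable def Gv (j k : ℕ) (z : ℝ) : ℝ :=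
  (icosv ((j:ℝ)-k) (((j:ℝ)+k)*z) + icosv ((j:ℝ)+k) (((j:ℝ)-k)*z))/2
lemma icosv_cont (p q : ℝ) : Continuous (fun z => icosv p (q*z)) := by
  unfold icosv
  by_cases hp : p = 0 <;> simp only [hp, if_true, if_false, if_pos, if_neg] <;> continuity

lemma inner_comp (n : ℕ) (z : ℝ) :
    (∫ x in (0:ℝ)..(π/2), dd n ((x+z)/2) * dd n ((x-z)/2))
      = ∑ j ∈ Finset.range (n+1), ∑ k ∈ Finset.range (n+1), eps j * eps k * Gv j k z := by
  have hexp : ∀ x : ℝ, dd n ((x+z)/2) * dd n ((x-z)/2)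
      = ∑ j ∈ Finset.range (n+1), ∑ k ∈ Finset.range (n+1),
          eps j * eps k * (Real.cos ((j:ℝ)*(x+z)) * Real.cos ((k:ℝ)*(x-z))) := by
    intro x
    rw [dd, dd, Finset.sum_mul_sum]
    refine Finset.sum_congr rfl fun j _ => Finset.sum_congr rfl fun k _ => ?_
    have e1 : 2*(j:ℝ)*((x+z)/2) = (j:ℝ)*(x+z) := by ring
    have e2 : 2*(k:ℝ)*((x-z)/2) = (k:ℝ)*(x-z) := by ring
    rw [e1, e2]; ring
  simp_rw [hexp]
  rw [intervalIntegral.integral_finset_sum]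
  · refine Finset.sum_congr rfl fun j _ => ?_
    rw [intervalIntegral.integral_finset_sum]
    · refine Finset.sum_congr rfl fun k _ => ?_
      rw [intervalIntegral.integral_const_mul, T_lem]
      rfl
    · intro k _
      apply Continuous.intervalIntegrable
      exact continuous_const.mul ((Real.continuous_cos.comp (by fun_prop)).mul
        (Real.continuous_cos.comp (by fun_prop)))
  · intro j _
    apply Continuous.intervalIntegrable
    apply continuous_finset_sum
    intro k _
    exact continuous_const.mul ((Real.continuous_cos.comp (by fun_prop)).mul
      (Real.continuous_cos.comp (by fun_prop)))

lemma main_analytic (n : ℕ) :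
    (∫ x in (0:ℝ)..(π/2), ∫ z in (0:ℝ)..(π/2),
      (Real.cos ((2*n+1)*x) - Real.cos ((2*n+1)*z)) / (Real.cos x - Real.cos z))
    = ∑ j ∈ Finset.range (n+1), ∑ k ∈ Finset.range (n+1), eps j * eps k * Jv j k := by
  have pi2 : (0:ℝ) ≤ π/2 := by positivity
  -- swap roles: note the outer variable is x, inner is z; by symmetry of the formula just rename
  have step1 : (∫ x in (0:ℝ)..(π/2), ∫ z in (0:ℝ)..(π/2),
      (Real.cos ((2*n+1)*x) - Real.cos ((2*n+1)*z)) / (Real.cos x - Real.cos z))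
      = ∫ x in (0:ℝ)..(π/2), ∑ j ∈ Finset.range (n+1), ∑ k ∈ Finset.range (n+1),
          eps j * eps k * Gv j k x := by
    apply intervalIntegral.integral_congr
    intro x hx
    simp only []
    rw [Set.uIcc_of_le pi2] at hx
    -- inner: ∫ z, ratio(x,z) dz ; here the "z" plays the inner role
    have hae : ∀ᵐ z : ℝ ∂MeasureTheory.volume, z ∈ Set.uIoc (0:ℝ) (π/2) →
        (Real.cos ((2*n+1)*x) - Real.cos ((2*n+1)*z)) / (Real.cos x - Real.cos z)
        = dd n ((z+x)/2) * dd n ((z-x)/2) := by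
      have hzne : ∀ᵐ z : ℝ ∂MeasureTheory.volume, z ≠ x := by
        rw [MeasureTheory.ae_iff]
        have : {a : ℝ | ¬ a ≠ x} = {x} := by ext a; simp
        rw [this]
        exact MeasureTheory.measure_singleton x
      filter_upwards [hzne] with z hzx hzI
      rw [Set.uIoc_of_le pi2] at hzI
      have hxmem : x ∈ Set.Icc (0:ℝ) π := ⟨hx.1, hx.2.trans (by linarith [Real.pi_pos])⟩
      have hzmem : z ∈ Set.Icc (0:ℝ) π := ⟨le_of_lt hzI.1, hzI.2.trans (by linarith [Real.pi_pos])⟩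
      have hcos : Real.cos x - Real.cos z ≠ 0 := by
        intro h
        exact hzx (Real.injOn_cos hzmem hxmem (by linarith [sub_eq_zero.mp h]) )
      have hfac := factorize n z x
      -- ratio(x,z) = (cos((2n+1)x) - cos((2n+1)z))/(cos x - cos z)
      have : Real.cos ((2*n+1)*x) - Real.cos ((2*n+1)*z)
          = (Real.cos x - Real.cos z) * (dd n ((z+x)/2) * dd n ((z-x)/2)) := by
        have := factorize n z x
        -- factorize gives cos((2n+1)z) - cos((2n+1)x) = (cos z - cos x) * (dd n ((z+x)/2) * dd n ((z-x)/2))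
        linarith [this]
      rw [this, mul_div_cancel_left₀ _ hcos]
    calc (∫ z in (0:ℝ)..(π/2),
        (Real.cos ((2*n+1)*x) - Real.cos ((2*n+1)*z)) / (Real.cos x - Real.cos z))
        = ∫ z in (0:ℝ)..(π/2), dd n ((z+x)/2) * dd n ((z-x)/2) :=
          intervalIntegral.integral_congr_ae hae
      _ = ∑ j ∈ Finset.range (n+1), ∑ k ∈ Finset.range (n+1), eps j * eps k * Gv j k x :=
          inner_comp n x
  rw [step1]
  rw [intervalIntegral.integral_finset_sum]
  · refine Finset.sum_congr rfl fun j _ => ?_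
    rw [intervalIntegral.integral_finset_sum]
    · refine Finset.sum_congr rfl fun k _ => ?_
      rw [intervalIntegral.integral_const_mul]
      unfold Gv Jv
      rw [intervalIntegral.integral_div,
        intervalIntegral.integral_add ((icosv_cont _ _).intervalIntegrable _ _)
          ((icosv_cont _ _).intervalIntegrable _ _), W_lem, W_lem]
    · intro k _
      apply Continuous.intervalIntegrable
      exact continuous_const.mul (((icosv_cont _ _).add (icosv_cont _ _)).div_const 2)
  · intro j _
    apply Continuous.intervalIntegrable
    apply continuous_finset_sum
    intro k _
    exact continuous_const.mul (((icosv_cont _ _).add (icosv_cont _ _)).div_const 2)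

lemma cos_nat_pi (j : ℕ) : Real.cos ((j:ℝ)*π) = (-1:ℝ)^j := by
  simpa using Real.cos_nat_mul_pi_sub 0 j

lemma Jv_diag (j : ℕ) : Jv j j = if j = 0 then π^2/4 else 0 := by
  by_cases hj : j = 0
  · subst hj; simp [Jv, Wv]
  · have hq : ((j:ℝ)+j) ≠ 0 := by
      have : (0:ℝ) < j := by exact_mod_cast Nat.pos_of_ne_zero hj
      positivity
    have hs : Real.sin (((j:ℝ)+j)*(π/2)) = 0 := by
      have e : ((j:ℝ)+j)*(π/2) = (j:ℝ)*π := by ring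
      rw [e, Real.sin_nat_mul_pi]
    simp only [Jv, Wv, sub_self, if_pos rfl, if_neg hq, hj]
    rw [hs]
    simp

lemma Jv_sym (j k : ℕ) (h : j ≠ k) :
    Jv j k + Jv k j = ((-1:ℝ)^k - (-1)^j)/((j:ℝ)^2 - (k:ℝ)^2) := by
  have hp : ((j:ℝ) - k) ≠ 0 := by
    intro hc; exact h (by exact_mod_cast sub_eq_zero.mp hc)
  have hp' : ((k:ℝ) - j) ≠ 0 := by
    intro hc
    have h2 : (k:ℝ) = j := sub_eq_zero.mp hc
    exact h (by exact_mod_cast h2.symm)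
  have hq : ((j:ℝ) + k) ≠ 0 := by
    have h0 : 0 < j + k := by omega
    have : (0:ℝ) < j + k := by exact_mod_cast h0
    push_cast at this; linarith
  have hq' : ((k:ℝ) + j) ≠ 0 := by rw [add_comm]; exact hq
  simp only [Jv, Wv, if_neg hp, if_neg hq, if_neg hp', if_neg hq']
  have a1 : ((j:ℝ)-↑k + ((j:ℝ)+↑k))*(π/2) = (j:ℝ)*π := by ring
  have a2 : ((j:ℝ)+↑k + ((j:ℝ)-↑k))*(π/2) = (j:ℝ)*π := by ring
  have a3 : ((k:ℝ)-↑j + ((k:ℝ)+↑j))*(π/2) = (k:ℝ)*π := by ring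
  have a4 : ((k:ℝ)+↑j + ((k:ℝ)-↑j))*(π/2) = (k:ℝ)*π := by ring
  have a5 : ((k:ℝ)-↑j)*(π/2) = -(((j:ℝ)-↑k)*(π/2)) := by ring
  have a6 : ((k:ℝ)+↑j)*(π/2) = ((j:ℝ)+↑k)*(π/2) := by ring
  rw [a1, a2, a3, a4, a5, a6, Real.cos_neg, cos_nat_pi, cos_nat_pi,
    show (j:ℝ)^2-(k:ℝ)^2 = ((j:ℝ)-k)*((j:ℝ)+k) from by ring]
  field_simp
  ring

lemma pair_sum (f : ℕ → ℝ) (m : ℕ) :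
    ∑ j ∈ Finset.range (2*m), f j = ∑ i ∈ Finset.range m, (f (2*i) + f (2*i+1)) := by
  induction m with
  | zero => simp
  | succ m ih =>
      have e : 2*(m+1) = (2*m+1)+1 := by omega
      rw [e, Finset.sum_range_succ, Finset.sum_range_succ, ih, Finset.sum_range_succ]
      ring

lemma shift_sum (f : ℕ → ℝ) (m l : ℕ) :
    ∑ j ∈ Finset.range (m+l), f j
      = ∑ j ∈ Finset.range m, f j + ∑ i ∈ Finset.range l, f (m+i) := by
  induction l with
  | zero => simp
  | succ l ih =>
      have e : m + (l+1) = (m+l)+1 := by omega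
      rw [e, Finset.sum_range_succ, ih, Finset.sum_range_succ]
      ring

lemma Lrow (m : ℕ) (hm : 1 ≤ m) :
    ∑ k ∈ Finset.range m, (eps m * eps k * Jv m k + eps k * eps m * Jv k m)
      = 4*((-1:ℝ)^(m+1)/m) * ∑ i ∈ Finset.range m, (1:ℝ)/(2*i+1) := by
  have hm0 : m ≠ 0 := by omega
  have hmR : (0:ℝ) < m := by exact_mod_cast Nat.pos_of_ne_zero hm0
  set c : ℕ → ℝ := fun j => ((-1:ℝ)^(j+m) - (-1)^m)/j with hc
  -- step 1: per-term rewrite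
  have step1 : ∀ k ∈ Finset.range m,
      eps m * eps k * Jv m k + eps k * eps m * Jv k m
        = (2/m) * ((eps k/2) * c (m-k) + (eps k/2) * c (m+k)) := by
    intro k hk
    rw [Finset.mem_range] at hk
    have hne : m ≠ k := by omega
    have hepsm : eps m = 2 := by simp [eps, hm0]
    have hJ := Jv_sym m k hne
    have hmk : (m:ℝ) - k ≠ 0 := by
      have : (k:ℝ) < m := by exact_mod_cast hk
      linarith
    have hmk' : (m:ℝ) + k ≠ 0 := by
      have : (0:ℝ) ≤ k := by positivity
      linarith
    have csub : c (m-k) = (((-1:ℝ))^k - (-1)^m)/((m:ℝ)-k) := by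
      have hcast : ((m-k:ℕ):ℝ) = (m:ℝ) - k := by
        rw [Nat.cast_sub (le_of_lt hk)]
      have hpow : ((-1:ℝ))^((m-k)+m) = (-1)^k := by
        have h1 : ((-1:ℝ))^((m-k)+m) * (-1)^k = 1 := by
          rw [← pow_add]
          have e : (m-k)+m+k = 2*m := by omega
          rw [e, pow_mul]; norm_num
        have h2 : ((-1:ℝ))^k * (-1)^k = 1 := by
          rw [← pow_add, ← two_mul, pow_mul]; norm_num
        calc ((-1:ℝ))^((m-k)+m) = ((-1:ℝ))^((m-k)+m) * (((-1:ℝ))^k * (-1)^k) := by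
              rw [h2, mul_one]
          _ = (((-1:ℝ))^((m-k)+m) * (-1)^k) * (-1)^k := by ring
          _ = (-1)^k := by rw [h1, one_mul]
      rw [hc]; simp only []; rw [hpow, hcast]
    have cadd : c (m+k) = (((-1:ℝ))^k - (-1)^m)/((m:ℝ)+k) := by
      have hpow : ((-1:ℝ))^((m+k)+m) = (-1)^k := by
        have e : (m+k)+m = 2*m + k := by omega
        rw [e, pow_add, pow_mul]; norm_num
      rw [hc]; simp only []; rw [hpow]; push_cast; ring_nf
    rw [hepsm]
    have hcomb : 2 * eps k * Jv m k + eps k * 2 * Jv k m = 2 * eps k * (Jv m k + Jv k m) := by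
      ring
    rw [hcomb, hJ, csub, cadd]
    have hden : (m:ℝ)^2 - (k:ℝ)^2 ≠ 0 := by
      intro hcon
      have : ((m:ℝ)-k)*((m:ℝ)+k) = 0 := by ring_nf; ring_nf at hcon; linarith
      rcases mul_eq_zero.mp this with h' | h'
      · exact hmk h'
      · exact hmk' h'
    have hden2 : (k:ℝ)^2 - (m:ℝ)^2 ≠ 0 := fun hcon => hden (by linarith)
    field_simp
    ring
  rw [Finset.sum_congr rfl step1, ← Finset.mul_sum]
  -- step 2: split the eps k / 2 weights
  have c0 : c 0 = 0 := by simp [hc]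
  have split : ∀ (g : ℕ → ℝ),
      ∑ k ∈ Finset.range m, (eps k/2) * g k
        = ∑ k ∈ Finset.range m, g k - (1/2) * g 0 := by
    intro g
    have : ∀ k ∈ Finset.range m, (eps k/2) * g k
        = g k - (if k = 0 then (1/2) * g 0 else 0) := by
      intro k _
      by_cases hk : k = 0
      · subst hk; simp [eps]; ring
      · simp [eps, hk]
    rw [Finset.sum_congr rfl this, Finset.sum_sub_distrib, Finset.sum_ite_eq' (Finset.range m) 0]
    simp [Finset.mem_range, Nat.pos_of_ne_zero hm0, hm]
  have hsum : ∑ k ∈ Finset.range m, ((eps k/2) * c (m-k) + (eps k/2) * c (m+k))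
      = ∑ j ∈ Finset.range (m+m), c j := by
    rw [Finset.sum_add_distrib, split (fun k => c (m-k)), split (fun k => c (m+k))]
    simp only [Nat.sub_zero, Nat.add_zero]
    have refl1 : ∑ k ∈ Finset.range m, c (m-k) = ∑ k ∈ Finset.range m, c (k+1) := by
      rw [← Finset.sum_range_reflect (fun i => c (i+1)) m]
      apply Finset.sum_congr rfl
      intro k hk
      rw [Finset.mem_range] at hk
      congr 1
      omega
    have refl2 : ∑ k ∈ Finset.range m, c (k+1) = ∑ k ∈ Finset.range m, c k + c m := by
      have h1 := Finset.sum_range_succ' c m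
      rw [Finset.sum_range_succ, c0, add_zero] at h1
      exact h1.symm
    rw [refl1, refl2, shift_sum c m m]
    ring
  rw [hsum]
  have e2m : m + m = 2*m := by omega
  rw [e2m, pair_sum c m]
  have term : ∀ i ∈ Finset.range m, c (2*i) + c (2*i+1) = (-2)*(-1:ℝ)^m * (1/(2*(i:ℝ)+1)) := by
    intro i _
    have h1 : c (2*i) = 0 := by
      simp only [hc]
      rw [pow_add, pow_mul]
      norm_num
    have h2 : c (2*i+1) = (-2)*(-1:ℝ)^m / (2*(i:ℝ)+1) := by
      simp only [hc]
      rw [pow_add, pow_add, pow_mul]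
      push_cast
      norm_num
      ring_nf
    rw [h1, h2]; ring
  rw [Finset.sum_congr rfl term, Finset.mul_sum, Finset.mul_sum]
  apply Finset.sum_congr rfl
  intro i _
  have hi : (2*(i:ℝ)+1) ≠ 0 := by positivity
  rw [pow_succ]
  field_simp
  ring


lemma alg (n : ℕ) :
    ∑ j ∈ Finset.range (n+1), ∑ k ∈ Finset.range (n+1), eps j * eps k * Jv j k
      = π^2/4 + 4 * ∑ k ∈ Finset.Icc 1 n, ((-1:ℝ)^(k+1) / k) *
          ∑ m ∈ Finset.range k, (1:ℝ)/(2*m+1) := by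
  induction n with
  | zero =>
      simp [Jv_diag, eps]
  | succ n ih =>
      set m := n + 1 with hmdef
      have hm : 1 ≤ m := by omega
      have hm0 : m ≠ 0 := by omega
      set f : ℕ → ℕ → ℝ := fun j k => eps j * eps k * Jv j k with hf
      have sq : ∑ j ∈ Finset.range (m+1), ∑ k ∈ Finset.range (m+1), f j k
          = (∑ j ∈ Finset.range m, ∑ k ∈ Finset.range m, f j k)
            + (∑ k ∈ Finset.range m, (f m k + f k m)) + f m m := by
        rw [Finset.sum_range_succ]
        have h1 : ∑ j ∈ Finset.range m, ∑ k ∈ Finset.range (m+1), f j k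
            = ∑ j ∈ Finset.range m, (∑ k ∈ Finset.range m, f j k + f j m) := by
          exact Finset.sum_congr rfl fun j _ => Finset.sum_range_succ _ _
        rw [h1, Finset.sum_range_succ (fun k => f m k) m, Finset.sum_add_distrib,
          Finset.sum_add_distrib]
        abel
      have hfmm : f m m = 0 := by
        simp [hf, Jv_diag, hm0]
      have hrow : ∑ k ∈ Finset.range m, (f m k + f k m)
          = 4*((-1:ℝ)^(m+1)/m) * ∑ i ∈ Finset.range m, (1:ℝ)/(2*i+1) := by
        rw [← Lrow m hm]
      rw [sq, ih, hfmm, hrow, Finset.sum_Icc_succ_top hm]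
      ring

theorem stmt6 (n : ℕ) :
    (∫ x in (0:ℝ)..(π/2), ∫ z in (0:ℝ)..(π/2),
      (Real.cos ((2*n+1)*x) - Real.cos ((2*n+1)*z)) / (Real.cos x - Real.cos z))
    = π^2/4 + 4 * ∑ k ∈ Finset.Icc 1 n, ((-1:ℝ)^(k+1) / k) *
        ∑ m ∈ Finset.range k, (1:ℝ)/(2*m+1) := by
  rw [main_analytic n, alg n]
end

section
/- The integral ∫₀¹ log(1−x²)/(1+x²) dx equals (π/4)·log 2 − G, where G is Catalan's constant. -/
open Real MeasureTheory Set intervalIntegral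

noncomputable def FF (n : ℕ) : ℝ → ℝ :=
  fun x => x ^ (2*n+1) / ((2*n+1):ℝ)^2 - x ^ (2*n+1) * Real.log x / ((2*n+1):ℝ)

lemma hFF_cont (n : ℕ) : Continuous (FF n) := by
  have : FF n = fun x : ℝ => x ^ (2*n+1) / ((2*n+1):ℝ)^2 - x ^ (2*n) * (x * Real.log x) / ((2*n+1):ℝ) := by
    funext x; simp only [FF]; ring
  rw [this]
  exact ((continuous_pow _).div_const _).sub
    (((continuous_pow _).mul Real.continuous_mul_log).div_const _)

lemma hFF_deriv (n : ℕ) {x : ℝ} (hx : 0 < x) :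
    HasDerivAt (FF n) (-(x ^ (2*n) * Real.log x)) x := by
  have h1 : HasDerivAt (fun y : ℝ => y ^ (2*n+1)) (((2*n+1):ℝ) * x ^ (2*n)) x := by
    simpa using hasDerivAt_pow (2*n+1) x
  have h2 : HasDerivAt Real.log x⁻¹ x := Real.hasDerivAt_log hx.ne'
  have h3 : HasDerivAt (fun y : ℝ => y ^ (2*n+1) * Real.log y)
      (((2*n+1):ℝ) * x ^ (2*n) * Real.log x + x ^ (2*n+1) * x⁻¹) x := h1.mul h2
  have h4 := (h1.div_const (((2*n+1):ℝ)^2)).sub (h3.div_const ((2*n+1):ℝ))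
  refine h4.congr_deriv ?_
  have hm : ((2*n+1):ℝ) ≠ 0 := by positivity
  field_simp
  ring

lemma integrableOn_neg_pow_log (n : ℕ) :
    IntegrableOn (fun x : ℝ => -(x ^ (2*n) * Real.log x)) (Ioc 0 1) := by
  apply intervalIntegral.integrableOn_deriv_of_nonneg (hFF_cont n).continuousOn
    (fun x hx => hFF_deriv n hx.1)
  intro x hx
  have h1 : Real.log x ≤ 0 := Real.log_nonpos hx.1.le hx.2.le
  have h2 : (0:ℝ) ≤ x ^ (2*n) := pow_nonneg hx.1.le _
  nlinarith

lemma intervalIntegrable_pow_log (n : ℕ) :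
    IntervalIntegrable (fun x : ℝ => x ^ (2*n) * Real.log x) volume 0 1 := by
  rw [intervalIntegrable_iff_integrableOn_Ioc_of_le zero_le_one]
  exact (integrableOn_neg_pow_log n).neg.congr
    (Filter.Eventually.of_forall fun x => by
      show -(-(x ^ (2*n) * Real.log x)) = _; ring)

lemma integral_pow_log (n : ℕ) :
    ∫ x in (0:ℝ)..1, x ^ (2*n) * Real.log x = -(1 / ((2*n+1):ℝ)^2) := by
  have h := intervalIntegral.integral_eq_sub_of_hasDeriv_right_of_le zero_le_one
    (hFF_cont n).continuousOn
    (fun x hx => (hFF_deriv n hx.1).hasDerivWithinAt)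
    (intervalIntegrable_pow_log n).neg
  have h0 : FF n 0 = 0 := by simp [FF, zero_pow (Nat.succ_ne_zero (2*n))]
  have h1 : FF n 1 = 1 / ((2*n+1):ℝ)^2 := by simp [FF]
  rw [intervalIntegral.integral_neg] at h
  rw [h0, h1, sub_zero] at h
  linarith

lemma summable_inv_sq : Summable (fun n : ℕ => 1 / ((2*n+1):ℝ)^2) := by
  have h : Summable (fun n : ℕ => 1 / ((n+1):ℝ)^2) := by
    have := Real.summable_one_div_nat_pow.mpr (le_refl 2)
    exact_mod_cast (summable_nat_add_iff 1).mpr this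
  apply h.of_nonneg_of_le (fun n => by positivity)
  intro n
  have hn : (0:ℝ) ≤ n := Nat.cast_nonneg n
  apply one_div_le_one_div_of_le (by positivity)
  nlinarith

lemma norm_integral_pow_log (n : ℕ) :
    ∫ x in Ioc (0:ℝ) 1, ‖(-1:ℝ)^n * (x ^ (2*n) * Real.log x)‖ = 1 / ((2*n+1):ℝ)^2 := by
  have heq : ∀ x ∈ Ioc (0:ℝ) 1, ‖(-1:ℝ)^n * (x ^ (2*n) * Real.log x)‖
      = -(x ^ (2*n) * Real.log x) := by
    intro x hx
    have h1 : Real.log x ≤ 0 := Real.log_nonpos hx.1.le hx.2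
    have h2 : (0:ℝ) ≤ x ^ (2*n) := pow_nonneg hx.1.le _
    rw [norm_mul, norm_pow, norm_neg, norm_one, one_pow, one_mul, Real.norm_eq_abs,
      abs_of_nonpos (by nlinarith)]
  rw [setIntegral_congr_fun measurableSet_Ioc heq, ← intervalIntegral.integral_of_le zero_le_one,
    intervalIntegral.integral_neg, integral_pow_log]
  ring

lemma tsum_eq_neg_integral :
    (∑' n : ℕ, (-1:ℝ)^n / (2*n+1)^2) = -∫ x in (0:ℝ)..1, Real.log x / (1 + x^2) := by
  have hint : ∀ n : ℕ, Integrable (fun x : ℝ => (-1:ℝ)^n * (x ^ (2*n) * Real.log x))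
      (volume.restrict (Ioc 0 1)) := by
    intro n
    exact ((integrableOn_neg_pow_log n).neg.congr
      (Filter.Eventually.of_forall fun x => by
        show -(-(x ^ (2*n) * Real.log x)) = _; ring)).const_mul _
  have hsum : Summable fun n : ℕ =>
      ∫ x in Ioc (0:ℝ) 1, ‖(-1:ℝ)^n * (x ^ (2*n) * Real.log x)‖ := by
    exact summable_inv_sq.congr fun n => (norm_integral_pow_log n).symm
  have key := MeasureTheory.integral_tsum_of_summable_integral_norm hint hsum
  have hL : (∑' n : ℕ, ∫ x in Ioc (0:ℝ) 1, (-1:ℝ)^n * (x ^ (2*n) * Real.log x))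
      = -∑' n : ℕ, (-1:ℝ)^n / (2*n+1)^2 := by
    rw [← tsum_neg]
    congr 1; funext n
    rw [MeasureTheory.integral_const_mul, ← intervalIntegral.integral_of_le zero_le_one,
      integral_pow_log]
    push_cast; ring
  have hR : (∫ x in Ioc (0:ℝ) 1, ∑' n : ℕ, (-1:ℝ)^n * (x ^ (2*n) * Real.log x))
      = ∫ x in Ioc (0:ℝ) 1, Real.log x / (1 + x^2) := by
    apply setIntegral_congr_fun measurableSet_Ioc
    intro x hx
    rcases eq_or_lt_of_le hx.2 with h1 | h1
    · simp [h1]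
    · show (∑' n : ℕ, (-1:ℝ)^n * (x ^ (2*n) * Real.log x)) = Real.log x / (1 + x^2)
      have habs : |(-(x^2))| < 1 := by
        rw [abs_neg, abs_of_nonneg (by positivity)]
        nlinarith [hx.1]
      have hgeo := tsum_geometric_of_abs_lt_one habs
      have : ∀ n : ℕ, (-1:ℝ)^n * (x ^ (2*n) * Real.log x) = (-(x^2))^n * Real.log x := by
        intro n; rw [neg_pow, pow_mul]; ring
      rw [tsum_congr this, tsum_mul_right, hgeo]
      rw [sub_neg_eq_add]
      rw [div_eq_mul_inv, mul_comm]
  rw [hL, hR] at key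
  rw [← intervalIntegral.integral_of_le zero_le_one] at key
  linarith

noncomputable def sub_f : ℝ → ℝ := fun x => (1 - x) / (1 + x)
noncomputable def sub_f' : ℝ → ℝ := fun x => -2 / (1 + x)^2

lemma sub_f_cont : ContinuousOn sub_f (Icc 0 1) := by
  apply ContinuousOn.div (by fun_prop) (by fun_prop)
  intro x hx; have := hx.1; intro h; linarith [h]

lemma sub_f'_cont : ContinuousOn sub_f' (Icc 0 1) := by
  apply ContinuousOn.div (by fun_prop) (by fun_prop)
  intro x hx; have := hx.1; positivity

lemma sub_f_deriv {x : ℝ} (hx : 0 ≤ x) : HasDerivAt sub_f (sub_f' x) x := by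
  have h1x : (1:ℝ) + x ≠ 0 := by positivity
  have h := ((hasDerivAt_id x).const_sub 1).div ((hasDerivAt_id x).const_add 1) h1x
  refine h.congr_deriv ?_
  simp only [sub_f', id]
  field_simp
  ring

lemma sub_f_maps_Icc : ∀ x ∈ Icc (0:ℝ) 1, sub_f x ∈ Icc (0:ℝ) 1 := by
  intro x hx
  have h1 : (0:ℝ) < 1 + x := by linarith [hx.1]
  simp only [sub_f]
  constructor
  · apply div_nonneg (by linarith [hx.2]) h1.le
  · rw [div_le_one h1]; linarith [hx.1]

lemma sub_f_maps_Ioo : ∀ x ∈ Ioo (0:ℝ) 1, sub_f x ∈ Ioo (0:ℝ) 1 := by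
  intro x hx
  have h1 : (0:ℝ) < 1 + x := by linarith [hx.1]
  simp only [sub_f]
  constructor
  · apply div_pos (by linarith [hx.2]) h1
  · rw [div_lt_one h1]; linarith [hx.1]

lemma sub_f_zero : sub_f 0 = 1 := by norm_num [sub_f]
lemma sub_f_one : sub_f 1 = 0 := by norm_num [sub_f]

-- The J integral : ∫ log(1+x)/(1+x²) = π/8 log 2
lemma g2_cont : ContinuousOn (fun u : ℝ => Real.log (1+u) / (1+u^2)) (Icc 0 1) := by
  apply ContinuousOn.div
  · apply ContinuousOn.log (by fun_prop)
    intro u hu; have := hu.1; intro h; linarith [h]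
  · fun_prop
  · intro u hu; positivity

lemma integral_log_one_add :
    ∫ x in (0:ℝ)..1, Real.log (1+x) / (1+x^2) = π/8 * Real.log 2 := by
  have harctan : ∫ x in (0:ℝ)..1, 1 / (1+x^2) = π/4 := by
    rw [integral_one_div_one_add_sq]
    simp [Real.arctan_one, Real.arctan_zero]
  have key := intervalIntegral.integral_comp_smul_deriv''
    (f := sub_f) (f' := sub_f') (g := fun u : ℝ => Real.log (1+u) / (1+u^2))
    (a := 0) (b := 1)
    (by rw [uIcc_of_le zero_le_one]; exact sub_f_cont)
    (by
      intro x hx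
      rw [min_eq_left zero_le_one, max_eq_right zero_le_one] at hx
      exact (sub_f_deriv hx.1.le).hasDerivWithinAt)
    (by rw [uIcc_of_le zero_le_one]; exact sub_f'_cont)
    (by
      rw [uIcc_of_le zero_le_one]
      apply g2_cont.mono
      rintro _ ⟨x, hx, rfl⟩
      exact sub_f_maps_Icc x hx)
  rw [sub_f_zero, sub_f_one] at key
  have hptwise : ∀ x ∈ Icc (0:ℝ) 1, sub_f' x • (fun u : ℝ => Real.log (1+u) / (1+u^2)) (sub_f x)
      = -(Real.log 2 * (1/(1+x^2))) + Real.log (1+x) / (1+x^2) := by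
    intro x hx
    have h1x : (0:ℝ) < 1 + x := by linarith [hx.1]
    have hA : 1 + sub_f x = 2 / (1+x) := by
      simp only [sub_f]; field_simp; norm_num
    have hB : 1 + (sub_f x)^2 = 2*(1+x^2) / (1+x)^2 := by
      simp only [sub_f]; field_simp; ring
    have hx2 : (0:ℝ) < 1 + x^2 := by positivity
    simp only [smul_eq_mul, sub_f', hA, hB]
    rw [Real.log_div two_ne_zero h1x.ne']
    field_simp
    ring
  rw [intervalIntegral.integral_congr (g := fun x =>
      -(Real.log 2 * (1/(1+x^2))) + Real.log (1+x) / (1+x^2))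
      (by rw [uIcc_of_le zero_le_one]; exact fun x hx => hptwise x hx)] at key
  have hi1 : IntervalIntegrable (fun x : ℝ => -(Real.log 2 * (1/(1+x^2)))) volume 0 1 := by
    apply ContinuousOn.intervalIntegrable
    apply ContinuousOn.neg
    apply ContinuousOn.mul continuousOn_const
    apply ContinuousOn.div continuousOn_const (by fun_prop)
    intro x _; positivity
  have hi2 : IntervalIntegrable (fun x : ℝ => Real.log (1+x) / (1+x^2)) volume 0 1 := by
    apply ContinuousOn.intervalIntegrable
    rw [uIcc_of_le zero_le_one]; exact g2_cont
  rw [intervalIntegral.integral_add hi1 hi2, intervalIntegral.integral_neg,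
    intervalIntegral.integral_const_mul, harctan] at key
  rw [intervalIntegral.integral_symm (a := 0) (b := 1)] at key
  beta_reduce at key
  linarith

lemma intervalIntegrable_log01 : IntervalIntegrable Real.log volume 0 1 := by
  rw [intervalIntegrable_iff_integrableOn_Ioc_of_le zero_le_one]
  exact (integrableOn_neg_pow_log 0).neg.congr
    (Filter.Eventually.of_forall fun x => by
      show -(-(x ^ (2*0) * Real.log x)) = _; ring)

lemma intervalIntegrable_log_one_sub :
    IntervalIntegrable (fun x : ℝ => Real.log (1 - x)) volume 0 1 := by
  have h := intervalIntegrable_log01.comp_sub_left 1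
  simpa using h.symm

lemma measurable_g : Measurable (fun u : ℝ => Real.log (1 - u^2) / (1 + u^2)) := by
  apply Measurable.div
  · exact Real.measurable_log.comp (by fun_prop)
  · fun_prop

lemma integrableOn_g : IntegrableOn (fun u : ℝ => Real.log (1 - u^2) / (1 + u^2)) (Icc 0 1) := by
  have hbound : IntegrableOn (fun u : ℝ => ‖Real.log (1-u)‖ + ‖Real.log (1+u)‖) (Icc 0 1) := by
    rw [← intervalIntegrable_iff_integrableOn_Icc_of_le zero_le_one]
    apply IntervalIntegrable.add
    · exact intervalIntegrable_log_one_sub.norm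
    · apply ContinuousOn.intervalIntegrable
      apply ContinuousOn.norm
      apply ContinuousOn.log (by fun_prop)
      intro u hu
      rw [uIcc_of_le zero_le_one] at hu
      have := hu.1; intro h; linarith [h]
  apply Integrable.mono hbound measurable_g.aestronglyMeasurable.restrict
  rw [ae_restrict_iff' measurableSet_Icc]
  apply Filter.Eventually.of_forall
  intro u hu
  have hu0 := hu.1
  have hu1 := hu.2
  have h2 : (1:ℝ) ≤ 1 + u^2 := by nlinarith
  rcases eq_or_lt_of_le hu1 with h|h
  · subst h
    norm_num
  · have ha : (0:ℝ) < 1 - u := by linarith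
    have hb : (0:ℝ) < 1 + u := by linarith
    have hsplit : Real.log (1 - u^2) = Real.log (1-u) + Real.log (1+u) := by
      rw [show (1:ℝ) - u^2 = (1-u)*(1+u) by ring, Real.log_mul ha.ne' hb.ne']
    rw [Real.norm_eq_abs, hsplit, abs_div]
    rw [abs_of_nonneg (by positivity : (0:ℝ) ≤ 1 + u^2)]
    have h3 : |Real.log (1-u) + Real.log (1+u)| / (1+u^2) ≤ |Real.log (1-u) + Real.log (1+u)| := by
      apply div_le_self (abs_nonneg _) h2
    apply h3.trans
    rw [Real.norm_eq_abs, Real.norm_eq_abs, Real.norm_eq_abs,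
      abs_of_nonneg (by positivity : (0:ℝ) ≤ |Real.log (1-u)| + |Real.log (1+u)|)]
    exact abs_add_le _ _

lemma intervalIntegrable_log_div :
    IntervalIntegrable (fun x : ℝ => Real.log x / (1 + x^2)) volume 0 1 := by
  rw [intervalIntegrable_iff_integrableOn_Ioc_of_le zero_le_one]
  apply Integrable.mono
    ((intervalIntegrable_iff_integrableOn_Ioc_of_le zero_le_one).mp intervalIntegrable_log01.norm)
  · apply Measurable.aestronglyMeasurable
    apply Measurable.div Real.measurable_log (by fun_prop)
  · apply Filter.Eventually.of_forall
    intro x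
    have h2 : (1:ℝ) ≤ 1 + x^2 := by nlinarith [sq_nonneg x]
    rw [Real.norm_eq_abs, Real.norm_eq_abs, Real.norm_eq_abs, abs_abs, abs_div,
      abs_of_nonneg (by positivity : (0:ℝ) ≤ 1 + x^2)]
    apply div_le_self (abs_nonneg _) h2

lemma main_ptwise : ∀ x ∈ Ioc (0:ℝ) 1,
    sub_f' x • (fun u : ℝ => Real.log (1 - u^2) / (1 + u^2)) (sub_f x)
      = -((2*Real.log 2 + Real.log x - 2*Real.log (1+x)) / (1 + x^2)) := by
  intro x hx
  have hx0 := hx.1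
  have h1x : (0:ℝ) < 1 + x := by linarith
  have hA : 1 - (sub_f x)^2 = 4*x / (1+x)^2 := by
    simp only [sub_f]; field_simp; ring
  have hB : 1 + (sub_f x)^2 = 2*(1+x^2) / (1+x)^2 := by
    simp only [sub_f]; field_simp; ring
  have hx2 : (0:ℝ) < 1 + x^2 := by positivity
  simp only [smul_eq_mul, sub_f', hA, hB]
  have hlog : Real.log (4*x / (1+x)^2)
      = 2*Real.log 2 + Real.log x - 2*Real.log (1+x) := by
    rw [Real.log_div (by positivity) (by positivity), Real.log_mul (by norm_num) hx0.ne',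
      Real.log_pow, show (4:ℝ) = 2^2 by norm_num, Real.log_pow]
    push_cast; ring
  rw [hlog]
  field_simp

lemma integrableOn_main :
    IntegrableOn (fun x => sub_f' x •
      (fun u : ℝ => Real.log (1 - u^2) / (1 + u^2)) (sub_f x)) (Icc 0 1) := by
  have hh : IntervalIntegrable (fun x : ℝ =>
      -((2*Real.log 2 + Real.log x - 2*Real.log (1+x)) / (1 + x^2))) volume 0 1 := by
    have e : (fun x : ℝ => -((2*Real.log 2 + Real.log x - 2*Real.log (1+x)) / (1 + x^2)))
        = fun x : ℝ => -(2*Real.log 2 * (1/(1+x^2))) - Real.log x / (1+x^2)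
            + 2*(Real.log (1+x) / (1+x^2)) := by
      funext x
      have hx2 : (0:ℝ) < 1 + x^2 := by positivity
      field_simp
      ring
    rw [e]
    apply IntervalIntegrable.add
    apply IntervalIntegrable.sub
    · apply ContinuousOn.intervalIntegrable
      apply ContinuousOn.neg
      apply ContinuousOn.mul continuousOn_const
      apply ContinuousOn.div continuousOn_const (by fun_prop)
      intro x _; positivity
    · exact intervalIntegrable_log_div
    · apply IntervalIntegrable.const_mul
      apply ContinuousOn.intervalIntegrable
      rw [uIcc_of_le zero_le_one]; exact g2_cont
  rw [integrableOn_Icc_iff_integrableOn_Ioc]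
  apply Integrable.congr
    ((intervalIntegrable_iff_integrableOn_Ioc_of_le zero_le_one).mp hh)
  filter_upwards [ae_restrict_mem measurableSet_Ioc] with x hx
  exact (main_ptwise x hx).symm

theorem stmt8 :
    (∫ x in (0:ℝ)..1, Real.log (1 - x^2) / (1 + x^2))
    = (π/4) * Real.log 2 - (∑' n : ℕ, (-1:ℝ)^n / (2*n+1)^2) := by
  have harctan : ∫ x in (0:ℝ)..1, 1 / (1+x^2) = π/4 := by
    rw [integral_one_div_one_add_sq]
    simp [Real.arctan_one, Real.arctan_zero]
  have key := intervalIntegral.integral_comp_smul_deriv'''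
    (f := sub_f) (f' := sub_f') (g := fun u : ℝ => Real.log (1 - u^2) / (1 + u^2))
    (a := 0) (b := 1)
    (by rw [uIcc_of_le zero_le_one]; exact sub_f_cont)
    (by
      intro x hx
      rw [min_eq_left zero_le_one, max_eq_right zero_le_one] at hx
      exact (sub_f_deriv hx.1.le).hasDerivWithinAt)
    (by
      rw [min_eq_left zero_le_one, max_eq_right zero_le_one]
      apply ContinuousOn.mono (s := Ioo 0 1)
      · apply ContinuousOn.div
        · apply ContinuousOn.log (by fun_prop)
          intro u hu
          have := hu.1; have := hu.2
          intro h; nlinarith [h]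
        · fun_prop
        · intro u hu; positivity
      · rintro _ ⟨x, hx, rfl⟩
        exact sub_f_maps_Ioo x hx)
    (by
      rw [uIcc_of_le zero_le_one]
      apply integrableOn_g.mono_set
      rintro _ ⟨x, hx, rfl⟩
      exact sub_f_maps_Icc x hx)
    (by rw [uIcc_of_le zero_le_one]; exact integrableOn_main)
  rw [sub_f_zero, sub_f_one] at key
  rw [intervalIntegral.integral_congr_ae (g := fun x : ℝ =>
      -((2*Real.log 2 + Real.log x - 2*Real.log (1+x)) / (1 + x^2)))
      (by
        apply Filter.Eventually.of_forall
        intro x hx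
        rw [uIoc_of_le zero_le_one] at hx
        exact main_ptwise x hx)] at key
  rw [intervalIntegral.integral_symm (a := 0) (b := 1)] at key
  have e : (fun x : ℝ => -((2*Real.log 2 + Real.log x - 2*Real.log (1+x)) / (1 + x^2)))
      = fun x : ℝ => -(2*Real.log 2 * (1/(1+x^2))) - Real.log x / (1+x^2)
          + 2*(Real.log (1+x) / (1+x^2)) := by
    funext x
    have hx2 : (0:ℝ) < 1 + x^2 := by positivity
    field_simp
    ring
  rw [e] at key
  have hi1 : IntervalIntegrable (fun x : ℝ => -(2*Real.log 2 * (1/(1+x^2)))) volume 0 1 := by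
    apply ContinuousOn.intervalIntegrable
    apply ContinuousOn.neg
    apply ContinuousOn.mul continuousOn_const
    apply ContinuousOn.div continuousOn_const (by fun_prop)
    intro x _; positivity
  have hi2 : IntervalIntegrable (fun x : ℝ => 2*(Real.log (1+x) / (1+x^2))) volume 0 1 := by
    apply IntervalIntegrable.const_mul
    apply ContinuousOn.intervalIntegrable
    rw [uIcc_of_le zero_le_one]; exact g2_cont
  rw [intervalIntegral.integral_add (hi1.sub intervalIntegrable_log_div) hi2,
    intervalIntegral.integral_sub hi1 intervalIntegrable_log_div,
    intervalIntegral.integral_neg, intervalIntegral.integral_const_mul,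
    intervalIntegral.integral_const_mul, harctan, integral_log_one_add] at key
  have htsum := tsum_eq_neg_integral
  beta_reduce at key
  linarith
end

section
/- Catalan's constant G satisfies π·G = 8·∫₀¹ ∫₀^{θ₃} ∫₀^{θ₂} dθ₁ dθ₂ dθ₃ / ((1−θ₁²)(1+θ₂²)(1+θ₃²)) + (7/4)·ζ(3). -/
open Real MeasureTheory intervalIntegral Filter Topology Set

noncomputable section

namespace Stmt10

/-- artanh -/
def A (x : ℝ) : ℝ := (Real.log (1+x) - Real.log (1-x))/2

def Complex.abs : AbsoluteValue ℂ ℝ where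
  toFun := fun z => ‖z‖
  map_mul' := norm_mul
  nonneg' := norm_nonneg
  eq_zero' := fun _ => norm_eq_zero
  add_le' := norm_add_le

lemma Complex.abs_apply (z : ℂ) : Complex.abs z = ‖z‖ := rfl

lemma Complex.norm_eq_abs (z : ℂ) : ‖z‖ = Complex.abs z := rfl

lemma Complex.abs_ofReal (r : ℝ) : Complex.abs (r : ℂ) = |r| := by
  rw [Complex.abs_apply, Complex.norm_real, Real.norm_eq_abs]

lemma Complex.abs_exp_ofReal_mul_I (x : ℝ) :
    Complex.abs (Complex.exp (x * Complex.I)) = 1 := by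
  rw [Complex.abs_apply, _root_.Complex.norm_exp_ofReal_mul_I]

lemma Complex.sq_abs (z : ℂ) : Complex.abs z ^ 2 = Complex.normSq z := by
  rw [Complex.abs_apply, _root_.Complex.sq_norm]

lemma Complex.re_le_abs (z : ℂ) : z.re ≤ Complex.abs z := _root_.Complex.re_le_norm z

lemma Complex.continuous_abs : Continuous Complex.abs := continuous_norm

def Gc : ℝ := ∑' n : ℕ, (-1:ℝ)^n / (2*n+1)^2
def S3 : ℝ := ∑' n : ℕ, (1:ℝ) / (2*n+1)^3

lemma A_zero : A 0 = 0 := by simp [A]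

lemma hasDerivAt_A {x : ℝ} (h1 : -1 < x) (h2 : x < 1) :
    HasDerivAt A (1/(1-x^2)) x := by
  have d1 : HasDerivAt (fun y : ℝ => Real.log (1+y)) (1/(1+x)) x := by
    have := ((hasDerivAt_id x).const_add 1).log (by simp only [id]; intro h; linarith)
    simpa using this
  have d2 : HasDerivAt (fun y : ℝ => Real.log (1-y)) (-(1/(1-x))) x := by
    have := ((hasDerivAt_id x).const_sub 1).log (by simp only [id]; intro h; linarith)
    simpa [neg_div, div_eq_mul_inv] using this
  have := (d1.sub d2).div_const 2
  refine this.congr_deriv ?_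
  have e1 : (1:ℝ) + x ≠ 0 := by linarith
  have e2 : (1:ℝ) - x ≠ 0 := by linarith
  have e3 : (1:ℝ) - x^2 ≠ 0 := by nlinarith
  field_simp
  ring

lemma contA : ContinuousOn A (Ioo (-1:ℝ) 1) := by
  intro x hx
  exact ((hasDerivAt_A hx.1 hx.2).continuousAt).continuousWithinAt

lemma measurable_A : Measurable A :=
  ((Real.measurable_log.comp (measurable_const.add measurable_id)).sub
    (Real.measurable_log.comp (measurable_const.sub measurable_id))).div_const 2

lemma inner_eval {x : ℝ} (h0 : 0 ≤ x) (h1 : x < 1) :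
    ∫ t in (0:ℝ)..x, 1/(1-t^2) = A x := by
  have key : ∫ t in (0:ℝ)..x, 1/(1-t^2) = A x - A 0 := by
    apply intervalIntegral.integral_eq_sub_of_hasDerivAt
    · intro t ht
      rw [uIcc_of_le h0] at ht
      exact hasDerivAt_A (by linarith [ht.1]) (lt_of_le_of_lt ht.2 h1)
    · apply ContinuousOn.intervalIntegrable
      apply ContinuousOn.div continuousOn_const (by fun_prop)
      intro t ht
      rw [uIcc_of_le h0] at ht
      have : t^2 < 1 := by nlinarith [ht.1, lt_of_le_of_lt ht.2 h1]
      nlinarith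
  rw [key, A_zero, sub_zero]

/-! ### Integrability lemmas -/

lemma log_abs_bound {x : ℝ} (h0 : 0 < x) (h1 : x ≤ 1) :
    ‖Real.log x‖ ≤ 2 * x ^ (-(1:ℝ)/2) := by
  have hx : Real.log x ≤ 0 := Real.log_nonpos (le_of_lt h0) h1
  rw [Real.norm_eq_abs, abs_of_nonpos hx]
  have hp : (0:ℝ) < x ^ (-(1:ℝ)/2) := Real.rpow_pos_of_pos h0 _
  have h2 : Real.log (x ^ (-(1:ℝ)/2)) ≤ x ^ (-(1:ℝ)/2) - 1 :=
    Real.log_le_sub_one_of_pos hp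
  rw [Real.log_rpow h0] at h2
  linarith

lemma tan_le_one {θ : ℝ} (h0 : 0 ≤ θ) (h : θ ≤ π/4) : Real.tan θ ≤ 1 := by
  rcases eq_or_lt_of_le h with h' | h'
  · rw [h', Real.tan_pi_div_four]
  · have := Real.tan_lt_tan_of_nonneg_of_lt_pi_div_two h0
      (by linarith [Real.pi_pos] : π/4 < π/2) h'
    rw [Real.tan_pi_div_four] at this
    exact this.le

lemma intInt_log : IntervalIntegrable Real.log volume 0 1 := by
  rw [intervalIntegrable_iff_integrableOn_Ioc_of_le zero_le_one]
  have hg : IntegrableOn (fun x : ℝ => 2 * x ^ (-(1:ℝ)/2)) (Ioc 0 1) volume := by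
    rw [← intervalIntegrable_iff_integrableOn_Ioc_of_le zero_le_one]
    exact (intervalIntegrable_rpow' (by norm_num)).const_mul 2
  apply Integrable.mono' hg Real.measurable_log.aestronglyMeasurable
  rw [ae_restrict_iff' measurableSet_Ioc]
  filter_upwards with x hx
  exact log_abs_bound hx.1 hx.2

lemma intInt_log' {b : ℝ} (hb : 0 ≤ b) (hb1 : b ≤ 1) :
    IntervalIntegrable Real.log volume 0 b := by
  apply intInt_log.mono_set
  rw [uIcc_of_le hb, uIcc_of_le zero_le_one]
  exact Icc_subset_Icc le_rfl hb1

lemma intInt_log_one_sub : IntervalIntegrable (fun x => Real.log (1-x)) volume 0 1 := by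
  have := intInt_log.comp_sub_left 1
  simpa using this.symm

lemma pi4_pos : (0:ℝ) < π/4 := by linarith [Real.pi_pos]

lemma pi4_le_one : (π/4 : ℝ) ≤ 1 := by linarith [Real.pi_le_four]

lemma measurable_logtan : Measurable (fun θ => Real.log (Real.tan θ)) := by
  apply Real.measurable_log.comp
  rw [show Real.tan = fun x => Real.sin x / Real.cos x from funext Real.tan_eq_sin_div_cos]
  exact Real.measurable_sin.div Real.measurable_cos

lemma intInt_logtan : IntervalIntegrable (fun θ => Real.log (Real.tan θ)) volume 0 (π/4) := by
  rw [intervalIntegrable_iff_integrableOn_Ioc_of_le pi4_pos.le]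
  have hg : IntegrableOn (fun θ : ℝ => ‖Real.log θ‖) (Ioc 0 (π/4)) volume := by
    rw [← intervalIntegrable_iff_integrableOn_Ioc_of_le pi4_pos.le]
    exact (intInt_log' pi4_pos.le pi4_le_one).abs
  apply Integrable.mono' hg measurable_logtan.aestronglyMeasurable
  rw [ae_restrict_iff' measurableSet_Ioc]
  filter_upwards with θ hθ
  have hθ2 : θ < π/2 := by linarith [hθ.2, Real.pi_pos]
  have ht1 : θ ≤ Real.tan θ := (Real.lt_tan hθ.1 hθ2).le
  have ht2 : Real.tan θ ≤ 1 := tan_le_one hθ.1.le hθ.2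
  have htp : 0 < Real.tan θ := lt_of_lt_of_le hθ.1 ht1
  have hl1 : Real.log θ ≤ Real.log (Real.tan θ) := Real.log_le_log hθ.1 ht1
  have hl2 : Real.log (Real.tan θ) ≤ 0 := Real.log_nonpos htp.le ht2
  have hl3 : Real.log θ ≤ 0 := Real.log_nonpos hθ.1.le (hθ.2.trans pi4_le_one)
  rw [Real.norm_eq_abs, Real.norm_eq_abs, abs_of_nonpos hl2, abs_of_nonpos hl3]
  linarith

lemma A_bound {x : ℝ} (h0 : 0 ≤ x) (h1 : x < 1) :
    |A x| ≤ 1 + ‖Real.log (1-x)‖ := by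
  have e1 : (0:ℝ) ≤ Real.log (1+x) := Real.log_nonneg (by linarith)
  have e2 : Real.log (1+x) ≤ x := by
    have := Real.log_le_sub_one_of_pos (show (0:ℝ) < 1+x by linarith)
    linarith
  have e3 : Real.log (1-x) ≤ 0 := Real.log_nonpos (by linarith) (by linarith)
  rw [Real.norm_eq_abs, abs_of_nonpos e3]
  unfold A
  rw [abs_div, abs_of_nonneg (by linarith : (0:ℝ) ≤ Real.log (1+x) - Real.log (1-x))]
  rw [abs_of_nonneg (by norm_num : (0:ℝ) ≤ 2)]
  rw [div_le_iff₀ (by norm_num : (0:ℝ) < 2)]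
  linarith

lemma helper_intInt_mul_A {u : ℝ → ℝ} (hu : Measurable u)
    (hub : ∀ x, |u x| ≤ 2) :
    IntervalIntegrable (fun x => u x * (A x/(1+x^2))) volume 0 1 := by
  rw [intervalIntegrable_iff_integrableOn_Ioc_of_le zero_le_one,
    integrableOn_Ioc_iff_integrableOn_Ioo]
  have hg : IntegrableOn (fun x : ℝ => 2 * (1 + ‖Real.log (1-x)‖)) (Ioo 0 1) volume := by
    rw [← integrableOn_Ioc_iff_integrableOn_Ioo,
      ← intervalIntegrable_iff_integrableOn_Ioc_of_le zero_le_one]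
    have h1 : IntervalIntegrable (fun x : ℝ => 1 + ‖Real.log (1-x)‖) volume 0 1 :=
      intervalIntegrable_const.add intInt_log_one_sub.abs
    exact h1.const_mul 2
  have hm : Measurable (fun x => u x * (A x/(1+x^2))) := by
    apply hu.mul
    apply measurable_A.div
    exact (measurable_const.add (measurable_id.pow_const 2))
  apply Integrable.mono' hg hm.aestronglyMeasurable
  rw [ae_restrict_iff' measurableSet_Ioo]
  filter_upwards with x hx
  have hx2 : (1:ℝ) ≤ 1 + x^2 := by nlinarith [hx.1.le]
  have hA : |A x/(1+x^2)| ≤ 1 + ‖Real.log (1-x)‖ := by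
    rw [abs_div, abs_of_nonneg (by linarith : (0:ℝ) ≤ 1+x^2)]
    calc |A x|/(1+x^2) ≤ |A x|/1 := by
            apply div_le_div_of_nonneg_left (abs_nonneg _) one_pos hx2
      _ = |A x| := by ring
      _ ≤ _ := A_bound hx.1.le hx.2
  rw [Real.norm_eq_abs, abs_mul]
  calc |u x| * |A x/(1+x^2)| ≤ 2 * (1 + ‖Real.log (1-x)‖) := by
        apply mul_le_mul (hub x) hA (abs_nonneg _) (by norm_num)
  -- done

lemma intInt_A_div : IntervalIntegrable (fun x => A x/(1+x^2)) volume 0 1 := by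
  have := helper_intInt_mul_A (u := fun _ => 1) measurable_const (by norm_num)
  simpa using this

lemma intInt_atanA_div :
    IntervalIntegrable (fun x => Real.arctan x * (A x/(1+x^2))) volume 0 1 := by
  apply helper_intInt_mul_A measurable_arctan
  intro x
  have h1 := Real.arctan_lt_pi_div_two x
  have h2 := Real.neg_pi_div_two_lt_arctan x
  have := Real.pi_le_four
  rw [abs_le]; constructor <;> linarith

/-! ### W, the primitive -/

def W (t : ℝ) : ℝ := ∫ s in (0:ℝ)..t, A s/(1+s^2)

lemma contW : ContinuousOn W (Icc 0 1) := by
  have h : IntegrableOn (fun s => A s/(1+s^2)) (uIcc (0:ℝ) 1) volume := by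
    rw [uIcc_of_le zero_le_one, ← intervalIntegrable_iff_integrableOn_Icc_of_le zero_le_one]
    exact intInt_A_div
  show ContinuousOn (fun t => ∫ s in (0:ℝ)..t, A s/(1+s^2)) (Icc 0 1)
  simpa [uIcc_of_le (zero_le_one' ℝ)] using
    intervalIntegral.continuousOn_primitive_interval h

/-! ### The master θ-world lemma -/

lemma hasSum_L {r θ : ℝ} (h0 : 0 ≤ r) (h1 : r < 1) :
    HasSum (fun k : ℕ => r^(2*k+1) * Real.cos ((4*k+2)*θ) / (2*k+1))
      ((Real.log (Complex.abs (1 + (r:ℂ) * Complex.exp ((2*θ:ℝ) * Complex.I)))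
        - Real.log (Complex.abs (1 - (r:ℂ) * Complex.exp ((2*θ:ℝ) * Complex.I))))/2) := by
  set z : ℂ := (r:ℂ) * Complex.exp ((2*θ:ℝ) * Complex.I) with hz
  have hnorm : ‖z‖ < 1 := by
    rw [hz, norm_mul, Complex.norm_eq_abs, Complex.norm_eq_abs,
      Complex.abs_ofReal, Complex.abs_exp_ofReal_mul_I, abs_of_nonneg h0, mul_one]
    exact h1
  have h1s : HasSum (fun n : ℕ => z^n/n) (-Complex.log (1-z)) :=
    Complex.hasSum_taylorSeries_neg_log hnorm
  have h2s : HasSum (fun n : ℕ => (-z)^n/n) (-Complex.log (1+z)) := by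
    have := Complex.hasSum_taylorSeries_neg_log (z := -z) (by simpa using hnorm)
    simpa [sub_neg_eq_add] using this
  have h3 : HasSum (fun n : ℕ => z^n/n - (-z)^n/n)
      (Complex.log (1+z) - Complex.log (1-z)) := by
    have := h1s.sub h2s
    rw [show Complex.log (1+z) - Complex.log (1-z) = -Complex.log (1-z) - -Complex.log (1+z) by ring]
    exact this
  have hinj : Function.Injective (fun k : ℕ => 2*k+1) := by
    intro a b hab
    simp only at hab
    omega
  have hvan : ∀ n ∉ Set.range (fun k : ℕ => 2*k+1),
      (fun n : ℕ => z^n/n - (-z)^n/n) n = 0 := by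
    intro n hn
    have he : Even n := by
      rcases Nat.even_or_odd n with h | h
      · exact h
      · exfalso
        obtain ⟨m, hm⟩ := h
        exact hn ⟨m, show 2*m+1 = n by omega⟩
    simp only
    rw [he.neg_pow, sub_self]
  have hodd : HasSum ((fun n : ℕ => z^n/n - (-z)^n/n) ∘ (fun k : ℕ => 2*k+1))
      (Complex.log (1+z) - Complex.log (1-z)) :=
    (hinj.hasSum_iff hvan).mpr h3
  have hfun : ((fun n : ℕ => z^n/n - (-z)^n/n) ∘ (fun k : ℕ => 2*k+1))
      = fun k : ℕ => 2 * (z^(2*k+1)/((2*k+1 : ℕ):ℂ)) := by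
    funext k
    have hoddk : Odd (2*k+1) := ⟨k, by ring⟩
    simp only [Function.comp_apply]
    rw [hoddk.neg_pow]
    ring
  rw [hfun] at hodd
  have hhalf : HasSum (fun k : ℕ => z^(2*k+1)/((2*k+1 : ℕ):ℂ))
      ((Complex.log (1+z) - Complex.log (1-z))/2) := by
    have := hodd.div_const 2
    have e : (fun k : ℕ => 2 * (z^(2*k+1)/((2*k+1 : ℕ):ℂ)) / 2)
        = fun k : ℕ => z^(2*k+1)/((2*k+1 : ℕ):ℂ) := by
      funext k; ring
    rw [e] at this
    exact this
  have hre := Complex.hasSum_re hhalf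
  have hval : ((Complex.log (1+z) - Complex.log (1-z))/2).re
      = (Real.log (Complex.abs (1+z)) - Real.log (Complex.abs (1-z)))/2 := by
    rw [show ((2:ℂ)) = ((2:ℝ):ℂ) by norm_num, Complex.div_ofReal_re,
      Complex.sub_re, Complex.log_re, Complex.log_re]
    rfl
  have hfun2 : (fun k : ℕ => (z^(2*k+1)/((2*k+1 : ℕ):ℂ)).re)
      = fun k : ℕ => r^(2*k+1) * Real.cos ((4*k+2)*θ) / (2*k+1) := by
    funext k
    have hzpow : z^(2*k+1)
        = ((r^(2*k+1) : ℝ):ℂ) * Complex.exp (((4*k+2)*θ : ℝ) * Complex.I) := by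
      rw [hz, mul_pow, ← Complex.ofReal_pow, ← Complex.exp_nat_mul]
      congr 2
      push_cast
      ring
    rw [hzpow]
    rw [show ((2*k+1 : ℕ):ℂ) = (((2*k+1 : ℕ):ℝ):ℂ) by push_cast; ring]
    rw [mul_div_right_comm, ← Complex.ofReal_div, Complex.re_ofReal_mul,
      Complex.exp_ofReal_mul_I_re]
    push_cast
    ring
  rw [hfun2] at hre
  rw [← hval]
  exact hre
lemma abs_one_add_exp {θ : ℝ} (h0 : 0 ≤ θ) (h2 : θ ≤ π/2) :
    Complex.abs (1 + Complex.exp ((2*θ:ℝ) * Complex.I)) = 2 * Real.cos θ := by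
  have hre : (1 + Complex.exp ((2*θ:ℝ) * Complex.I)).re = 1 + Real.cos (2*θ) := by
    rw [Complex.add_re, Complex.one_re, Complex.exp_ofReal_mul_I_re]
  have him : (1 + Complex.exp ((2*θ:ℝ) * Complex.I)).im = Real.sin (2*θ) := by
    rw [Complex.add_im, Complex.one_im, Complex.exp_ofReal_mul_I_im, zero_add]
  have hsq : (Complex.abs (1 + Complex.exp ((2*θ:ℝ) * Complex.I)))^2
      = (2 * Real.cos θ)^2 := by
    rw [Complex.sq_abs, Complex.normSq_apply, hre, him]
    linear_combination Real.sin_sq_add_cos_sq (2*θ) + 2*Real.cos_two_mul θ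
  have hc : 0 ≤ Real.cos θ := Real.cos_nonneg_of_mem_Icc ⟨by linarith, h2⟩
  exact (pow_left_inj₀ (AbsoluteValue.nonneg _ _) (by linarith) two_ne_zero).mp hsq

lemma abs_one_sub_exp {θ : ℝ} (h0 : 0 ≤ θ) (h2 : θ ≤ π/2) :
    Complex.abs (1 - Complex.exp ((2*θ:ℝ) * Complex.I)) = 2 * Real.sin θ := by
  have hre : (1 - Complex.exp ((2*θ:ℝ) * Complex.I)).re = 1 - Real.cos (2*θ) := by
    rw [Complex.sub_re, Complex.one_re, Complex.exp_ofReal_mul_I_re]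
  have him : (1 - Complex.exp ((2*θ:ℝ) * Complex.I)).im = -Real.sin (2*θ) := by
    rw [Complex.sub_im, Complex.one_im, Complex.exp_ofReal_mul_I_im, zero_sub]
  have hsq : (Complex.abs (1 - Complex.exp ((2*θ:ℝ) * Complex.I)))^2
      = (2 * Real.sin θ)^2 := by
    rw [Complex.sq_abs, Complex.normSq_apply, hre, him]
    linear_combination Real.sin_sq_add_cos_sq (2*θ) - 2*Real.cos_two_mul θ
      - 4*Real.sin_sq_add_cos_sq θ
  have hc : 0 ≤ Real.sin θ := Real.sin_nonneg_of_nonneg_of_le_pi h0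
    (by linarith [Real.pi_pos])
  exact (pow_left_inj₀ (AbsoluteValue.nonneg _ _) (by linarith) two_ne_zero).mp hsq

lemma abs_one_sub_ge {r θ : ℝ} (hr : 1/2 ≤ r) (hr1 : r ≤ 1) (hs : 0 ≤ Real.sin θ) :
    Real.sin θ ≤ Complex.abs (1 - (r:ℂ) * Complex.exp ((2*θ:ℝ) * Complex.I)) := by
  set w : ℂ := 1 - (r:ℂ) * Complex.exp ((2*θ:ℝ) * Complex.I) with hw
  have hre : w.re = 1 - r * Real.cos (2*θ) := by
    rw [hw, Complex.sub_re, Complex.one_re, Complex.re_ofReal_mul,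
      Complex.exp_ofReal_mul_I_re]
  have him : w.im = -(r * Real.sin (2*θ)) := by
    rw [hw, Complex.sub_im, Complex.one_im, Complex.im_ofReal_mul,
      Complex.exp_ofReal_mul_I_im, zero_sub]
  have hsq : (Real.sin θ)^2 ≤ (Complex.abs w)^2 := by
    rw [Complex.sq_abs, Complex.normSq_apply, hre, him]
    have h1 : (1 - r*Real.cos (2*θ))*(1 - r*Real.cos (2*θ))
        + -(r*Real.sin (2*θ)) * -(r*Real.sin (2*θ))
        = 1 - 2*r*Real.cos (2*θ) + r^2 := by
      linear_combination (r^2)*Real.sin_sq_add_cos_sq (2*θ)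
    rw [h1]
    have h2 : Real.cos (2*θ) = 1 - 2*Real.sin θ^2 := by
      have := Real.cos_two_mul θ
      have := Real.sin_sq_add_cos_sq θ
      linarith
    rw [h2]
    nlinarith [sq_nonneg (1-r), mul_nonneg (by linarith : (0:ℝ) ≤ 4*r-2)
      (sq_nonneg (Real.sin θ))]
  nlinarith [AbsoluteValue.nonneg Complex.abs w, hs, hsq]

lemma abs_one_add_ge {r θ : ℝ} (hr : 0 ≤ r) (hc : 0 ≤ Real.cos (2*θ)) :
    1 ≤ Complex.abs (1 + (r:ℂ) * Complex.exp ((2*θ:ℝ) * Complex.I)) := by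
  set w : ℂ := 1 + (r:ℂ) * Complex.exp ((2*θ:ℝ) * Complex.I) with hw
  have hre : w.re = 1 + r * Real.cos (2*θ) := by
    rw [hw, Complex.add_re, Complex.one_re, Complex.re_ofReal_mul,
      Complex.exp_ofReal_mul_I_re]
  calc (1:ℝ) ≤ w.re := by rw [hre]; nlinarith [mul_nonneg hr hc]
    _ ≤ Complex.abs w := Complex.re_le_abs w

lemma abs_one_le {r : ℝ} (hr : 0 ≤ r) (hr1 : r ≤ 1) (θ : ℝ) (sgn : ℂ) (hsgn : Complex.abs sgn = 1) :
    Complex.abs (1 + sgn * ((r:ℂ) * Complex.exp ((2*θ:ℝ) * Complex.I))) ≤ 2 := by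
  calc Complex.abs (1 + sgn * ((r:ℂ) * Complex.exp ((2*θ:ℝ) * Complex.I)))
      ≤ Complex.abs 1 + Complex.abs (sgn * ((r:ℂ) * Complex.exp ((2*θ:ℝ) * Complex.I))) :=
        AbsoluteValue.add_le _ _ _
    _ ≤ 2 := by
        rw [map_one, map_mul, hsgn, one_mul, map_mul, Complex.abs_ofReal,
          Complex.abs_exp_ofReal_mul_I, abs_of_nonneg hr, mul_one]
        linarith

def Lr (r θ : ℝ) : ℝ :=
  (Real.log (Complex.abs (1 + (r:ℂ) * Complex.exp ((2*θ:ℝ) * Complex.I)))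
    - Real.log (Complex.abs (1 - (r:ℂ) * Complex.exp ((2*θ:ℝ) * Complex.I))))/2

lemma continuous_absaux (r : ℝ) (sgn : ℂ) :
    Continuous (fun θ : ℝ => Complex.abs (1 + sgn * ((r:ℂ) * Complex.exp ((2*θ:ℝ) * Complex.I)))) := by
  apply Complex.continuous_abs.comp
  apply continuous_const.add
  apply continuous_const.mul
  apply continuous_const.mul
  apply Complex.continuous_exp.comp
  apply Continuous.mul _ continuous_const
  exact Complex.continuous_ofReal.comp (continuous_const.mul continuous_id)

lemma measurable_Lr (r : ℝ) : Measurable (Lr r) := by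
  apply Measurable.div_const
  apply Measurable.sub
  · apply Real.measurable_log.comp
    have := continuous_absaux r 1
    simp only [one_mul] at this
    exact this.measurable
  · apply Real.measurable_log.comp
    have := continuous_absaux r (-1)
    have h2 : (fun θ : ℝ => Complex.abs (1 + (-1) * ((r:ℂ) * Complex.exp ((2*θ:ℝ) * Complex.I))))
        = (fun θ : ℝ => Complex.abs (1 - (r:ℂ) * Complex.exp ((2*θ:ℝ) * Complex.I))) := by
      funext θ; ring_nf
    rw [h2] at this
    exact this.measurable

lemma Lr_bound {r θ : ℝ} (hr : 1/2 ≤ r) (hr1 : r < 1) (hθ : θ ∈ Ioc (0:ℝ) (π/4)) :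
    |Lr r θ| ≤ 2 + |Real.log θ| := by
  have hθ0 := hθ.1
  have hθ4 := hθ.2
  have hpi := Real.pi_pos
  have hpi4 := Real.pi_le_four
  have hr0 : (0:ℝ) ≤ r := by linarith
  have hcos : 0 ≤ Real.cos (2*θ) := Real.cos_nonneg_of_mem_Icc
    ⟨by linarith, by linarith⟩
  have hsin : 0 < Real.sin θ := Real.sin_pos_of_pos_of_lt_pi hθ0 (by linarith)
  -- bounds for the (1+z) part
  have h1a : 1 ≤ Complex.abs (1 + (r:ℂ) * Complex.exp ((2*θ:ℝ) * Complex.I)) :=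
    abs_one_add_ge hr0 hcos
  have h1b : Complex.abs (1 + (r:ℂ) * Complex.exp ((2*θ:ℝ) * Complex.I)) ≤ 2 := by
    have := abs_one_le hr0 hr1.le θ 1 (map_one Complex.abs)
    simpa using this
  have hl1 : 0 ≤ Real.log (Complex.abs (1 + (r:ℂ) * Complex.exp ((2*θ:ℝ) * Complex.I))) :=
    Real.log_nonneg h1a
  have hl1' : Real.log (Complex.abs (1 + (r:ℂ) * Complex.exp ((2*θ:ℝ) * Complex.I))) ≤ 1 := by
    calc Real.log (Complex.abs (1 + (r:ℂ) * Complex.exp ((2*θ:ℝ) * Complex.I)))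
        ≤ Real.log 2 := Real.log_le_log (by linarith) h1b
      _ ≤ 1 := by linarith [Real.log_two_lt_d9]
  -- bounds for the (1-z) part
  have h2a : Real.sin θ ≤ Complex.abs (1 - (r:ℂ) * Complex.exp ((2*θ:ℝ) * Complex.I)) :=
    abs_one_sub_ge hr hr1.le hsin.le
  have h2b : Complex.abs (1 - (r:ℂ) * Complex.exp ((2*θ:ℝ) * Complex.I)) ≤ 2 := by
    have := abs_one_le hr0 hr1.le θ (-1) (by simp)
    have h2 : (1:ℂ) + (-1) * ((r:ℂ) * Complex.exp ((2*θ:ℝ) * Complex.I))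
        = 1 - (r:ℂ) * Complex.exp ((2*θ:ℝ) * Complex.I) := by ring
    rwa [h2] at this
  have hth2 : θ/2 ≤ Real.sin θ := by
    have hms := Real.mul_le_sin (le_of_lt hθ0) (by linarith)
    have h24 : (1:ℝ)/2 ≤ 2/π := by
      rw [div_le_div_iff₀ (by norm_num) hpi]
      linarith
    nlinarith
  have hl2 : Real.log θ - 1 ≤ Real.log (Complex.abs (1 - (r:ℂ) * Complex.exp ((2*θ:ℝ) * Complex.I))) := by
    have hs1 : Real.log (θ/2) ≤ Real.log (Real.sin θ) :=
      Real.log_le_log (by linarith) hth2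
    have hs2 : Real.log (Real.sin θ) ≤ Real.log (Complex.abs (1 - (r:ℂ) * Complex.exp ((2*θ:ℝ) * Complex.I))) :=
      Real.log_le_log hsin h2a
    have hs3 : Real.log (θ/2) = Real.log θ - Real.log 2 :=
      Real.log_div (ne_of_gt hθ0) (by norm_num)
    have := Real.log_two_lt_d9
    linarith
  have hl2' : Real.log (Complex.abs (1 - (r:ℂ) * Complex.exp ((2*θ:ℝ) * Complex.I))) ≤ 1 := by
    calc Real.log (Complex.abs (1 - (r:ℂ) * Complex.exp ((2*θ:ℝ) * Complex.I)))
        ≤ Real.log 2 := by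
          apply Real.log_le_log _ h2b
          calc (0:ℝ) < Real.sin θ := hsin
            _ ≤ _ := h2a
      _ ≤ 1 := by linarith [Real.log_two_lt_d9]
  have hlogθ : Real.log θ ≤ 0 := Real.log_nonpos hθ0.le (by linarith)
  rw [abs_le, abs_of_nonpos hlogθ]
  unfold Lr
  constructor <;> linarith

lemma master {w : ℝ → ℝ} (hw : Continuous w) (hb : ∀ θ ∈ Icc (0:ℝ) (π/4), |w θ| ≤ 1)
    {c : ℕ → ℝ} (hc : ∀ k : ℕ, ∫ θ in (0:ℝ)..(π/4), w θ * Real.cos ((4*k+2)*θ) = c k)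
    (hs : Summable fun k : ℕ => |c k| / (2*k+1)) :
    ∫ θ in (0:ℝ)..(π/4), w θ * (-Real.log (Real.tan θ)/2) = ∑' k : ℕ, c k / (2*k+1) := by
  have hpi := Real.pi_pos
  have hpi4 := Real.pi_le_four
  set l : Filter ℝ := 𝓝[<] (1:ℝ) with hl
  have hmem : Ioo (1/2 : ℝ) 1 ∈ l := Ioo_mem_nhdsLT (by norm_num)
  -- Step 1 : left side convergence
  have step1 : Tendsto (fun r => ∫ θ in (0:ℝ)..(π/4), w θ * Lr r θ) l
      (𝓝 (∫ θ in (0:ℝ)..(π/4), w θ * (-Real.log (Real.tan θ)/2))) := by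
    apply intervalIntegral.tendsto_integral_filter_of_dominated_convergence
      (bound := fun θ => 2 + |Real.log θ|)
    · filter_upwards with r
      exact ((hw.measurable.mul (measurable_Lr r)).aestronglyMeasurable).restrict
    · filter_upwards [hmem] with r hr
      filter_upwards with θ hθ
      rw [Set.uIoc_of_le pi4_pos.le] at hθ
      have h1 : |w θ| ≤ 1 := hb θ ⟨hθ.1.le, hθ.2⟩
      have h2 : |Lr r θ| ≤ 2 + |Real.log θ| := Lr_bound hr.1.le hr.2 hθ
      rw [Real.norm_eq_abs, abs_mul]
      calc |w θ| * |Lr r θ| ≤ 1 * (2 + |Real.log θ|) := by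
            apply mul_le_mul h1 h2 (abs_nonneg _) zero_le_one
        _ = 2 + |Real.log θ| := one_mul _
    · exact intervalIntegrable_const.add (intInt_log' pi4_pos.le pi4_le_one).abs
    · filter_upwards with θ hθ
      rw [Set.uIoc_of_le pi4_pos.le] at hθ
      have hθ0 := hθ.1
      have hθ4 := hθ.2
      have hsin : 0 < Real.sin θ := Real.sin_pos_of_pos_of_lt_pi hθ0 (by linarith)
      have hcos : 0 < Real.cos θ := Real.cos_pos_of_mem_Ioo ⟨by linarith, by linarith⟩
      have habs1 : Complex.abs (1 + (1:ℝ) * Complex.exp ((2*θ:ℝ) * Complex.I)) = 2 * Real.cos θ := by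
        rw [show ((1:ℝ):ℂ) = 1 by norm_num, one_mul]
        exact abs_one_add_exp hθ0.le (by linarith)
      have habs2 : Complex.abs (1 - (1:ℝ) * Complex.exp ((2*θ:ℝ) * Complex.I)) = 2 * Real.sin θ := by
        rw [show ((1:ℝ):ℂ) = 1 by norm_num, one_mul]
        exact abs_one_sub_exp hθ0.le (by linarith)
      have hL1 : Lr 1 θ = -Real.log (Real.tan θ)/2 := by
        unfold Lr
        rw [show ((1:ℝ):ℂ) * Complex.exp ((2*θ:ℝ) * Complex.I)
              = Complex.exp ((2*θ:ℝ) * Complex.I) by norm_num]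
        rw [show ((1:ℝ):ℂ) = 1 by norm_num] at habs1 habs2
        rw [one_mul] at habs1 habs2
        rw [habs1, habs2]
        rw [Real.log_mul (by norm_num) (ne_of_gt hcos),
          Real.log_mul (by norm_num) (ne_of_gt hsin),
          Real.tan_eq_sin_div_cos, Real.log_div (ne_of_gt hsin) (ne_of_gt hcos)]
        ring
      rw [← hL1]
      have hca : ContinuousAt (fun r : ℝ => Lr r θ) 1 := by
        unfold Lr
        apply ContinuousAt.div_const
        have hfc : ∀ sgn : ℂ, Continuous (fun r : ℝ =>
            Complex.abs (1 + sgn * ((r:ℂ) * Complex.exp ((2*θ:ℝ) * Complex.I)))) := by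
          intro sgn
          apply Complex.continuous_abs.comp
          exact continuous_const.add (continuous_const.mul
            (Complex.continuous_ofReal.mul continuous_const))
        apply ContinuousAt.sub
        · apply (Real.continuousAt_log _).comp
          · have := (hfc 1).continuousAt (x := 1)
            simpa using this
          · rw [habs1]
            positivity
        · apply (Real.continuousAt_log _).comp
          · have h2 : (fun r : ℝ => Complex.abs (1 - (r:ℂ) * Complex.exp ((2*θ:ℝ) * Complex.I)))
                = (fun r : ℝ => Complex.abs (1 + (-1) * ((r:ℂ) * Complex.exp ((2*θ:ℝ) * Complex.I)))) := by
              funext r; ring_nf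
            rw [h2]
            exact (hfc (-1)).continuousAt
          · rw [habs2]
            positivity
      exact (hca.tendsto.const_mul (w θ)).mono_left nhdsWithin_le_nhds
  -- Step 2 : for r < 1 the integral is a series
  have step2 : ∀ r ∈ Ioo (1/2 : ℝ) 1,
      ∫ θ in (0:ℝ)..(π/4), w θ * Lr r θ = ∑' k : ℕ, r^(2*k+1) * c k / (2*k+1) := by
    intro r hr
    have hr0 : (0:ℝ) ≤ r := by linarith [hr.1]
    have hr1 : r < 1 := hr.2
    set F : ℕ → ℝ → ℝ := fun k θ => w θ * (r^(2*k+1) * Real.cos ((4*k+2)*θ) / (2*k+1))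
      with hF
    have hFcont : ∀ k, Continuous (F k) := by
      intro k
      apply hw.mul
      apply Continuous.div_const
      exact continuous_const.mul (Real.continuous_cos.comp
        (continuous_const.mul continuous_id))
    have hFint : ∀ k, Integrable (F k) (volume.restrict (Ioc (0:ℝ) (π/4))) := by
      intro k
      exact ((hFcont k).integrableOn_Ioc).integrable
    have hFbd : ∀ k, ∀ θ ∈ Ioc (0:ℝ) (π/4), ‖F k θ‖ ≤ r^(2*k+1) := by
      intro k θ hθ
      rw [hF]
      simp only [Real.norm_eq_abs, abs_mul]
      have h1 : |w θ| ≤ 1 := hb θ ⟨hθ.1.le, hθ.2⟩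
      have h2 : |r^(2*k+1) * Real.cos ((4*k+2)*θ) / (2*k+1)| ≤ r^(2*k+1) := by
        rw [abs_div, abs_mul]
        have hc1 : |Real.cos ((4*k+2)*θ)| ≤ 1 := Real.abs_cos_le_one _
        have hd : (1:ℝ) ≤ |(2*(k:ℝ)+1)| := by
          rw [abs_of_pos (by positivity)]
          linarith [Nat.cast_nonneg (α := ℝ) k]
        have hnum : |r^(2*k+1)| * |Real.cos ((4*k+2)*θ)| ≤ r^(2*k+1) := by
          rw [abs_of_nonneg (by positivity)]
          nlinarith [abs_nonneg (Real.cos ((4*k+2)*θ)), pow_nonneg hr0 (2*k+1)]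
        calc |r^(2*k+1)| * |Real.cos ((4*k+2)*θ)| / |2*(k:ℝ)+1|
            ≤ |r^(2*k+1)| * |Real.cos ((4*k+2)*θ)| / 1 := by
              apply div_le_div_of_nonneg_left _ one_pos hd
              positivity
          _ = |r^(2*k+1)| * |Real.cos ((4*k+2)*θ)| := by ring
          _ ≤ r^(2*k+1) := hnum
      calc |w θ| * |r^(2*k+1) * Real.cos ((4*k+2)*θ) / (2*(k:ℝ)+1)|
          ≤ 1 * (r^(2*k+1)) := mul_le_mul h1 h2 (abs_nonneg _) zero_le_one
        _ = r^(2*k+1) := one_mul _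
    have hgeo : Summable (fun k : ℕ => (π/4) * r^(2*k+1)) := by
      have hsq : r^2 < 1 := by nlinarith [hr.1]
      have h := summable_geometric_of_lt_one (by positivity : (0:ℝ) ≤ r^2) hsq
      apply (h.mul_left ((π/4) * r)).congr
      intro k
      rw [show 2*k+1 = 2*k+1 from rfl, pow_add, pow_mul, pow_one]
      ring
    have hsumnorm : Summable (fun k : ℕ => ∫ θ in Ioc (0:ℝ) (π/4), ‖F k θ‖) := by
      apply Summable.of_nonneg_of_le (fun k => integral_nonneg (fun θ => norm_nonneg _))
        (fun k => ?_) hgeo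
      calc (∫ θ in Ioc (0:ℝ) (π/4), ‖F k θ‖)
          ≤ ∫ θ in Ioc (0:ℝ) (π/4), r^(2*k+1) := by
            apply setIntegral_mono_on (hFint k).norm ((integrableOn_const_iff).mpr
              (Or.inr (by rw [Real.volume_Ioc]; exact ENNReal.ofReal_lt_top)))
              measurableSet_Ioc
            intro θ hθ
            exact hFbd k θ hθ
        _ = (π/4) * r^(2*k+1) := by
            rw [setIntegral_const, Real.volume_real_Ioc, smul_eq_mul]
            rw [max_eq_left (by linarith : (0:ℝ) ≤ π/4 - 0)]
            ring_nf
    have hinterchange := MeasureTheory.integral_tsum_of_summable_integral_norm hFint hsumnorm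
    have htsum_eq : ∀ θ : ℝ, ∑' k : ℕ, F k θ = w θ * Lr r θ := by
      intro θ
      have := (hasSum_L hr0 hr1 (θ := θ)).mul_left (w θ)
      exact this.tsum_eq
    have hterm : ∀ k : ℕ, ∫ θ in Ioc (0:ℝ) (π/4), F k θ = r^(2*k+1) * c k / (2*k+1) := by
      intro k
      have h1 : ∀ θ : ℝ, F k θ = (r^(2*k+1)/(2*k+1)) * (w θ * Real.cos ((4*k+2)*θ)) := by
        intro θ
        rw [hF]
        ring
      simp_rw [h1]
      rw [MeasureTheory.integral_const_mul]
      rw [← intervalIntegral.integral_of_le pi4_pos.le, hc k]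
      ring
    rw [intervalIntegral.integral_of_le pi4_pos.le]
    have hcongr : ∫ θ in Ioc (0:ℝ) (π/4), w θ * Lr r θ
        = ∫ θ in Ioc (0:ℝ) (π/4), ∑' k : ℕ, F k θ :=
      MeasureTheory.integral_congr_ae (Filter.Eventually.of_forall
        (fun θ => (htsum_eq θ).symm))
    rw [hcongr, ← hinterchange]
    exact tsum_congr hterm
  -- Step 3 : right side convergence
  have step3 : Tendsto (fun r : ℝ => ∑' k : ℕ, r^(2*k+1) * c k / (2*k+1)) l
      (𝓝 (∑' k : ℕ, c k / (2*k+1))) := by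
    apply tendsto_tsum_of_dominated_convergence hs
    · intro k
      have h1 : Tendsto (fun r : ℝ => r^(2*k+1)) l (𝓝 1) := by
        have := ((continuous_pow (2*k+1)).tendsto (1:ℝ)).mono_left
          (nhdsWithin_le_nhds (s := Iio (1:ℝ)))
        simpa using this
      have h2 := h1.mul_const (c k / (2*(k:ℝ)+1))
      rw [one_mul] at h2
      apply h2.congr
      intro r
      ring
    · filter_upwards [hmem] with r hr k
      rw [Real.norm_eq_abs, abs_div, abs_mul]
      have h1 : |r^(2*k+1)| ≤ 1 := by
        rw [abs_pow, abs_of_pos (by linarith [hr.1] : (0:ℝ) < r)]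
        exact pow_le_one₀ (by linarith [hr.1]) hr.2.le
      have h2 : |(2*(k:ℝ)+1)| = 2*(k:ℝ)+1 := abs_of_pos (by positivity)
      rw [h2]
      apply div_le_div_of_nonneg_right ?_ (by positivity)
      calc |r^(2*k+1)| * |c k| ≤ 1 * |c k| :=
            mul_le_mul_of_nonneg_right h1 (abs_nonneg _)
        _ = |c k| := one_mul _
  -- combine
  have step1' : Tendsto (fun r : ℝ => ∑' k : ℕ, r^(2*k+1) * c k / (2*k+1)) l
      (𝓝 (∫ θ in (0:ℝ)..(π/4), w θ * (-Real.log (Real.tan θ)/2))) := by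
    apply step1.congr'
    filter_upwards [hmem] with r hr
    exact step2 r hr
  exact tendsto_nhds_unique step1' step3

/-! ### cosine integrals -/

lemma cos_nat_pi (k : ℕ) : Real.cos (k * π) = (-1)^k := by
  induction k with
  | zero => simp
  | succ n ih =>
      have : ((n+1 : ℕ) : ℝ) * π = n * π + π := by push_cast; ring
      rw [this, Real.cos_add_pi, ih]
      ring

lemma sin_mk (k : ℕ) : Real.sin ((4*k+2)*(π/4)) = (-1)^k := by
  have h : ((4*(k:ℝ)+2)*(π/4)) = k * π + π/2 := by ring
  rw [h, Real.sin_add, Real.cos_pi_div_two, Real.sin_pi_div_two, cos_nat_pi]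
  simp

lemma cos_mk (k : ℕ) : Real.cos ((4*k+2)*(π/4)) = 0 := by
  have h : ((4*(k:ℝ)+2)*(π/4)) = k * π + π/2 := by ring
  rw [h, Real.cos_add, Real.cos_pi_div_two, Real.sin_pi_div_two, Real.sin_nat_mul_pi]
  ring

lemma integral_cos_mul {m : ℝ} (hm : m ≠ 0) (b : ℝ) :
    ∫ θ in (0:ℝ)..b, Real.cos (m*θ) = Real.sin (m*b)/m := by
  have h : ∀ θ ∈ uIcc (0:ℝ) b, HasDerivAt (fun t => Real.sin (m*t)/m) (Real.cos (m*θ)) θ := by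
    intro θ _
    have h1 : HasDerivAt (fun t : ℝ => m*t) m θ := by
      simpa using (hasDerivAt_id θ).const_mul m
    have h2 := ((Real.hasDerivAt_sin (m*θ)).comp θ h1).div_const m
    refine h2.congr_deriv ?_
    field_simp
  rw [intervalIntegral.integral_eq_sub_of_hasDerivAt h
    ((Real.continuous_cos.comp (continuous_const.mul continuous_id)).continuousOn.intervalIntegrable)]
  simp

lemma integral_id_mul_cos {m : ℝ} (hm : m ≠ 0) (b : ℝ) :
    ∫ θ in (0:ℝ)..b, θ * Real.cos (m*θ)
      = b * Real.sin (m*b)/m + Real.cos (m*b)/m^2 - 1/m^2 := by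
  have h : ∀ θ ∈ uIcc (0:ℝ) b,
      HasDerivAt (fun t => t * Real.sin (m*t)/m + Real.cos (m*t)/m^2)
        (θ * Real.cos (m*θ)) θ := by
    intro θ _
    have hlin : HasDerivAt (fun t : ℝ => m*t) m θ := by
      simpa using (hasDerivAt_id θ).const_mul m
    have h1 : HasDerivAt (fun t : ℝ => t * Real.sin (m*t))
        (1 * Real.sin (m*θ) + θ * (Real.cos (m*θ) * m)) θ :=
      (hasDerivAt_id θ).mul ((Real.hasDerivAt_sin (m*θ)).comp θ hlin)
    have h2 : HasDerivAt (fun t : ℝ => Real.cos (m*t)) (-Real.sin (m*θ) * m) θ :=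
      (Real.hasDerivAt_cos (m*θ)).comp θ hlin
    have h3 := (h1.div_const m).add (h2.div_const (m^2))
    refine h3.congr_deriv ?_
    field_simp
    ring
  have hcont : IntervalIntegrable (fun θ => θ * Real.cos (m*θ)) volume 0 b :=
    (continuous_id.mul (Real.continuous_cos.comp
      (continuous_const.mul continuous_id))).continuousOn.intervalIntegrable
  rw [intervalIntegral.integral_eq_sub_of_hasDerivAt h hcont]
  simp

lemma mk_pos (k : ℕ) : (0:ℝ) < 4*k+2 := by positivity

lemma cos_int1 (k : ℕ) :
    ∫ θ in (0:ℝ)..(π/4), Real.cos ((4*k+2)*θ) = (-1)^k/(4*k+2) := by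
  rw [integral_cos_mul (mk_pos k).ne' (π/4), sin_mk]

lemma cos_int2 (k : ℕ) :
    ∫ θ in (0:ℝ)..(π/4), θ * Real.cos ((4*k+2)*θ)
      = π/4 * (-1)^k/(4*k+2) - 1/(4*k+2)^2 := by
  rw [integral_id_mul_cos (mk_pos k).ne' (π/4), sin_mk, cos_mk]
  ring

/-! ### summability helpers -/

lemma summable_base : Summable (fun k : ℕ => (((k:ℝ)+1)^2)⁻¹) := by
  have h := Real.summable_one_div_nat_pow.mpr (le_refl 2)
  have h2 := (summable_nat_add_iff 1).mpr h
  simpa [one_div] using h2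

lemma summable_osq : Summable (fun k : ℕ => ((2*(k:ℝ)+1)^2)⁻¹) := by
  apply Summable.of_nonneg_of_le (fun k => by positivity) (fun k => ?_) summable_base
  apply inv_anti₀ (by positivity)
  have : ((k:ℝ)+1) ≤ 2*k+1 := by push_cast; linarith [Nat.cast_nonneg (α := ℝ) k]
  nlinarith [Nat.cast_nonneg (α := ℝ) k]

lemma summable_ocube : Summable (fun k : ℕ => ((2*(k:ℝ)+1)^3)⁻¹) := by
  apply Summable.of_nonneg_of_le (fun k => by positivity) (fun k => ?_) summable_base
  apply inv_anti₀ (by positivity)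
  have hk : (0:ℝ) ≤ (k:ℝ) := Nat.cast_nonneg k
  have h1 : ((k:ℝ)+1)^2 ≤ (2*k+1)^2 := by nlinarith
  have h2 : ((2*(k:ℝ)+1))^2 ≤ (2*k+1)^3 := by nlinarith
  linarith

/-! ### the two values -/

lemma ae_ne (a : ℝ) : ∀ᵐ x : ℝ, x ≠ a := by
  rw [ae_iff]
  have h : {x : ℝ | ¬ x ≠ a} = {a} := by
    ext x; simp
  rw [h]
  exact Real.volume_singleton

lemma val1 : ∫ θ in (0:ℝ)..(π/4), (-Real.log (Real.tan θ)/2) = Gc/2 := by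
  have h := master (w := fun _ => 1) continuous_const
    (fun θ _ => by norm_num)
    (c := fun k => (-1)^k/(4*k+2))
    (fun k => by simpa using cos_int1 k)
    (by
      apply Summable.of_nonneg_of_le (fun k => by positivity) (fun k => ?_)
        (summable_osq.mul_left 2⁻¹)
      apply le_of_eq
      have h42 : (0:ℝ) < 4*(k:ℝ)+2 := by positivity
      rw [abs_div, abs_pow, abs_neg, abs_one, one_pow, abs_of_pos h42]
      have h21 : (0:ℝ) < 2*(k:ℝ)+1 := by positivity
      field_simp
      ring)
  simp only [one_mul] at h
  rw [h]
  have hterm : ∀ k : ℕ, ((-1:ℝ))^k/(4*k+2)/(2*k+1) = 2⁻¹ * ((-1)^k/(2*k+1)^2) := by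
    intro k
    have : (0:ℝ) < 2*(k:ℝ)+1 := by positivity
    field_simp
    ring
  rw [tsum_congr hterm, tsum_mul_left]
  rw [Gc]
  rw [inv_eq_one_div]
  ring

lemma summable_alt_sq : Summable (fun k : ℕ => ((-1:ℝ))^k/(2*k+1)^2) := by
  apply Summable.of_abs
  apply summable_osq.congr
  intro k
  rw [abs_div, abs_pow, abs_neg, abs_one, one_pow, abs_of_pos (by positivity : (0:ℝ) < (2*(k:ℝ)+1)^2)]
  rw [one_div]

lemma val2 : ∫ θ in (0:ℝ)..(π/4), θ * (-Real.log (Real.tan θ)/2) = π/8 * Gc - S3/4 := by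
  have hpi := Real.pi_pos
  have hpi4 := Real.pi_le_four
  have h := master (w := fun θ => θ) continuous_id
    (fun θ hθ => by
      rw [abs_of_nonneg hθ.1]
      calc θ ≤ π/4 := hθ.2
        _ ≤ 1 := pi4_le_one)
    (c := fun k => π/4 * (-1)^k/(4*k+2) - 1/(4*k+2)^2)
    (fun k => cos_int2 k)
    (by
      apply Summable.of_nonneg_of_le (fun k => by positivity) (fun k => ?_) summable_osq
      have hk : (0:ℝ) ≤ (k:ℝ) := Nat.cast_nonneg k
      have h42 : (0:ℝ) < 4*(k:ℝ)+2 := by positivity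
      have h21 : (0:ℝ) < 2*(k:ℝ)+1 := by positivity
      have e1 : |π/4 * (-1:ℝ)^k/(4*k+2)| ≤ 1/(4*k+2) := by
        rw [abs_div, abs_mul, abs_pow, abs_neg, abs_one, one_pow, mul_one,
          abs_of_pos h42, abs_of_pos (by positivity : (0:ℝ) < π/4)]
        gcongr
        linarith
      have e2 : |1/((4*(k:ℝ)+2)^2)| ≤ 1/(4*(k:ℝ)+2) := by
        rw [abs_of_pos (by positivity)]
        apply one_div_le_one_div_of_le h42
        nlinarith
      have e3 : |π/4 * (-1:ℝ)^k/(4*(k:ℝ)+2) - 1/(4*(k:ℝ)+2)^2| ≤ 1/(2*(k:ℝ)+1) := by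
        calc |π/4 * (-1:ℝ)^k/(4*(k:ℝ)+2) - 1/(4*(k:ℝ)+2)^2|
            ≤ |π/4 * (-1:ℝ)^k/(4*(k:ℝ)+2)| + |1/((4*(k:ℝ)+2)^2)| := abs_sub _ _
          _ ≤ 1/(4*(k:ℝ)+2) + 1/(4*(k:ℝ)+2) := add_le_add e1 e2
          _ = 1/(2*(k:ℝ)+1) := by field_simp; ring
      calc |π/4 * (-1:ℝ)^k/(4*(k:ℝ)+2) - 1/(4*(k:ℝ)+2)^2| / (2*(k:ℝ)+1)
          ≤ (1/(2*(k:ℝ)+1)) / (2*(k:ℝ)+1) := by gcongr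
        _ = ((2*(k:ℝ)+1)^2)⁻¹ := by field_simp)
  rw [h]
  have hterm : ∀ k : ℕ, (π/4 * (-1:ℝ)^k/(4*k+2) - 1/(4*k+2)^2)/(2*k+1)
      = π/8 * ((-1)^k/(2*k+1)^2) - 4⁻¹ * (1/(2*k+1)^3) := by
    intro k
    have h21 : (0:ℝ) < 2*(k:ℝ)+1 := by positivity
    have h42 : (4*(k:ℝ)+2) = 2*(2*k+1) := by ring
    field_simp
    ring
  have hsum2 : Summable (fun k : ℕ => (1:ℝ)/(2*k+1)^3) := by
    apply summable_ocube.congr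
    intro k
    rw [one_div]
  rw [tsum_congr hterm, Summable.tsum_sub (summable_alt_sq.mul_left _) (hsum2.mul_left _),
    tsum_mul_left, tsum_mul_left]
  rw [Gc, S3]
  rw [inv_eq_one_div]
  ring

/-! ### substitution x = tan θ -/

lemma cos_pos_of_mem {b θ : ℝ} (hb4 : b < π/2) (hθ : θ ∈ uIcc (0:ℝ) b) (hb0 : 0 ≤ b) :
    0 < Real.cos θ := by
  rw [uIcc_of_le hb0] at hθ
  apply Real.cos_pos_of_mem_Ioo
  constructor
  · linarith [hθ.1, Real.pi_pos]
  · linarith [hθ.2]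

lemma subst_tan {g : ℝ → ℝ} (hg : ContinuousOn g (Ico 0 1))
    (hi : IntervalIntegrable (fun x => g x / (1+x^2)) volume 0 1)
    (hi' : IntervalIntegrable (fun θ => g (Real.tan θ)) volume 0 (π/4)) :
    ∫ x in (0:ℝ)..1, g x/(1+x^2) = ∫ θ in (0:ℝ)..(π/4), g (Real.tan θ) := by
  have hpi := Real.pi_pos
  set l : Filter ℝ := 𝓝[<] (π/4) with hldef
  have hmem : Ioo (0:ℝ) (π/4) ∈ l := Ioo_mem_nhdsLT pi4_pos
  have key : ∀ b ∈ Ioo (0:ℝ) (π/4),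
      ∫ θ in (0:ℝ)..b, g (Real.tan θ) = ∫ x in (0:ℝ)..(Real.tan b), g x/(1+x^2) := by
    intro b hb
    have hb0 : (0:ℝ) ≤ b := hb.1.le
    have hb2 : b < π/2 := by linarith [hb.2]
    have hcos : ∀ θ ∈ uIcc (0:ℝ) b, 0 < Real.cos θ :=
      fun θ hθ => cos_pos_of_mem hb2 hθ hb0
    have htan_mem : ∀ θ ∈ uIcc (0:ℝ) b, Real.tan θ ∈ Ico (0:ℝ) 1 := by
      intro θ hθ
      rw [uIcc_of_le hb0] at hθ
      constructor
      · exact Real.tan_nonneg_of_nonneg_of_le_pi_div_two hθ.1 (by linarith [hθ.2])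
      · calc Real.tan θ ≤ Real.tan b := by
              rcases eq_or_lt_of_le hθ.2 with h | h
              · rw [h]
              · exact (Real.tan_lt_tan_of_nonneg_of_lt_pi_div_two hθ.1 hb2 h).le
          _ < 1 := by
              have := Real.tan_lt_tan_of_nonneg_of_lt_pi_div_two hb0
                (by linarith [Real.pi_pos] : π/4 < π/2) hb.2
              rwa [Real.tan_pi_div_four] at this
    have himg : Real.tan '' (uIcc (0:ℝ) b) ⊆ Ico (0:ℝ) 1 := by
      rintro x ⟨θ, hθ, rfl⟩
      exact htan_mem θ hθ
    have hgg : ContinuousOn (fun x => g x/(1+x^2)) (Ico (0:ℝ) 1) := by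
      apply hg.div ((continuous_const.add (continuous_pow 2)).continuousOn)
      intro x hx
      show (1:ℝ) + x^2 ≠ 0
      nlinarith [hx.1]
    have hIoo : ∀ θ ∈ Ioo ((0:ℝ) ⊓ b) ((0:ℝ) ⊔ b),
        HasDerivWithinAt Real.tan (1/Real.cos θ^2) (Ioi θ) θ := by
      intro θ hθ
      simp only [min_eq_left hb0, max_eq_right hb0] at hθ
      apply (Real.hasDerivAt_tan _).hasDerivWithinAt
      apply ne_of_gt
      apply hcos θ
      rw [uIcc_of_le hb0]
      exact ⟨hθ.1.le, hθ.2.le⟩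
    have hsub := intervalIntegral.integral_comp_smul_deriv''
      (Real.continuousOn_tan.mono (fun θ hθ => (hcos θ hθ).ne'))
      hIoo
      (continuousOn_const.div ((Real.continuous_cos.continuousOn).pow 2)
        (fun θ hθ => pow_ne_zero 2 (hcos θ hθ).ne'))
      (hgg.mono himg)
    rw [Real.tan_zero] at hsub
    rw [← hsub]
    apply intervalIntegral.integral_congr
    intro θ hθ
    have hc := hcos θ hθ
    have h1t : 1 + Real.tan θ^2 = (Real.cos θ^2)⁻¹ := by
      rw [← Real.inv_one_add_tan_sq hc.ne', inv_inv]
    have hpos : (0:ℝ) < 1 + Real.tan θ^2 := by positivity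
    simp only [Function.comp_apply, smul_eq_mul]
    rw [one_div, ← h1t]
    field_simp
  have hIccInt : IntegrableOn (fun θ => g (Real.tan θ)) (uIcc (0:ℝ) (π/4)) volume := by
    rw [uIcc_of_le pi4_pos.le, intervalIntegrable_iff_integrableOn_Icc_of_le pi4_pos.le] at *
    exact hi'
  have hprim := intervalIntegral.continuousOn_primitive_interval hIccInt
  have hL : Tendsto (fun b => ∫ θ in (0:ℝ)..b, g (Real.tan θ)) l
      (𝓝 (∫ θ in (0:ℝ)..(π/4), g (Real.tan θ))) := by
    have hcw := (hprim (π/4) (by rw [uIcc_of_le pi4_pos.le]; exact ⟨pi4_pos.le, le_rfl⟩)).tendsto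
    apply hcw.mono_left
    rw [hldef, ← nhdsWithin_Ioo_eq_nhdsLT pi4_pos]
    apply nhdsWithin_mono
    rw [uIcc_of_le pi4_pos.le]
    exact Ioo_subset_Icc_self
  have hIccInt2 : IntegrableOn (fun x => g x/(1+x^2)) (uIcc (0:ℝ) 1) volume := by
    rw [uIcc_of_le zero_le_one, intervalIntegrable_iff_integrableOn_Icc_of_le zero_le_one] at *
    exact hi
  have hprim2 := intervalIntegral.continuousOn_primitive_interval hIccInt2
  have htend_tan : Tendsto Real.tan l (𝓝[Icc (0:ℝ) 1] 1) := by
    apply tendsto_nhdsWithin_of_tendsto_nhds_of_eventually_within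
    · have hct : ContinuousAt Real.tan (π/4) := by
        apply Real.continuousAt_tan.mpr
        rw [Real.cos_pi_div_four]
        positivity
      have h2 := hct.tendsto
      rw [Real.tan_pi_div_four] at h2
      exact h2.mono_left nhdsWithin_le_nhds
    · filter_upwards [hmem] with b hb
      constructor
      · exact Real.tan_nonneg_of_nonneg_of_le_pi_div_two hb.1.le (by linarith [hb.2])
      · exact tan_le_one hb.1.le hb.2.le
  have hR : Tendsto (fun b => ∫ x in (0:ℝ)..(Real.tan b), g x/(1+x^2)) l
      (𝓝 (∫ x in (0:ℝ)..1, g x/(1+x^2))) := by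
    have hcw := hprim2 1 (by rw [uIcc_of_le zero_le_one]; exact ⟨zero_le_one, le_rfl⟩)
    rw [uIcc_of_le zero_le_one] at hcw
    exact (ContinuousWithinAt.tendsto hcw).comp htend_tan
  have hfinal : Tendsto (fun b => ∫ θ in (0:ℝ)..b, g (Real.tan θ)) l
      (𝓝 (∫ x in (0:ℝ)..1, g x/(1+x^2))) := by
    apply hR.congr'
    filter_upwards [hmem] with b hb
    exact (key b hb).symm
  exact (tendsto_nhds_unique hL hfinal).symm

lemma A_tan {θ : ℝ} (h0 : 0 ≤ θ) (h1 : θ < π/4) :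
    A (Real.tan θ) = -Real.log (Real.tan (π/4 - θ))/2 := by
  have hpi := Real.pi_pos
  have hcos : 0 < Real.cos θ := Real.cos_pos_of_mem_Ioo ⟨by linarith, by linarith⟩
  have hsin : 0 ≤ Real.sin θ := Real.sin_nonneg_of_nonneg_of_le_pi h0 (by linarith)
  have htlt : Real.tan θ < 1 := by
    rcases eq_or_lt_of_le h0 with h | h
    · rw [← h, Real.tan_zero]; norm_num
    · have := Real.tan_lt_tan_of_nonneg_of_lt_pi_div_two h0 (by linarith) h1
      rwa [Real.tan_pi_div_four] at this
  have hcs : Real.sin θ < Real.cos θ := by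
    have := htlt
    rw [Real.tan_eq_sin_div_cos, div_lt_one hcos] at this
    exact this
  have hsub_sin : Real.sin (π/4 - θ) = Real.sqrt 2/2 * (Real.cos θ - Real.sin θ) := by
    rw [Real.sin_sub, Real.sin_pi_div_four, Real.cos_pi_div_four]
    ring
  have hsub_cos : Real.cos (π/4 - θ) = Real.sqrt 2/2 * (Real.cos θ + Real.sin θ) := by
    rw [Real.cos_sub, Real.sin_pi_div_four, Real.cos_pi_div_four]
    ring
  have hs2 : (0:ℝ) < Real.sqrt 2/2 := by positivity
  have hd : (0:ℝ) < Real.cos θ - Real.sin θ := by linarith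
  have ha : (0:ℝ) < Real.cos θ + Real.sin θ := by linarith
  have h1p : 1 + Real.tan θ = (Real.cos θ + Real.sin θ)/Real.cos θ := by
    rw [Real.tan_eq_sin_div_cos]
    field_simp
  have h1m : 1 - Real.tan θ = (Real.cos θ - Real.sin θ)/Real.cos θ := by
    rw [Real.tan_eq_sin_div_cos]
    field_simp
  unfold A
  rw [h1p, h1m, Real.log_div ha.ne' hcos.ne', Real.log_div hd.ne' hcos.ne',
    Real.tan_eq_sin_div_cos, Real.log_div (by rw [hsub_sin]; positivity)
      (by rw [hsub_cos]; positivity),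
    hsub_sin, hsub_cos, Real.log_mul hs2.ne' hd.ne', Real.log_mul hs2.ne' ha.ne']
  ring

lemma intInt_nlh : IntervalIntegrable
    (fun ψ => -Real.log (Real.tan ψ)/2) volume 0 (π/4) := by
  have h1 := intInt_logtan.div_const (-2)
  have h2 : (fun ψ => -Real.log (Real.tan ψ)/2)
      = (fun ψ => Real.log (Real.tan ψ)/(-2)) := funext fun ψ => by ring
  rw [h2]
  exact h1

lemma intInt_negloghalf : IntervalIntegrable
    (fun θ => -Real.log (Real.tan (π/4 - θ))/2) volume 0 (π/4) := by
  have h1 := (intInt_nlh.comp_sub_left (π/4)).symm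
  simp only [sub_self, sub_zero] at h1
  exact h1

lemma intInt_A_tan : IntervalIntegrable (fun θ => A (Real.tan θ)) volume 0 (π/4) := by
  have h1 := intInt_negloghalf
  rw [intervalIntegrable_iff, Set.uIoc_of_le pi4_pos.le] at h1 ⊢
  apply h1.congr
  have hae : ∀ᵐ θ : ℝ ∂(volume.restrict (Ioc (0:ℝ) (π/4))), θ ≠ π/4 :=
    ae_restrict_of_ae (ae_ne (π/4))
  have hmem : ∀ᵐ θ : ℝ ∂(volume.restrict (Ioc (0:ℝ) (π/4))), θ ∈ Ioc (0:ℝ) (π/4) :=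
    ae_restrict_mem measurableSet_Ioc
  filter_upwards [hae, hmem] with θ hne hm
  exact (A_tan hm.1.le (lt_of_le_of_ne hm.2 hne)).symm

lemma contA_Ico : ContinuousOn A (Ico (0:ℝ) 1) := by
  apply contA.mono
  intro x hx
  exact ⟨by linarith [hx.1], hx.2⟩

lemma eqA1 : ∫ θ in (0:ℝ)..(π/4), A (Real.tan θ)
    = ∫ θ in (0:ℝ)..(π/4), -Real.log (Real.tan (π/4 - θ))/2 := by
  apply intervalIntegral.integral_congr_ae
  filter_upwards [ae_ne (π/4)] with θ hne hmem
  rw [Set.uIoc_of_le pi4_pos.le] at hmem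
  exact A_tan hmem.1.le (lt_of_le_of_ne hmem.2 hne)

lemma W1_eq : W 1 = Gc/2 := by
  have h1 : W 1 = ∫ θ in (0:ℝ)..(π/4), A (Real.tan θ) :=
    subst_tan contA_Ico intInt_A_div intInt_A_tan
  rw [h1, eqA1]
  have h2 := intervalIntegral.integral_comp_sub_left (a := 0) (b := π/4)
    (fun ψ => -Real.log (Real.tan ψ)/2) (π/4)
  simp only [sub_self, sub_zero] at h2
  rw [h2, val1]

lemma intInt_idnegloghalf : IntervalIntegrable
    (fun θ => θ * (-Real.log (Real.tan (π/4 - θ))/2)) volume 0 (π/4) := by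
  apply intInt_negloghalf.continuousOn_mul
  exact continuous_id.continuousOn

lemma K_eq : ∫ x in (0:ℝ)..1, Real.arctan x * (A x/(1+x^2)) = S3/4 := by
  have hpi := Real.pi_pos
  have hstep0 : ∫ x in (0:ℝ)..1, Real.arctan x * (A x/(1+x^2))
      = ∫ x in (0:ℝ)..1, (Real.arctan x * A x)/(1+x^2) := by
    apply intervalIntegral.integral_congr
    intro x _
    ring
  have hg : ContinuousOn (fun x => Real.arctan x * A x) (Ico (0:ℝ) 1) :=
    (Real.continuous_arctan.continuousOn).mul contA_Ico
  have hi : IntervalIntegrable (fun x => (Real.arctan x * A x)/(1+x^2)) volume 0 1 := by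
    have he : (fun x => (Real.arctan x * A x)/(1+x^2))
        = (fun x => Real.arctan x * (A x/(1+x^2))) := funext fun x => by ring
    rw [he]
    exact intInt_atanA_div
  have hi' : IntervalIntegrable (fun θ => Real.arctan (Real.tan θ) * A (Real.tan θ))
      volume 0 (π/4) := by
    apply intInt_A_tan.continuousOn_mul
    apply Real.continuous_arctan.comp_continuousOn
    apply Real.continuousOn_tan.mono
    intro θ hθ
    exact (cos_pos_of_mem (by linarith [Real.pi_pos] : (π/4:ℝ) < π/2) hθ pi4_pos.le).ne'
  have hstep1 : ∫ x in (0:ℝ)..1, (Real.arctan x * A x)/(1+x^2)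
      = ∫ θ in (0:ℝ)..(π/4), Real.arctan (Real.tan θ) * A (Real.tan θ) :=
    subst_tan hg hi hi'
  have hstep2 : ∫ θ in (0:ℝ)..(π/4), Real.arctan (Real.tan θ) * A (Real.tan θ)
      = ∫ θ in (0:ℝ)..(π/4), θ * (-Real.log (Real.tan (π/4 - θ))/2) := by
    apply intervalIntegral.integral_congr_ae
    filter_upwards [ae_ne (π/4)] with θ hne hmem
    rw [Set.uIoc_of_le pi4_pos.le] at hmem
    have h4 : θ < π/4 := lt_of_le_of_ne hmem.2 hne
    have h0 := hmem.1
    rw [Real.arctan_tan (by linarith) (by linarith), A_tan hmem.1.le h4]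
  have hstep3 : ∫ θ in (0:ℝ)..(π/4), θ * (-Real.log (Real.tan (π/4 - θ))/2)
      = ∫ ψ in (0:ℝ)..(π/4), (π/4 - ψ) * (-Real.log (Real.tan ψ)/2) := by
    have h2 := intervalIntegral.integral_comp_sub_left (a := 0) (b := π/4)
      (fun ψ => (π/4 - ψ) * (-Real.log (Real.tan ψ)/2)) (π/4)
    simp only [sub_self, sub_zero, sub_sub_cancel] at h2
    rw [← h2]
  have hsplit : ∫ ψ in (0:ℝ)..(π/4), (π/4 - ψ) * (-Real.log (Real.tan ψ)/2)
      = (π/4) * (Gc/2) - (π/8 * Gc - S3/4) := by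
    have hint1 : IntervalIntegrable (fun ψ => (π/4) * (-Real.log (Real.tan ψ)/2))
        volume 0 (π/4) := intInt_nlh.const_mul (π/4)
    have hint2 : IntervalIntegrable (fun ψ => ψ * (-Real.log (Real.tan ψ)/2))
        volume 0 (π/4) := intInt_nlh.continuousOn_mul continuous_id.continuousOn
    have hexp : ∫ ψ in (0:ℝ)..(π/4), (π/4 - ψ) * (-Real.log (Real.tan ψ)/2)
        = ∫ ψ in (0:ℝ)..(π/4), ((π/4) * (-Real.log (Real.tan ψ)/2)
            - ψ * (-Real.log (Real.tan ψ)/2)) := by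
      apply intervalIntegral.integral_congr
      intro ψ _
      ring
    rw [hexp, intervalIntegral.integral_sub hint1 hint2,
      intervalIntegral.integral_const_mul, val1, val2]
  rw [hstep0, hstep1, hstep2, hstep3, hsplit]
  ring

/-! ### integration by parts -/

lemma I_eval : ∫ t in (0:ℝ)..1, (1/(1+t^2)) * W t
    = π/4 * W 1 - ∫ x in (0:ℝ)..1, Real.arctan x * (A x/(1+x^2)) := by
  have hU : ContinuousOn (fun t => Real.arctan t * W t) (Icc 0 1) :=
    (Real.continuous_arctan.continuousOn).mul contW
  have hderiv : ∀ t ∈ Ioo (0:ℝ) 1, HasDerivWithinAt (fun t => Real.arctan t * W t)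
      ((1/(1+t^2)) * W t + Real.arctan t * (A t/(1+t^2))) (Ioi t) t := by
    intro t ht
    apply HasDerivAt.hasDerivWithinAt
    apply HasDerivAt.mul (Real.hasDerivAt_arctan t)
    apply intervalIntegral.integral_hasDerivAt_right
    · apply intInt_A_div.mono_set
      rw [uIcc_of_le ht.1.le, uIcc_of_le zero_le_one]
      exact Icc_subset_Icc le_rfl ht.2.le
    · exact ⟨univ, univ_mem,
        ((measurable_A.div (measurable_const.add (measurable_id.pow_const 2))).aestronglyMeasurable).restrict⟩
    · apply ContinuousAt.div
      · exact (hasDerivAt_A (by linarith [ht.1]) ht.2).continuousAt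
      · exact (continuous_const.add (continuous_pow 2)).continuousAt
      · positivity
  have hint1 : IntervalIntegrable (fun t => (1/(1+t^2)) * W t) volume 0 1 := by
    apply ContinuousOn.intervalIntegrable
    rw [uIcc_of_le zero_le_one]
    apply ContinuousOn.mul _ contW
    apply ContinuousOn.div continuousOn_const
      ((continuous_const.add (continuous_pow 2)).continuousOn)
    intro x _
    show (1:ℝ) + x^2 ≠ 0
    positivity
  have hint : IntervalIntegrable
      (fun t => (1/(1+t^2)) * W t + Real.arctan t * (A t/(1+t^2))) volume 0 1 :=
    hint1.add intInt_atanA_div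
  have hibp := intervalIntegral.integral_eq_sub_of_hasDeriv_right_of_le zero_le_one
    hU hderiv hint
  rw [intervalIntegral.integral_add hint1 intInt_atanA_div] at hibp
  rw [Real.arctan_one, Real.arctan_zero, zero_mul, sub_zero] at hibp
  linarith [hibp]

/-! ### triple integral reduction -/

lemma triple_eq :
    (∫ t3 in (0:ℝ)..1, ∫ t2 in (0:ℝ)..t3, ∫ t1 in (0:ℝ)..t2,
        1 / ((1 - t1^2) * (1 + t2^2) * (1 + t3^2)))
    = ∫ t3 in (0:ℝ)..1, (1/(1+t3^2)) * W t3 := by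
  apply intervalIntegral.integral_congr_ae
  filter_upwards [ae_ne (1:ℝ)] with t3 hne hmem
  rw [Set.uIoc_of_le zero_le_one] at hmem
  have ht3 : t3 < 1 := lt_of_le_of_ne hmem.2 hne
  have ht30 : 0 < t3 := hmem.1
  have hmid : ∀ t2 ∈ uIcc (0:ℝ) t3,
      (∫ t1 in (0:ℝ)..t2, 1/((1-t1^2)*(1+t2^2)*(1+t3^2)))
      = (1/(1+t3^2)) * (A t2/(1+t2^2)) := by
    intro t2 ht2
    rw [uIcc_of_le ht30.le] at ht2
    have h21 : t2 < 1 := lt_of_le_of_lt ht2.2 ht3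
    have h20 : 0 ≤ t2 := ht2.1
    have h2pos : (0:ℝ) < 1 + t2^2 := by positivity
    have h3pos : (0:ℝ) < 1 + t3^2 := by positivity
    have hfact : ∀ t1 : ℝ, 1/((1-t1^2)*(1+t2^2)*(1+t3^2))
        = (1/((1+t2^2)*(1+t3^2))) * (1/(1-t1^2)) := by
      intro t1
      rw [one_div, one_div, one_div, mul_inv, mul_inv, mul_inv]
      ring
    simp_rw [hfact]
    rw [intervalIntegral.integral_const_mul, inner_eval h20 h21]
    rw [one_div, one_div, mul_inv, div_eq_mul_inv]
    ring
  calc (∫ t2 in (0:ℝ)..t3, ∫ t1 in (0:ℝ)..t2, 1/((1-t1^2)*(1+t2^2)*(1+t3^2)))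
      = ∫ t2 in (0:ℝ)..t3, (1/(1+t3^2)) * (A t2/(1+t2^2)) :=
        intervalIntegral.integral_congr hmid
    _ = (1/(1+t3^2)) * W t3 := by
        rw [intervalIntegral.integral_const_mul]
        rfl

lemma S3_eq : S3 = 7/8 * ∑' n : ℕ, (1:ℝ)/(n+1)^3 := by
  set f : ℕ → ℝ := fun n => (1:ℝ)/((n:ℝ)+1)^3 with hf
  have hbase : Summable f := by
    apply Summable.of_nonneg_of_le (fun n => by positivity) (fun n => ?_) summable_base
    simp only [hf, one_div]
    apply inv_anti₀ (by positivity)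
    nlinarith [Nat.cast_nonneg (α := ℝ) n]
  have heven : Summable (fun k : ℕ => f (2*k)) := by
    apply summable_ocube.congr
    intro k
    simp only [hf]
    push_cast
    rw [one_div]
  have hodd : Summable (fun k : ℕ => f (2*k+1)) := by
    apply Summable.of_nonneg_of_le (fun n => by positivity) (fun k => ?_) summable_base
    simp only [hf, one_div]
    apply inv_anti₀ (by positivity)
    push_cast
    nlinarith [Nat.cast_nonneg (α := ℝ) k]
  have heq := tsum_even_add_odd heven hodd
  have h1 : ∑' k : ℕ, f (2*k) = S3 := by
    rw [show S3 = ∑' n : ℕ, (1:ℝ)/(2*n+1)^3 from rfl]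
    apply tsum_congr
    intro k
    simp only [hf]
    push_cast
    ring_nf
  have h2 : ∑' k : ℕ, f (2*k+1) = 8⁻¹ * ∑' n : ℕ, f n := by
    rw [← tsum_mul_left]
    apply tsum_congr
    intro k
    simp only [hf]
    have hk : (0:ℝ) < (k:ℝ)+1 := by positivity
    push_cast
    rw [show (2*(k:ℝ)+1) + 1 = 2*((k:ℝ)+1) by ring]
    rw [mul_pow]
    rw [div_eq_mul_inv, div_eq_mul_inv, mul_inv]
    norm_num
  rw [h1, h2] at heq
  have : (∑' n : ℕ, (1:ℝ)/(n+1)^3) = ∑' n : ℕ, f n := by rfl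
  rw [this]
  linarith [heq]

end Stmt10

end

open Stmt10 in
theorem stmt10 :
    π * (∑' n : ℕ, (-1:ℝ)^n / (2*n+1)^2)
    = 8 * (∫ t3 in (0:ℝ)..1, ∫ t2 in (0:ℝ)..t3, ∫ t1 in (0:ℝ)..t2,
        1 / ((1 - t1^2) * (1 + t2^2) * (1 + t3^2)))
      + (7/4) * (∑' n : ℕ, (1:ℝ)/(n+1)^3) := by
  have hG : (∑' n : ℕ, (-1:ℝ)^n / (2*n+1)^2) = Gc := rfl
  have h1 : (∫ t3 in (0:ℝ)..1, ∫ t2 in (0:ℝ)..t3, ∫ t1 in (0:ℝ)..t2,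
        1 / ((1 - t1^2) * (1 + t2^2) * (1 + t3^2))) = π/4 * (Gc/2) - S3/4 := by
    rw [triple_eq, I_eval, W1_eq, K_eq]
  have h2 := S3_eq
  rw [hG, h1]
  rw [show (∑' n : ℕ, (1:ℝ)/(n+1)^3) = 8/7 * S3 by rw [h2]; ring]
  ring
end

section
/- For all n ≥ 1 and |z| < 1, the double integral over [0,π]² of (Li_n(z cos θ₁) − Li_n(z cos θ₂))/(cos θ₁ − cos θ₂) dθ₁ dθ₂ equals (π²/2)·(Li_n(z) − Li_n(−z)). -/
open Real Finset MeasureTheory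

noncomputable def Li (n : ℕ) (z : ℝ) : ℝ := ∑' k : ℕ, z^(k+1) / (k+1)^n

/-! ### Wallis products and their convolution identity -/

noncomputable def bb (m : ℕ) : ℝ := ∏ i ∈ Finset.range m, (2*(i:ℝ)+1)/(2*i+2)

lemma bb_succ (m : ℕ) : bb (m+1) = bb m * ((2*m+1)/(2*m+2)) := by
  rw [bb, bb, Finset.prod_range_succ]

lemma bb_pos (m : ℕ) : 0 < bb m := Finset.prod_pos (fun k _ => by positivity)

lemma bb_conv (m : ℕ) : ∑ i ∈ Finset.range (m+1), bb i * bb (m-i) = 1 := by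
  induction m with
  | zero => simp [bb]
  | succ m ih =>
    set g : ℕ → ℝ := fun i => -((i:ℝ) * bb i * bb (m+1-i))/(m+1) with hg
    have key : ∀ i ∈ Finset.range (m+1),
        bb i * bb (m+1-i) = bb i * bb (m-i) + (g (i+1) - g i) := by
      intro i hi
      rw [Finset.mem_range] at hi
      obtain ⟨j, hj⟩ : ∃ j, m = i + j := ⟨m - i, by omega⟩
      subst hj
      have h1 : i + j + 1 - i = j + 1 := by omega
      have h2 : i + j - i = j := by omega
      have h3 : i + j + 1 - (i+1) = j := by omega
      simp only [hg, h1, h2, h3]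
      rw [bb_succ, bb_succ]
      have hb1 : bb i ≠ 0 := ne_of_gt (bb_pos i)
      have hb2 : bb j ≠ 0 := ne_of_gt (bb_pos j)
      push_cast
      field_simp
      ring
    calc ∑ i ∈ Finset.range (m+2), bb i * bb (m+1-i)
        = (∑ i ∈ Finset.range (m+1), bb i * bb (m+1-i)) + bb (m+1) * bb 0 := by
          rw [Finset.sum_range_succ]; simp
      _ = (∑ i ∈ Finset.range (m+1), (bb i * bb (m-i) + (g (i+1) - g i))) + bb (m+1) * bb 0 := by
          rw [Finset.sum_congr rfl key]
      _ = 1 := by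
          rw [Finset.sum_add_distrib, Finset.sum_range_sub g, ih]
          have h0 : bb 0 = 1 := by simp [bb]
          simp only [hg, h0]
          have hm : ((m:ℝ)+1) ≠ 0 := by positivity
          field_simp
          rw [Nat.sub_self, h0]
          push_cast
          ring

/-! ### Integrals of powers of cosine -/

noncomputable def Wc (m : ℕ) : ℝ := ∫ x in (0:ℝ)..π, Real.cos x ^ m

lemma Wc_rec (m : ℕ) : Wc (m+2) = (m+1)/(m+2) * Wc m := by
  rw [Wc, Wc, integral_cos_pow]
  simp [Real.sin_pi]

lemma Wc_even (a : ℕ) : Wc (2*a) = π * bb a := by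
  induction a with
  | zero => simp [Wc, bb]
  | succ a ih =>
    have : 2*(a+1) = 2*a + 2 := by ring
    rw [this, Wc_rec, ih, bb_succ]
    push_cast
    ring

lemma Wc_odd (a : ℕ) : Wc (2*a+1) = 0 := by
  induction a with
  | zero => simp [Wc]
  | succ a ih =>
    have : 2*(a+1)+1 = (2*a+1) + 2 := by ring
    rw [this, Wc_rec, ih, mul_zero]

lemma abs_Wc_le (m : ℕ) : |Wc m| ≤ π := by
  have := intervalIntegral.norm_integral_le_of_norm_le_const
    (C := 1) (f := fun x => Real.cos x ^ m) (a := 0) (b := π) (fun x _ => by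
      rw [Real.norm_eq_abs, abs_pow]
      exact pow_le_one₀ (abs_nonneg _) (Real.abs_cos_le_one x))
  rw [Real.norm_eq_abs] at this
  calc |Wc m| ≤ 1 * |π - 0| := this
    _ = π := by rw [one_mul, sub_zero, abs_of_pos Real.pi_pos]

lemma Wc_conv (k : ℕ) : ∑ i ∈ Finset.range (k+1), Wc i * Wc (k-i)
    = if Even k then π^2 else 0 := by
  rcases Nat.even_or_odd' k with ⟨m, rfl | rfl⟩
  · rw [if_pos (even_two_mul m)]
    rw [← Finset.sum_filter_add_sum_filter_not (Finset.range (2*m+1)) (fun i => Even i)]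
    have h2 : ∑ i ∈ (Finset.range (2*m+1)).filter (fun i => ¬ Even i), Wc i * Wc (2*m-i) = 0 := by
      apply Finset.sum_eq_zero
      intro i hi
      simp only [Finset.mem_filter, Nat.not_even_iff_odd] at hi
      obtain ⟨b, rfl⟩ := hi.2
      rw [Wc_odd, zero_mul]
    rw [h2, add_zero]
    have h1 : ∑ i ∈ (Finset.range (2*m+1)).filter (fun i => Even i), Wc i * Wc (2*m-i)
        = ∑ a ∈ Finset.range (m+1), (π * bb a) * (π * bb (m-a)) := by
      refine Finset.sum_nbij' (fun i => i/2) (fun a => 2*a) ?_ ?_ ?_ ?_ ?_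
      · intro i hi
        simp only [Finset.mem_filter, Finset.mem_range] at hi ⊢
        omega
      · intro a ha
        simp only [Finset.mem_filter, Finset.mem_range] at ha ⊢
        exact ⟨by omega, even_two_mul a⟩
      · intro i hi
        simp only [Finset.mem_filter, Finset.mem_range] at hi
        obtain ⟨b, rfl⟩ := hi.2
        omega
      · intro a ha; omega
      · intro i hi
        simp only [Finset.mem_filter, Finset.mem_range] at hi
        obtain ⟨b, rfl⟩ := hi.2
        have hb : b ≤ m := by omega
        have e1 : (b + b) / 2 = b := by omega
        have e2 : 2*m - (b+b) = 2*(m-b) := by omega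
        have e3 : b + b = 2*b := by omega
        rw [e1, e2, e3, Wc_even, Wc_even]
    rw [h1]
    have : ∑ a ∈ Finset.range (m+1), (π * bb a) * (π * bb (m-a))
        = π^2 * ∑ a ∈ Finset.range (m+1), bb a * bb (m-a) := by
      rw [Finset.mul_sum]; congr 1; ext a; ring
    rw [this, bb_conv, mul_one]
  · rw [if_neg (by simp [Nat.even_add_one, parity_simps])]
    apply Finset.sum_eq_zero
    intro i hi
    rw [Finset.mem_range] at hi
    rcases Nat.even_or_odd i with ⟨b, rfl⟩ | ⟨b, rfl⟩
    · have : 2*m+1 - (b+b) = 2*(m-b)+1 := by omega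
      rw [this, Wc_odd, mul_zero]
    · rw [Wc_odd, zero_mul]

/-! ### Series lemmas -/

noncomputable def aa (n : ℕ) (z : ℝ) (k : ℕ) : ℝ := z^(k+1) / ((k:ℝ)+1)^n

lemma Li_eq (n : ℕ) (w : ℝ) : Li n w = ∑' k : ℕ, aa n w k := rfl

lemma abs_aa_le (n : ℕ) (z : ℝ) (k : ℕ) : |aa n z k| ≤ |z|^(k+1) := by
  rw [aa, abs_div, abs_pow]
  have h1 : (1:ℝ) ≤ |((k:ℝ)+1)^n| := by
    rw [abs_of_nonneg (by positivity)]
    exact one_le_pow₀ (by exact_mod_cast Nat.one_le_iff_ne_zero.mpr (Nat.succ_ne_zero k))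
  calc |z|^(k+1) / |((k:ℝ)+1)^n| ≤ |z|^(k+1) / 1 := by
        apply div_le_div_of_nonneg_left (by positivity) one_pos h1 |>.trans_eq rfl
    _ = |z|^(k+1) := div_one _

lemma summable_geom_shift (z : ℝ) (hz : |z| < 1) : Summable (fun k : ℕ => |z|^(k+1)) := by
  exact ((summable_geometric_of_lt_one (abs_nonneg z) hz).mul_left |z|).congr
    (fun k => by rw [← pow_succ'])

lemma summable_kgeom (z : ℝ) (hz : |z| < 1) :
    Summable (fun k : ℕ => ((k:ℝ)+1) * |z|^(k+1)) := by
  have h := summable_pow_mul_geometric_of_norm_lt_one (R := ℝ) 1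
    (by rwa [Real.norm_eq_abs, abs_abs])
  have h2 := (_root_.summable_nat_add_iff (f := fun k : ℕ => (k:ℝ)^1 * |z|^k) 1).mpr h
  exact h2.congr (fun k => by push_cast; ring)

lemma summable_of_le_kgeom (z : ℝ) (hz : |z| < 1) {g : ℕ → ℝ} (C : ℝ)
    (h : ∀ k, |g k| ≤ C * (((k:ℝ)+1) * |z|^(k+1))) : Summable g := by
  apply Summable.of_norm_bounded ((summable_kgeom z hz).mul_left C)
  simpa [Real.norm_eq_abs] using h

noncomputable def S (k : ℕ) (c1 c2 : ℝ) : ℝ := ∑ i ∈ Finset.range (k+1), c1^i * c2^(k-i)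

lemma abs_S_le {c1 c2 : ℝ} (h1 : |c1| ≤ 1) (h2 : |c2| ≤ 1) (k : ℕ) :
    |S k c1 c2| ≤ (k:ℝ)+1 := by
  calc |S k c1 c2| ≤ ∑ i ∈ Finset.range (k+1), |c1^i * c2^(k-i)| :=
        Finset.abs_sum_le_sum_abs _ _
    _ ≤ ∑ i ∈ Finset.range (k+1), 1 := by
        apply Finset.sum_le_sum
        intro i _
        rw [abs_mul, abs_pow, abs_pow]
        exact mul_le_one₀ (pow_le_one₀ (abs_nonneg _) h1) (by positivity)
          (pow_le_one₀ (abs_nonneg _) h2)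
    _ = (k:ℝ)+1 := by simp

lemma summable_Li (n : ℕ) (w : ℝ) (hw : |w| < 1) : Summable (fun k : ℕ => aa n w k) :=
  Summable.of_norm_bounded (summable_geom_shift w hw) (fun k => by
    rw [Real.norm_eq_abs]; exact abs_aa_le n w k)

lemma key_eq (n : ℕ) (z : ℝ) (hz : |z| < 1) {c1 c2 : ℝ} (h1 : |c1| ≤ 1) (h2 : |c2| ≤ 1) :
    Li n (z*c1) - Li n (z*c2) = (∑' k : ℕ, aa n z k * S k c1 c2) * (c1 - c2) := by
  have e1 : ∀ (c : ℝ), |c| ≤ 1 → Li n (z*c) = ∑' k : ℕ, aa n z k * c^(k+1) := by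
    intro c hc
    rw [Li_eq]
    apply tsum_congr
    intro k
    rw [aa, aa, mul_pow]
    ring
  have hs : ∀ (c : ℝ), |c| ≤ 1 → Summable (fun k : ℕ => aa n z k * c^(k+1)) := by
    intro c hc
    apply summable_of_le_kgeom z hz 1
    intro k
    rw [abs_mul, abs_pow, one_mul]
    calc |aa n z k| * |c|^(k+1) ≤ |z|^(k+1) * 1 :=
        mul_le_mul (abs_aa_le n z k) (pow_le_one₀ (abs_nonneg _) hc) (by positivity) (by positivity)
      _ ≤ ((k:ℝ)+1) * |z|^(k+1) := by
        rw [mul_one]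
        nlinarith [pow_nonneg (abs_nonneg z) (k+1), Nat.cast_nonneg (α := ℝ) k]
  rw [e1 c1 h1, e1 c2 h2, ← (hs c1 h1).tsum_sub (hs c2 h2), ← tsum_mul_right]
  apply tsum_congr
  intro k
  have gs := geom_sum₂_mul c1 c2 (k+1)
  have : S k c1 c2 * (c1 - c2) = c1^(k+1) - c2^(k+1) := by
    rw [S, ← gs]
    norm_num
  rw [mul_assoc, this]
  ring

/-! ### Swapping sum and integral -/

lemma swap_tsum_integral {g : ℕ → ℝ → ℝ} (hc : ∀ k, Continuous (g k)) (B : ℕ → ℝ)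
    (hB : ∀ k y, |g k y| ≤ B k) (hBs : Summable B) :
    ∫ y in (0:ℝ)..π, ∑' k, g k y = ∑' k, ∫ y in (0:ℝ)..π, g k y := by
  have him : ∀ k, IntegrableOn (g k) (Set.Ioc 0 π) := fun k =>
    (hc k).integrableOn_Ioc
  have hvol : (volume (Set.Ioc (0:ℝ) π)).toReal = π := by
    rw [Real.volume_Ioc, sub_zero, ENNReal.toReal_ofReal pi_pos.le]
  have hsum : Summable (fun k => ∫ y in Set.Ioc (0:ℝ) π, ‖g k y‖) := by
    refine Summable.of_nonneg_of_le
      (fun k => integral_nonneg (fun y => norm_nonneg _)) ?_ (hBs.mul_left π)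
    intro k
    calc ∫ y in Set.Ioc (0:ℝ) π, ‖g k y‖ ≤ ∫ _y in Set.Ioc (0:ℝ) π, B k := by
          apply setIntegral_mono_on (him k).norm ((integrableOn_const_iff).mpr ?_)
            measurableSet_Ioc
          · intro y _
            exact hB k y
          · right; rw [Real.volume_Ioc]; exact ENNReal.ofReal_lt_top
      _ = π * B k := by rw [setIntegral_const, measureReal_def, hvol, smul_eq_mul]
  rw [intervalIntegral.integral_of_le pi_pos.le,
    ← MeasureTheory.integral_tsum_of_summable_integral_norm him hsum]
  exact tsum_congr (fun k => (intervalIntegral.integral_of_le pi_pos.le).symm)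

/-! ### The main theorem -/

theorem stmt12 (n : ℕ) (hn : 1 ≤ n) (z : ℝ) (hz : |z| < 1) :
    (∫ x in (0:ℝ)..π, ∫ y in (0:ℝ)..π,
      (Li n (z * Real.cos x) - Li n (z * Real.cos y)) / (Real.cos x - Real.cos y))
    = (π^2/2) * (Li n z - Li n (-z)) := by
  -- Step 1: inner integral
  have step1 : ∀ x : ℝ, (∫ y in (0:ℝ)..π,
      (Li n (z * Real.cos x) - Li n (z * Real.cos y)) / (Real.cos x - Real.cos y))
      = ∑' k : ℕ, aa n z k * ∑ i ∈ Finset.range (k+1), (Real.cos x)^i * Wc (k-i) := by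
    intro x
    have e1 : (∫ y in (0:ℝ)..π,
        (Li n (z * Real.cos x) - Li n (z * Real.cos y)) / (Real.cos x - Real.cos y))
        = ∫ y in (0:ℝ)..π, ∑' k : ℕ, aa n z k * S k (Real.cos x) (Real.cos y) := by
      apply intervalIntegral.integral_congr_ae
      have h0 : ∀ᵐ y : ℝ, y ≠ arccos (Real.cos x) := by
        refine ae_iff.mpr ?_
        simp only [not_not, Set.setOf_eq_eq_singleton]
        exact measure_singleton _
      filter_upwards [h0] with y hy hyI
      have hyIoc : y ∈ Set.Ioc (0:ℝ) π := by
        rwa [Set.uIoc_of_le pi_pos.le] at hyI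
      have hcc : Real.cos x ≠ Real.cos y := by
        intro h
        apply hy
        have := Real.arccos_cos hyIoc.1.le hyIoc.2
        rw [← h] at this
        exact this.symm
      rw [key_eq n z hz (Real.abs_cos_le_one x) (Real.abs_cos_le_one y),
        mul_div_cancel_right₀ _ (sub_ne_zero.mpr hcc)]
    rw [e1]
    have e2 := swap_tsum_integral
      (g := fun k y => aa n z k * S k (Real.cos x) (Real.cos y))
      (fun k => by
        apply continuous_const.mul
        unfold S
        exact continuous_finset_sum _ (fun i _ => continuous_const.mul
          ((Real.continuous_cos).pow _)))
      (fun k => ((k:ℝ)+1) * |z|^(k+1))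
      (fun k y => by
        rw [abs_mul]
        calc |aa n z k| * |S k (Real.cos x) (Real.cos y)|
            ≤ |z|^(k+1) * ((k:ℝ)+1) :=
              mul_le_mul (abs_aa_le n z k)
                (abs_S_le (Real.abs_cos_le_one x) (Real.abs_cos_le_one y) k)
                (abs_nonneg _) (by positivity)
          _ = ((k:ℝ)+1) * |z|^(k+1) := mul_comm _ _)
      (summable_kgeom z hz)
    rw [e2]
    apply tsum_congr
    intro k
    rw [intervalIntegral.integral_const_mul]
    congr 1
    unfold S
    rw [intervalIntegral.integral_finset_sum
      (fun i _ => (Continuous.intervalIntegrable (by fun_prop) _ _))]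
    apply Finset.sum_congr rfl
    intro i _
    rw [intervalIntegral.integral_const_mul]
    rfl
  rw [intervalIntegral.integral_congr (g := fun x =>
    ∑' k : ℕ, aa n z k * ∑ i ∈ Finset.range (k+1), (Real.cos x)^i * Wc (k-i))
    (fun x _ => step1 x)]
  -- Step 2: outer integral
  have e3 := swap_tsum_integral
    (g := fun k x => aa n z k * ∑ i ∈ Finset.range (k+1), (Real.cos x)^i * Wc (k-i))
    (fun k => continuous_const.mul
      (continuous_finset_sum _ (fun i _ => ((Real.continuous_cos).pow _).mul continuous_const)))
    (fun k => π * (((k:ℝ)+1) * |z|^(k+1)))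
    (fun k x => by
      rw [abs_mul]
      have hb : |∑ i ∈ Finset.range (k+1), (Real.cos x)^i * Wc (k-i)| ≤ ((k:ℝ)+1) * π := by
        calc |∑ i ∈ Finset.range (k+1), (Real.cos x)^i * Wc (k-i)|
            ≤ ∑ i ∈ Finset.range (k+1), |(Real.cos x)^i * Wc (k-i)| :=
              Finset.abs_sum_le_sum_abs _ _
          _ ≤ ∑ i ∈ Finset.range (k+1), π := by
              apply Finset.sum_le_sum
              intro i _
              rw [abs_mul, abs_pow]
              calc |Real.cos x|^i * |Wc (k-i)| ≤ 1 * π :=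
                  mul_le_mul (pow_le_one₀ (abs_nonneg _) (Real.abs_cos_le_one x))
                    (abs_Wc_le _) (abs_nonneg _) one_pos.le
                _ = π := one_mul _
          _ = ((k:ℝ)+1) * π := by simp [mul_comm]
      calc |aa n z k| * |∑ i ∈ Finset.range (k+1), (Real.cos x)^i * Wc (k-i)|
          ≤ |z|^(k+1) * (((k:ℝ)+1) * π) :=
            mul_le_mul (abs_aa_le n z k) hb (abs_nonneg _) (by positivity)
        _ = π * (((k:ℝ)+1) * |z|^(k+1)) := by ring)
    (((summable_kgeom z hz).mul_left π))
  rw [e3]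
  -- Step 3: evaluate
  have e4 : ∀ k : ℕ, (∫ x in (0:ℝ)..π,
      aa n z k * ∑ i ∈ Finset.range (k+1), (Real.cos x)^i * Wc (k-i))
      = aa n z k * (if Even k then π^2 else 0) := by
    intro k
    rw [intervalIntegral.integral_const_mul]
    congr 1
    rw [intervalIntegral.integral_finset_sum
      (fun i _ => (Continuous.intervalIntegrable (by fun_prop) _ _))]
    rw [← Wc_conv k]
    apply Finset.sum_congr rfl
    intro i _
    rw [intervalIntegral.integral_mul_const]
    rfl
  rw [tsum_congr e4]
  -- Step 4: final summation
  have h1 : Summable (fun k : ℕ => aa n z k) := summable_Li n z hz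
  have h2 : Summable (fun k : ℕ => aa n (-z) k) := summable_Li n (-z) (by rwa [abs_neg])
  rw [Li_eq, Li_eq, ← h1.tsum_sub h2, ← tsum_mul_left]
  apply tsum_congr
  intro k
  by_cases hk : Even k
  · rw [if_pos hk]
    have hodd : (-z)^(k+1) = -(z^(k+1)) := Odd.neg_pow (Even.add_one hk) z
    simp only [aa, hodd]
    ring
  · rw [if_neg hk]
    have heven : (-z)^(k+1) = z^(k+1) :=
      Even.neg_pow (Nat.even_add_one.mpr hk) z
    simp only [aa, heven]
    ring
end

section
/- For real z with |z| < 1, the double integral over [0,π]² of (log(1+z cos θ₁) − log(1+z cos θ₂))/(cos θ₁ − cos θ₂) dθ₁ dθ₂ equals (π²/2)·log((1+z)/(1−z)). -/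
open Real

lemma lemA (a : ℝ) (ha : |a| < 1) :
    ∫ x in (0:ℝ)..π, (1 + a * Real.cos x)⁻¹ = π / Real.sqrt (1 - a^2) := by
  have ha2 : (0:ℝ) < 1 - a^2 := by nlinarith [abs_nonneg a, sq_abs a]
  set s := Real.sqrt (1 - a^2) with hs
  have hs0 : 0 < s := Real.sqrt_pos.mpr ha2
  have hs2 : s^2 = 1 - a^2 := Real.sq_sqrt ha2.le
  have hpos : ∀ x : ℝ, 0 < 1 + a * Real.cos x := by
    intro x
    have h1 : |a * Real.cos x| ≤ |a| := by
      rw [abs_mul]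
      nlinarith [abs_cos_le_one x, abs_nonneg a]
    have := abs_le.mp h1
    nlinarith
  have hD : ∀ x : ℝ, 0 < 1 + s + a * Real.cos x := by
    intro x; have := hpos x; nlinarith
  set F : ℝ → ℝ := fun x => (x - 2 * Real.arctan (a * Real.sin x / (1 + s + a * Real.cos x))) / s with hF
  have hderiv : ∀ x ∈ Set.uIcc (0:ℝ) π, HasDerivAt F (1 + a * Real.cos x)⁻¹ x := by
    intro x _
    have hDx := hD x
    have hpx := hpos x
    have hsin : Real.sin x ^ 2 = 1 - Real.cos x ^ 2 := Real.sin_sq x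
    have hu : HasDerivAt (fun x => a * Real.sin x / (1 + s + a * Real.cos x))
        ((a * Real.cos x * (1 + s + a * Real.cos x) - a * Real.sin x * (a * -Real.sin x)) /
          (1 + s + a * Real.cos x)^2) x :=
      (((Real.hasDerivAt_sin x).const_mul a).div
        (((Real.hasDerivAt_cos x).const_mul a).const_add (1 + s)) hDx.ne')
    have harctan := (Real.hasDerivAt_arctan (a * Real.sin x / (1 + s + a * Real.cos x))).comp x hu
    have h2 : HasDerivAt F ((1 - 2 * ((1 / (1 + (a * Real.sin x / (1 + s + a * Real.cos x)) ^ 2)) *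
        ((a * Real.cos x * (1 + s + a * Real.cos x) - a * Real.sin x * (a * -Real.sin x)) /
          (1 + s + a * Real.cos x)^2))) / s) x :=
      (((hasDerivAt_id x).sub (harctan.const_mul 2)).div_const s)
    convert h2 using 1
    have e1 : 1 + (a * Real.sin x / (1 + s + a * Real.cos x)) ^ 2
        = (2 * (1 + s) * (1 + a * Real.cos x)) / (1 + s + a * Real.cos x)^2 := by
      field_simp
      linear_combination a^2 * hsin + hs2
    have e2 : a * Real.cos x * (1 + s + a * Real.cos x) - a * Real.sin x * (a * -Real.sin x)
        = a * Real.cos x * (1 + s) + a ^ 2 := by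
      linear_combination a^2 * hsin
    rw [e1, e2]
    field_simp
    linear_combination hs2
  have hint : IntervalIntegrable (fun x => (1 + a * Real.cos x)⁻¹) MeasureTheory.volume 0 π := by
    apply ContinuousOn.intervalIntegrable
    exact ContinuousOn.inv₀ (by fun_prop) (fun x _ => (hpos x).ne')
  rw [intervalIntegral.integral_eq_sub_of_hasDerivAt hderiv hint]
  simp [hF]
open Real

lemma habs (z t : ℝ) (ht : t ∈ Set.uIcc 0 z) : |t| ≤ |z| := by
  rcases Set.mem_uIcc.mp ht with ⟨h1,h2⟩|⟨h1,h2⟩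
  · rw [abs_of_nonneg h1]; exact le_trans h2 (le_abs_self z)
  · rw [abs_of_nonpos h2]; exact le_trans (neg_le_neg h1) (neg_abs_le z |>.trans (le_abs_self z) |> fun _ => neg_le_abs z)

lemma hposf (t c : ℝ) (ht : |t| < 1) (hc : |c| ≤ 1) : 0 < 1 + t * c := by
  have : |t*c| ≤ |t| := by rw [abs_mul]; nlinarith [abs_nonneg t]
  have := abs_le.mp this
  nlinarith

lemma lemB (z x y : ℝ) (hz : |z| < 1) (hne : Real.cos x ≠ Real.cos y) :
    (Real.log (1 + z * Real.cos x) - Real.log (1 + z * Real.cos y)) /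
        (Real.cos x - Real.cos y)
    = ∫ t in (0:ℝ)..z, ((1 + t * Real.cos x) * (1 + t * Real.cos y))⁻¹ := by
  set cx := Real.cos x
  set cy := Real.cos y
  have hcx : |cx| ≤ 1 := abs_cos_le_one x
  have hcy : |cy| ≤ 1 := abs_cos_le_one y
  set G : ℝ → ℝ := fun t => (Real.log (1 + t * cx) - Real.log (1 + t * cy)) / (cx - cy) with hG
  have hderiv : ∀ t ∈ Set.uIcc (0:ℝ) z, HasDerivAt G ((1 + t * cx) * (1 + t * cy))⁻¹ t := by
    intro t ht
    have ht1 : |t| < 1 := lt_of_le_of_lt (habs z t ht) hz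
    have hpx := hposf t cx ht1 hcx
    have hpy := hposf t cy ht1 hcy
    have h1 : HasDerivAt (fun t => Real.log (1 + t * cx)) (cx / (1 + t * cx)) t := by
      have := ((hasDerivAt_id t).mul_const cx).const_add 1
      simpa using this.log hpx.ne'
    have h2 : HasDerivAt (fun t => Real.log (1 + t * cy)) (cy / (1 + t * cy)) t := by
      have := ((hasDerivAt_id t).mul_const cy).const_add 1
      simpa using this.log hpy.ne'
    have h3 := (h1.sub h2).div_const (cx - cy)
    refine h3.congr_deriv ?_
    have hd := sub_ne_zero.mpr hne
    have hpx' := hpx.ne'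
    have hpy' := hpy.ne'
    rw [div_sub_div _ _ hpx' hpy', div_div, inv_eq_one_div, div_eq_div_iff (mul_ne_zero (mul_ne_zero hpx' hpy') hd) (mul_ne_zero hpx' hpy')]
    ring
  have hint : IntervalIntegrable (fun t => ((1 + t * cx) * (1 + t * cy))⁻¹) MeasureTheory.volume 0 z := by
    apply ContinuousOn.intervalIntegrable
    apply ContinuousOn.inv₀ (by fun_prop)
    intro t ht
    have ht1 : |t| < 1 := lt_of_le_of_lt (habs z t ht) hz
    exact (mul_pos (hposf t cx ht1 hcx) (hposf t cy ht1 hcy)).ne'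
  rw [intervalIntegral.integral_eq_sub_of_hasDerivAt hderiv hint]
  simp [hG]

lemma lemC (z : ℝ) (hz : |z| < 1) :
    ∫ t in (0:ℝ)..z, π^2 / (1 - t^2) = (π^2/2) * Real.log ((1 + z) / (1 - z)) := by
  have hderiv : ∀ t ∈ Set.uIcc (0:ℝ) z, HasDerivAt
      (fun t => (π^2/2) * (Real.log (1 + t) - Real.log (1 - t))) (π^2 / (1 - t^2)) t := by
    intro t ht
    have ht1 : |t| < 1 := lt_of_le_of_lt (habs z t ht) hz
    have h0 := abs_lt.mp ht1
    have hp1 : (0:ℝ) < 1 + t := by linarith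
    have hp2 : (0:ℝ) < 1 - t := by linarith
    have h1 : HasDerivAt (fun t : ℝ => Real.log (1 + t)) (1 / (1 + t)) t := by
      have := (hasDerivAt_id t).const_add 1
      simpa using this.log hp1.ne'
    have h2 : HasDerivAt (fun t : ℝ => Real.log (1 - t)) (-1 / (1 - t)) t := by
      have := ((hasDerivAt_id t).const_mul (-1)).const_add 1
      have h' : HasDerivAt (fun t : ℝ => 1 - t) (-1) t := by
        simpa [sub_eq_add_neg] using this
      simpa using h'.log hp2.ne'
    have h3 := (h1.sub h2).const_mul (π^2/2)
    refine h3.congr_deriv ?_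
    have hne : (1:ℝ) - t^2 ≠ 0 := by nlinarith
    field_simp
    ring
  have hint : IntervalIntegrable (fun t => π^2 / (1 - t^2)) MeasureTheory.volume 0 z := by
    apply ContinuousOn.intervalIntegrable
    apply ContinuousOn.div (by fun_prop) (by fun_prop)
    intro t ht
    have ht1 : |t| < 1 := lt_of_le_of_lt (habs z t ht) hz
    nlinarith [abs_lt.mp ht1]
  rw [intervalIntegral.integral_eq_sub_of_hasDerivAt hderiv hint]
  have h0 := abs_lt.mp hz
  rw [Real.log_div (by linarith) (by linarith)]
  simp
open Real MeasureTheory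

lemma swapInt (f : ℝ → ℝ → ℝ) (b d : ℝ) (hb : (0:ℝ) ≤ b) (hd : (0:ℝ) ≤ d)
    (hc : ContinuousOn (Function.uncurry f) (Set.Icc 0 b ×ˢ Set.Icc 0 d)) :
    ∫ x in (0:ℝ)..b, ∫ y in (0:ℝ)..d, f x y = ∫ y in (0:ℝ)..d, ∫ x in (0:ℝ)..b, f x y := by
  simp only [intervalIntegral.integral_of_le hb, intervalIntegral.integral_of_le hd]
  apply MeasureTheory.integral_integral_swap
  rw [Measure.prod_restrict, ← Measure.volume_eq_prod]
  exact ((hc.integrableOn_compact (isCompact_Icc.prod isCompact_Icc)).mono_set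
    (Set.prod_mono Set.Ioc_subset_Icc_self Set.Ioc_subset_Icc_self))

lemma keyPos (z : ℝ) (h0 : 0 ≤ z) (h1 : z < 1) :
    (∫ x in (0:ℝ)..π, ∫ y in (0:ℝ)..π,
      (Real.log (1 + z * Real.cos x) - Real.log (1 + z * Real.cos y)) /
        (Real.cos x - Real.cos y))
    = (π^2/2) * Real.log ((1 + z) / (1 - z)) := by
  have hz : |z| < 1 := by rwa [abs_of_nonneg h0]
  have hposIcc : ∀ t ∈ Set.Icc (0:ℝ) z, ∀ u : ℝ, 0 < 1 + t * Real.cos u := by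
    intro t ht u
    refine hposf t _ ?_ (abs_cos_le_one u)
    rw [abs_of_nonneg ht.1]; exact lt_of_le_of_lt ht.2 h1
  -- Step 1: replace integrand a.e. in y by the t-integral
  have step1 : ∀ x : ℝ,
      (∫ y in (0:ℝ)..π, (Real.log (1 + z * Real.cos x) - Real.log (1 + z * Real.cos y)) /
        (Real.cos x - Real.cos y))
      = ∫ y in (0:ℝ)..π, ∫ t in (0:ℝ)..z, ((1 + t * Real.cos x) * (1 + t * Real.cos y))⁻¹ := by
    intro x
    apply intervalIntegral.integral_congr_ae
    have hae : ∀ᵐ y : ℝ, y ≠ Real.arccos (Real.cos x) := by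
      refine MeasureTheory.ae_iff.mpr ?_
      have : {a : ℝ | ¬ a ≠ Real.arccos (Real.cos x)} = {Real.arccos (Real.cos x)} := by
        ext a; simp
      rw [this]
      exact Real.volume_singleton
    filter_upwards [hae] with y hy hyI
    have hyI' : y ∈ Set.Ioc 0 π := by rwa [Set.uIoc_of_le Real.pi_pos.le] at hyI
    have hne : Real.cos x ≠ Real.cos y := by
      intro hcc
      apply hy
      rw [hcc]
      exact (Real.arccos_cos hyI'.1.le hyI'.2).symm
    exact lemB z x y hz hne
  rw [intervalIntegral.integral_congr (fun x _ => step1 x)]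
  -- Step 2: swap y and t
  have step2 : ∀ x : ℝ,
      (∫ y in (0:ℝ)..π, ∫ t in (0:ℝ)..z, ((1 + t * Real.cos x) * (1 + t * Real.cos y))⁻¹)
      = ∫ t in (0:ℝ)..z, ∫ y in (0:ℝ)..π, ((1 + t * Real.cos x) * (1 + t * Real.cos y))⁻¹ := by
    intro x
    apply swapInt _ _ _ Real.pi_pos.le h0
    apply ContinuousOn.inv₀ (by fun_prop)
    rintro ⟨y, t⟩ ⟨-, ht⟩
    exact (mul_pos (hposIcc t ht x) (hposIcc t ht y)).ne'
  rw [intervalIntegral.integral_congr (fun x _ => step2 x)]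
  -- Step 3: evaluate inner y-integral
  have step3 : ∀ x : ℝ,
      (∫ t in (0:ℝ)..z, ∫ y in (0:ℝ)..π, ((1 + t * Real.cos x) * (1 + t * Real.cos y))⁻¹)
      = ∫ t in (0:ℝ)..z, (1 + t * Real.cos x)⁻¹ * (π / Real.sqrt (1 - t^2)) := by
    intro x
    apply intervalIntegral.integral_congr
    intro t ht
    beta_reduce
    rw [Set.uIcc_of_le h0] at ht
    have ht1 : |t| < 1 := by rw [abs_of_nonneg ht.1]; exact lt_of_le_of_lt ht.2 h1
    have : (∫ y in (0:ℝ)..π, ((1 + t * Real.cos x) * (1 + t * Real.cos y))⁻¹)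
        = ∫ y in (0:ℝ)..π, (1 + t * Real.cos x)⁻¹ * (1 + t * Real.cos y)⁻¹ := by
      apply intervalIntegral.integral_congr
      intro y _
      simp only [mul_inv]
    rw [this, intervalIntegral.integral_const_mul, lemA t ht1]
  rw [intervalIntegral.integral_congr (fun x _ => step3 x)]
  -- Step 4: swap x and t
  rw [swapInt _ _ _ Real.pi_pos.le h0]
  · -- Step 5: evaluate
    have step5 : ∀ t ∈ Set.uIcc (0:ℝ) z,
        (∫ x in (0:ℝ)..π, (1 + t * Real.cos x)⁻¹ * (π / Real.sqrt (1 - t^2)))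
        = π^2 / (1 - t^2) := by
      intro t ht
      beta_reduce
      rw [Set.uIcc_of_le h0] at ht
      have ht1 : |t| < 1 := by rw [abs_of_nonneg ht.1]; exact lt_of_le_of_lt ht.2 h1
      have ht2 : (0:ℝ) < 1 - t^2 := by nlinarith [abs_lt.mp ht1]
      rw [intervalIntegral.integral_mul_const, lemA t ht1]
      rw [div_mul_div_comm, Real.mul_self_sqrt ht2.le, ← sq]
    rw [intervalIntegral.integral_congr step5]
    exact lemC z hz
  · -- continuity for step-4 swap
    apply ContinuousOn.mul
    · apply ContinuousOn.inv₀ (by fun_prop)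
      rintro ⟨x, t⟩ ⟨-, ht⟩
      exact (hposIcc t ht x).ne'
    · apply ContinuousOn.div continuousOn_const (by fun_prop)
      rintro ⟨x, t⟩ ⟨-, ht⟩
      have ht1 : |t| < 1 := by rw [abs_of_nonneg ht.1]; exact lt_of_le_of_lt ht.2 h1
      have ht2 : (0:ℝ) < 1 - t^2 := by nlinarith [abs_lt.mp ht1]
      exact (Real.sqrt_pos.mpr ht2).ne'

theorem stmt14 (z : ℝ) (hz : |z| < 1) :
    (∫ x in (0:ℝ)..π, ∫ y in (0:ℝ)..π,
      (Real.log (1 + z * Real.cos x) - Real.log (1 + z * Real.cos y)) /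
        (Real.cos x - Real.cos y))
    = (π^2/2) * Real.log ((1 + z) / (1 - z)) := by
  rcases le_or_gt 0 z with h0 | h0
  · exact keyPos z h0 (by rwa [abs_of_nonneg h0] at hz)
  · have hz' : |(-z)| < 1 := by rwa [abs_neg]
    have key := keyPos (-z) (by linarith) (by rw [abs_of_neg h0] at hz; rwa [abs_of_nonneg (by linarith : (0:ℝ) ≤ -z)] at hz')
    have hzlt : -z < 1 := by rw [abs_of_neg h0] at hz; linarith
    have sub1 : ∀ g : ℝ → ℝ, (∫ x in (0:ℝ)..π, g (π - x)) = ∫ x in (0:ℝ)..π, g x := by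
      intro g
      simpa using intervalIntegral.integral_comp_sub_left (a := (0:ℝ)) (b := π) g π
    have e : ∀ x y : ℝ,
        (Real.log (1 + z * Real.cos x) - Real.log (1 + z * Real.cos y)) /
          (Real.cos x - Real.cos y)
        = -((Real.log (1 + (-z) * Real.cos (π-x)) - Real.log (1 + (-z) * Real.cos (π-y))) /
          (Real.cos (π-x) - Real.cos (π-y))) := by
      intro x y
      rw [Real.cos_pi_sub, Real.cos_pi_sub, neg_mul_neg, neg_mul_neg,
        show -Real.cos x - -Real.cos y = -(Real.cos x - Real.cos y) by ring, div_neg, neg_neg]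
    have main : (∫ x in (0:ℝ)..π, ∫ y in (0:ℝ)..π,
        (Real.log (1 + z * Real.cos x) - Real.log (1 + z * Real.cos y)) /
          (Real.cos x - Real.cos y))
        = -(∫ x in (0:ℝ)..π, ∫ y in (0:ℝ)..π,
        (Real.log (1 + (-z) * Real.cos x) - Real.log (1 + (-z) * Real.cos y)) /
          (Real.cos x - Real.cos y)) := by
      calc (∫ x in (0:ℝ)..π, ∫ y in (0:ℝ)..π,
            (Real.log (1 + z * Real.cos x) - Real.log (1 + z * Real.cos y)) /
              (Real.cos x - Real.cos y))
          = ∫ x in (0:ℝ)..π, -∫ y in (0:ℝ)..π,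
            (Real.log (1 + (-z) * Real.cos (π-x)) - Real.log (1 + (-z) * Real.cos (π-y))) /
              (Real.cos (π-x) - Real.cos (π-y)) := by
            apply intervalIntegral.integral_congr
            intro x _
            beta_reduce
            rw [← intervalIntegral.integral_neg]
            apply intervalIntegral.integral_congr
            intro y _
            beta_reduce
            exact e x y
        _ = -∫ x in (0:ℝ)..π, ∫ y in (0:ℝ)..π,
            (Real.log (1 + (-z) * Real.cos (π-x)) - Real.log (1 + (-z) * Real.cos (π-y))) /
              (Real.cos (π-x) - Real.cos (π-y)) := intervalIntegral.integral_neg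
        _ = -∫ x in (0:ℝ)..π, ∫ y in (0:ℝ)..π,
            (Real.log (1 + (-z) * Real.cos (π-x)) - Real.log (1 + (-z) * Real.cos y)) /
              (Real.cos (π-x) - Real.cos y) := by
            congr 1
            apply intervalIntegral.integral_congr
            intro x _
            beta_reduce
            exact sub1 (fun y => (Real.log (1 + (-z) * Real.cos (π-x)) - Real.log (1 + (-z) * Real.cos y)) /
              (Real.cos (π-x) - Real.cos y))
        _ = -(∫ x in (0:ℝ)..π, ∫ y in (0:ℝ)..π,
            (Real.log (1 + (-z) * Real.cos x) - Real.log (1 + (-z) * Real.cos y)) /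
              (Real.cos x - Real.cos y)) := by
            congr 1
            exact sub1 (fun x => ∫ y in (0:ℝ)..π,
              (Real.log (1 + (-z) * Real.cos x) - Real.log (1 + (-z) * Real.cos y)) /
                (Real.cos x - Real.cos y))
    rw [main, key]
    have hp1 : (0:ℝ) < 1 + z := by rw [abs_of_neg h0] at hz; linarith
    have hp2 : (0:ℝ) < 1 - z := by linarith
    rw [show (1 + -z) / (1 - -z) = ((1+z)/(1-z))⁻¹ by rw [inv_div]; ring, Real.log_inv]
    ring
end

section
/- For every n ≥ 0, the double integral over [0,π]² of (cos^n θ₁ − cos^n θ₂)/(cos θ₁ − cos θ₂) dθ₁ dθ₂ equals π² if n is odd and 0 if n is even. -/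
open Real

private lemma cosInt_odd (k : ℕ) : (∫ x in (0:ℝ)..π, Real.cos x ^ (2*k+1)) = 0 := by
  induction k with
  | zero => simp
  | succ k ih =>
    have h : 2*(k+1)+1 = (2*k+1) + 2 := by ring
    rw [h, integral_cos_pow (2*k+1)]
    simp [ih]

private lemma cosInt_even (k : ℕ) :
    (∫ x in (0:ℝ)..π, Real.cos x ^ (2*k)) = π * Nat.centralBinom k / 4^k := by
  induction k with
  | zero => simp [Nat.centralBinom]
  | succ k ih =>
    have h : 2*(k+1) = (2*k) + 2 := by ring
    rw [h, integral_cos_pow (2*k), ih]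
    have hcb : ((k:ℝ)+1) * Nat.centralBinom (k+1) = 2 * (2*k+1) * Nat.centralBinom k := by
      exact_mod_cast Nat.succ_mul_centralBinom_succ k
    have hk1 : ((k:ℝ)+1) ≠ 0 := by positivity
    have h4 : (0:ℝ) < 4 ^ k := by positivity
    have h4' : (4:ℝ)^(k+1) = 4^k * 4 := by ring
    simp only [Real.sin_pi, Real.sin_zero, mul_zero, zero_sub, neg_zero, zero_div, zero_add]
    rw [h4']
    push_cast
    field_simp
    linear_combination (-2:ℝ) * hcb

private lemma conv_sym (m : ℕ) :
    2 * ∑ j ∈ Finset.range (m+1), (j:ℝ) * Nat.centralBinom j * Nat.centralBinom (m-j)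
      = m * ∑ j ∈ Finset.range (m+1), (Nat.centralBinom j : ℝ) * Nat.centralBinom (m-j) := by
  have hrefl := Finset.sum_range_reflect
    (fun j => (j:ℝ) * Nat.centralBinom j * Nat.centralBinom (m-j)) (m+1)
  simp only [Nat.add_sub_cancel] at hrefl
  have hthis : ∑ j ∈ Finset.range (m+1), (j:ℝ) * Nat.centralBinom j * Nat.centralBinom (m-j)
      = ∑ j ∈ Finset.range (m+1), ((m-j:ℕ):ℝ) * Nat.centralBinom (m-j) * Nat.centralBinom j := by
    rw [← hrefl]
    apply Finset.sum_congr rfl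
    intro j hj
    have hjm : j ≤ m := Nat.lt_succ_iff.mp (Finset.mem_range.mp hj)
    rw [Nat.sub_sub_self hjm]
  rw [two_mul]
  nth_rewrite 2 [hthis]
  rw [← Finset.sum_add_distrib, Finset.mul_sum]
  apply Finset.sum_congr rfl
  intro j hj
  have hjm : j ≤ m := Nat.lt_succ_iff.mp (Finset.mem_range.mp hj)
  have hc : ((m-j:ℕ):ℝ) = (m:ℝ) - j := by rw [Nat.cast_sub hjm]
  rw [hc]
  ring

private lemma conv_identity (m : ℕ) :
    ∑ j ∈ Finset.range (m+1), (Nat.centralBinom j : ℝ) * Nat.centralBinom (m-j) = 4^m := by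
  induction m with
  | zero => simp [Nat.centralBinom]
  | succ m ih =>
    have step : ∀ j ∈ Finset.range (m+1),
        ((j:ℝ)+1) * Nat.centralBinom (j+1) * Nat.centralBinom (m-j)
        = 2 * (2*(j:ℝ)+1) * Nat.centralBinom j * Nat.centralBinom (m-j) := by
      intro j _
      have hcb : ((j:ℝ)+1) * Nat.centralBinom (j+1) = 2 * (2*j+1) * Nat.centralBinom j := by
        exact_mod_cast Nat.succ_mul_centralBinom_succ j
      rw [hcb]
    have key : ∑ j ∈ Finset.range (m+2), (j:ℝ) * Nat.centralBinom j * Nat.centralBinom (m+1-j)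
        = 2 * ((m:ℝ)+1) * ∑ j ∈ Finset.range (m+1),
            (Nat.centralBinom j : ℝ) * Nat.centralBinom (m-j) := by
      rw [Finset.sum_range_succ']
      have hsimp : ∀ j ∈ Finset.range (m+1),
          ((j+1:ℕ):ℝ) * Nat.centralBinom (j+1) * Nat.centralBinom (m+1-(j+1))
          = 2 * (2*(j:ℝ)+1) * Nat.centralBinom j * Nat.centralBinom (m-j) := by
        intro j hj
        have h1 : m+1-(j+1) = m - j := by omega
        rw [h1, Nat.cast_add, Nat.cast_one, step j hj]
      rw [Finset.sum_congr rfl hsimp]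
      have expand : ∑ j ∈ Finset.range (m+1),
          2 * (2*(j:ℝ)+1) * Nat.centralBinom j * Nat.centralBinom (m-j)
          = 4 * (∑ j ∈ Finset.range (m+1), (j:ℝ) * Nat.centralBinom j * Nat.centralBinom (m-j))
            + 2 * ∑ j ∈ Finset.range (m+1),
                (Nat.centralBinom j : ℝ) * Nat.centralBinom (m-j) := by
        rw [Finset.mul_sum, Finset.mul_sum, ← Finset.sum_add_distrib]
        apply Finset.sum_congr rfl
        intro j _; ring
      have hsym := conv_sym m
      simp only [Nat.cast_zero, zero_mul, add_zero]
      rw [expand]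
      linarith [hsym]
    have key2 : ((m:ℝ)+1) * ∑ j ∈ Finset.range (m+2),
        (Nat.centralBinom j : ℝ) * Nat.centralBinom (m+1-j)
        = 2 * ∑ j ∈ Finset.range (m+2), (j:ℝ) * Nat.centralBinom j * Nat.centralBinom (m+1-j) := by
      have := conv_sym (m+1)
      push_cast at this
      linarith [this]
    rw [key] at key2
    have hm1 : (m:ℝ)+1 ≠ 0 := by positivity
    have hfin : ∑ j ∈ Finset.range (m+2), (Nat.centralBinom j : ℝ) * Nat.centralBinom (m+1-j)
        = 4 * ∑ j ∈ Finset.range (m+1), (Nat.centralBinom j : ℝ) * Nat.centralBinom (m-j) := by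
      apply mul_left_cancel₀ hm1
      rw [key2]; ring
    rw [show m+1+1 = m+2 from rfl, hfin, ih]
    ring

private lemma sum_even_terms (f : ℕ → ℝ) (h : ∀ j, f (2*j+1) = 0) (m : ℕ) :
    ∑ k ∈ Finset.range (2*m+1), f k = ∑ j ∈ Finset.range (m+1), f (2*j) := by
  induction m with
  | zero => simp
  | succ m ih =>
    have h1 : 2*(m+1)+1 = (2*m+1) + 1 + 1 := by ring
    rw [h1, Finset.sum_range_succ, Finset.sum_range_succ, ih, h m,
      Finset.sum_range_succ (fun j => f (2*j)) (m+1)]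
    have h2 : 2*m+1+1 = 2*(m+1) := by ring
    rw [h2]
    ring

theorem stmt15 (n : ℕ) :
    (∫ x in (0:ℝ)..π, ∫ y in (0:ℝ)..π,
      ∑ k ∈ Finset.range n, Real.cos x ^ k * Real.cos y ^ (n - 1 - k))
    = if Odd n then π^2 else 0 := by
  have hinner : ∀ x : ℝ, (∫ y in (0:ℝ)..π,
      ∑ k ∈ Finset.range n, Real.cos x ^ k * Real.cos y ^ (n - 1 - k))
      = ∑ k ∈ Finset.range n, Real.cos x ^ k * ∫ y in (0:ℝ)..π, Real.cos y ^ (n-1-k) := by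
    intro x
    rw [intervalIntegral.integral_finset_sum]
    · exact Finset.sum_congr rfl fun k _ => intervalIntegral.integral_const_mul _ _
    · intro k _
      exact (Continuous.intervalIntegrable (by fun_prop) 0 π)
  simp_rw [hinner]
  rw [intervalIntegral.integral_finset_sum (fun k _ =>
    Continuous.intervalIntegrable (by fun_prop) 0 π)]
  have hfac : ∀ k ∈ Finset.range n,
      (∫ x in (0:ℝ)..π, Real.cos x ^ k * ∫ y in (0:ℝ)..π, Real.cos y ^ (n-1-k))
      = (∫ x in (0:ℝ)..π, Real.cos x ^ k) * ∫ y in (0:ℝ)..π, Real.cos y ^ (n-1-k) :=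
    fun k _ => intervalIntegral.integral_mul_const _ _
  rw [Finset.sum_congr rfl hfac]
  rcases Nat.even_or_odd n with he | ho
  · rw [if_neg (by simpa using Nat.not_odd_iff_even.mpr he)]
    apply Finset.sum_eq_zero
    intro k hk
    have hkn : k < n := Finset.mem_range.mp hk
    rcases Nat.even_or_odd k with hke | hko
    · obtain ⟨j, hj⟩ : ∃ j, n - 1 - k = 2*j+1 := by
        rcases he with ⟨a, ha⟩; rcases hke with ⟨b, hb⟩
        exact ⟨a - b - 1, by omega⟩
      rw [hj, cosInt_odd j, mul_zero]
    · obtain ⟨j, hj⟩ : ∃ j, k = 2*j+1 := by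
        rcases hko with ⟨b, hb⟩; exact ⟨b, by omega⟩
      rw [hj, cosInt_odd j, zero_mul]
  · rw [if_pos ho]
    obtain ⟨m, hm⟩ := ho
    have hn : n = 2*m+1 := by omega
    subst hn
    have hrange : ∀ k, (2*m+1) - 1 - k = 2*m - k := by intro k; omega
    simp_rw [hrange]
    set f : ℕ → ℝ := fun k => (∫ x in (0:ℝ)..π, Real.cos x ^ k) *
      ∫ y in (0:ℝ)..π, Real.cos y ^ (2*m - k) with hf
    have hzero : ∀ j, f (2*j+1) = 0 := by
      intro j
      simp only [hf, cosInt_odd j, zero_mul]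
    rw [sum_even_terms f hzero m]
    have hterm : ∀ j ∈ Finset.range (m+1),
        f (2*j) = (π^2 / 4^m) * ((Nat.centralBinom j : ℝ) * Nat.centralBinom (m-j)) := by
      intro j hj
      have hjm : j ≤ m := Nat.lt_succ_iff.mp (Finset.mem_range.mp hj)
      have hsub : 2*m - 2*j = 2*(m-j) := by omega
      simp only [hf, hsub, cosInt_even]
      have h4 : (4:ℝ)^j * 4^(m-j) = 4^m := by
        rw [← pow_add]; congr 1; omega
      rw [div_mul_div_comm, h4]
      ring
    rw [Finset.sum_congr rfl hterm, ← Finset.mul_sum, conv_identity m]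
    field_simp
end
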